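/- arXiv:2602.23267 — 6 statements merged into one kernel-verified Lean document; each statement's English description precedes it below -/
import Mathlib

section
/- Let k ≥ 2 and s ≥ 0 be integers. Then there exists S ∈ ℕ (one may take S = k·s²) such that for every finite set F ⊂ ℤ with |F| ≥ S there exist m ≥ 1 and a residue t with 0 ≤ t < k^m such that |F ∩ (t + k^m ℤ)| ≥ s and |F \ (t + k^m ℤ)| ≥ s. -/
/-- For integers `k ≥ 2` and `s ≥ 0` there exists `S ∈ ℕ` such that every
finite set `F ⊂ ℤ` with `|F| ≥ S` admits `m ≥ 1` and a residue `0 ≤ t < k^m` with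
`|F ∩ (t + k^m ℤ)| ≥ s` and `|F \ (t + k^m ℤ)| ≥ s`. -/
theorem stmt0 (k s : ℕ) (hk : 2 ≤ k) :
    ∃ S : ℕ, ∀ F : Finset ℤ, S ≤ F.card →
      ∃ m : ℕ, 1 ≤ m ∧ ∃ t : ℤ, 0 ≤ t ∧ t < (k : ℤ) ^ m ∧
        s ≤ (F.filter (fun x => ((k : ℤ) ^ m ∣ x - t))).card ∧
        s ≤ (F.filter (fun x => ¬ ((k : ℤ) ^ m ∣ x - t))).card := by
  rcases Nat.eq_zero_or_pos s with hs | hs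
  · subst hs
    exact ⟨0, fun F _ => ⟨1, le_refl 1, 0, le_refl 0, by positivity, Nat.zero_le _, Nat.zero_le _⟩⟩
  have hk1 : (1:ℤ) < (k:ℤ) := by exact_mod_cast hk.trans_lt' one_lt_two
  refine ⟨(k+1)*s, fun F hF => ?_⟩
  have hcard : (k+1)*s ≤ F.card := hF
  have hks : s + 1 ≤ (k+1)*s := by nlinarith
  have hFne : F.Nonempty := Finset.card_pos.mp (by omega)
  set g : ℕ → ℤ → ℕ := fun m x => (F.filter (fun y => (k:ℤ)^m ∣ y - x)).card with hg
  set f : ℕ → ℕ := fun m => F.sup (g m) with hf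
  -- class invariance
  have hinv : ∀ m (x y : ℤ), (k:ℤ)^m ∣ y - x → g m x = g m y := by
    intro m x y hxy
    simp only [hg]
    congr 1
    apply Finset.filter_congr
    intro z _
    constructor
    · intro h
      have := dvd_sub h hxy
      simpa [sub_sub_sub_cancel_right] using this
    · intro h
      have := dvd_add h hxy
      simpa [sub_add_sub_cancel] using this
  -- any class is bounded by f m
  have hbound : ∀ m (t : ℤ), g m t ≤ f m := by
    intro m t
    by_cases h : (F.filter (fun y => (k:ℤ)^m ∣ y - t)).Nonempty
    · obtain ⟨y, hy⟩ := h
      rw [Finset.mem_filter] at hy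
      rw [show g m t = g m y from hinv m t y hy.2]
      exact Finset.le_sup hy.1
    · simp only [Finset.not_nonempty_iff_eq_empty] at h
      simp [hg, h]
  -- refinement bound : f (m) ≤ k * f (m+1)
  have hrefine : ∀ m, f m ≤ k * f (m+1) := by
    intro m
    obtain ⟨x, hxF, hx⟩ := Finset.exists_mem_eq_sup F hFne (g m)
    show F.sup (g m) ≤ k * F.sup (g (m+1))
    rw [hx]
    have hsub : F.filter (fun y => (k:ℤ)^m ∣ y - x) ⊆
        (Finset.range k).biUnion (fun j => F.filter (fun y => (k:ℤ)^(m+1) ∣ y - (x + j * (k:ℤ)^m))) := by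
      intro y hy
      rw [Finset.mem_filter] at hy
      obtain ⟨q, hq⟩ := hy.2
      refine Finset.mem_biUnion.mpr ⟨(q % k).toNat, ?_, ?_⟩
      · rw [Finset.mem_range]
        have h1 : 0 ≤ q % (k:ℤ) := Int.emod_nonneg q (by positivity)
        have h2 : q % (k:ℤ) < k := Int.emod_lt_of_pos q (by positivity)
        omega
      · rw [Finset.mem_filter]
        refine ⟨hy.1, ?_⟩
        have h1 : 0 ≤ q % (k:ℤ) := Int.emod_nonneg q (by positivity)
        have hqt : ((q % (k:ℤ)).toNat : ℤ) = q % k := Int.toNat_of_nonneg h1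
        have : y - (x + ((q % (k:ℤ)).toNat : ℤ) * (k:ℤ)^m) = (q - q % k) * (k:ℤ)^m := by
          rw [hqt]; rw [sub_add_eq_sub_sub, hq]; ring
        rw [this]
        have : (q - q % (k:ℤ)) = k * (q / k) := by
          have := Int.mul_ediv_add_emod q (k:ℤ)
          linarith
        rw [this]
        exact ⟨q / k, by ring⟩
    calc g m x ≤ ((Finset.range k).biUnion
          (fun j => F.filter (fun y => (k:ℤ)^(m+1) ∣ y - (x + j * (k:ℤ)^m)))).card :=
            Finset.card_le_card hsub
      _ ≤ ∑ j ∈ Finset.range k, (F.filter (fun y => (k:ℤ)^(m+1) ∣ y - (x + j * (k:ℤ)^m))).card :=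
            Finset.card_biUnion_le
      _ ≤ ∑ j ∈ Finset.range k, f (m+1) := by
            apply Finset.sum_le_sum
            intro j _
            exact hbound (m+1) _
      _ = k * f (m+1) := by simp [mul_comm]
  -- eventually classes are singletons
  have hsmall : ∃ m0, f m0 ≤ 1 := by
    set N : ℕ := F.sup (fun x => x.natAbs) with hN
    obtain ⟨m0, hm0⟩ := pow_unbounded_of_one_lt ((2*N+1:ℕ) : ℤ) hk1
    refine ⟨m0, ?_⟩
    rw [hf]
    apply Finset.sup_le
    intro x hxF
    rw [hg]
    apply Finset.card_le_one.mpr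
    intro y hy z hz
    rw [Finset.mem_filter] at hy hz
    have hd : (k:ℤ)^m0 ∣ y - z := by
      have := dvd_sub hy.2 hz.2
      simpa [sub_sub_sub_cancel_right] using this
    have hyN : y.natAbs ≤ N := Finset.le_sup hy.1
    have hzN : z.natAbs ≤ N := Finset.le_sup hz.1
    have habs : |y - z| < (k:ℤ)^m0 := by
      calc |y - z| ≤ |y| + |z| := abs_sub _ _
        _ ≤ (N:ℤ) + N := by
            rw [Int.abs_eq_natAbs, Int.abs_eq_natAbs]
            exact_mod_cast add_le_add hyN hzN
        _ < (2*N+1:ℕ) := by push_cast; linarith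
        _ < (k:ℤ)^m0 := hm0
    have := Int.eq_zero_of_abs_lt_dvd hd habs
    omega
  -- choose minimal m with f m ≤ F.card - s
  have hex : ∃ m, f m ≤ F.card - s := by
    obtain ⟨m0, hm0⟩ := hsmall
    exact ⟨m0, by omega⟩
  classical
  set m := Nat.find hex with hm
  have hfm : f m ≤ F.card - s := Nat.find_spec hex
  have hf0 : f 0 = F.card := by
    obtain ⟨x0, hx0⟩ := hFne
    have hgx : ∀ x, g 0 x = F.card := by
      intro x
      simp [hg, Finset.filter_true_of_mem, fun y (_ : y ∈ F) => one_dvd (y - x)]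
    apply le_antisymm
    · exact Finset.sup_le (fun x _ => le_of_eq (hgx x))
    · calc F.card = g 0 x0 := (hgx x0).symm
        _ ≤ f 0 := Finset.le_sup hx0
  have hm1 : 1 ≤ m := by
    rcases Nat.eq_zero_or_pos m with h0 | h
    · exfalso
      have : f 0 ≤ F.card - s := h0 ▸ hfm
      omega
    · exact h
  have hprev : F.card - s + 1 ≤ f (m-1) := by
    have h := Nat.find_min hex (show m - 1 < m by omega)
    omega
  have hkfm : F.card - s + 1 ≤ k * f m := by
    have h := hrefine (m-1)
    rw [show m-1+1 = m by omega] at h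
    omega
  have hfms : s < f m := by
    have h1 : k * s < k * f m := by
      have h3 : k * s + s ≤ F.card := by nlinarith [hcard]
      have h2 : k * s + 1 ≤ F.card - s + 1 := by omega
      omega
    exact Nat.lt_of_mul_lt_mul_left h1
  obtain ⟨x, hxF, hx⟩ := Finset.exists_mem_eq_sup F hFne (g m)
  have hkm : (0:ℤ) < (k:ℤ)^m := by positivity
  refine ⟨m, hm1, x % (k:ℤ)^m, Int.emod_nonneg x (by positivity), Int.emod_lt_of_pos x hkm, ?_, ?_⟩
  all_goals
    have hdvd : (k:ℤ)^m ∣ x - x % (k:ℤ)^m :=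
      ⟨x / (k:ℤ)^m, by have := Int.mul_ediv_add_emod x ((k:ℤ)^m); linarith⟩
    have heq : g m (x % (k:ℤ)^m) = g m x := hinv m _ x hdvd
    have hval : (F.filter (fun y => (k:ℤ)^m ∣ y - x % (k:ℤ)^m)).card = f m := by
      show g m (x % (k:ℤ)^m) = F.sup (g m)
      rw [hx]; exact heq
    have hsplit := Finset.card_filter_add_card_filter_not
      (s := F) (p := fun y => (k:ℤ)^m ∣ y - x % (k:ℤ)^m)
    omega
end

section
/- Let φ : A → A^k be a substitution of constant length k ≥ 2 over a finite alphabet A, and let φ_s be its discrepancy substitution. Then for all distinct letters a, b ∈ A and all n ∈ ℕ, the length of (φ_s)^n({a,b}) equals the number of indices 0 ≤ i < k^n at which the words φ^n(a) and φ^n(b) differ. -/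
variable {A : Type*}

/-- A substitution `φ : A → A^*` extended to finite words by concatenation. -/
def subExt (φ : A → List A) (w : List A) : List A := w.flatMap φ

/-- Composition of substitutions: `(φ ∘ τ)(a) = φ(τ(a))`. -/
def subComp (φ τ : A → List A) : A → List A := fun a => subExt φ (τ a)

/-- The `n`-th power `φ^n` of a substitution. -/
def subPow (φ : A → List A) : ℕ → A → List A
  | 0 => fun a => [a]
  | n + 1 => subComp φ (subPow φ n)

/-- The discrepancy substitution `φ_s` of `φ`, defined on unordered pairs of letters:
`φ_s({a,b})` is the word, over the alphabet of unordered pairs, obtained by concatenating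
the pairs `{φ(a)_i, φ(b)_i}` over those positions `i` where `φ(a)_i ≠ φ(b)_i`. -/
def discrep [DecidableEq A] (φ : A → List A) : Sym2 A → List (Sym2 A) :=
  Sym2.lift ⟨fun a b => ((φ a).zip (φ b)).filterMap
      (fun p => if p.1 ≠ p.2 then some (Sym2.mk p.1 p.2) else none),
    by
      intro a b
      show List.filterMap _ ((φ a).zip (φ b)) = List.filterMap _ ((φ b).zip (φ a))
      rw [← List.zip_swap (φ a) (φ b), List.filterMap_map]
      congr 1
      funext p
      obtain ⟨x, y⟩ := p
      by_cases h : x = y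
      · simp [h]
      · simp only [Function.comp_apply, Prod.swap_prod_mk]
        rw [if_pos (by simp [h]), if_pos (by simp [Ne.symm h])]
        all_goals exact congrArg some (Sym2.eq_swap ▸ rfl)⟩

def diffPairs [DecidableEq A] (u v : List A) : List (Sym2 A) :=
  (u.zip v).filterMap (fun p => if p.1 ≠ p.2 then some (Sym2.mk p.1 p.2) else none)

lemma discrep_mk [DecidableEq A] (φ : A → List A) (x y : A) :
    discrep φ (Sym2.mk x y) = diffPairs (φ x) (φ y) := rfl

lemma diffPairs_nil [DecidableEq A] (v : List A) : diffPairs [] v = [] := rfl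

lemma diffPairs_cons [DecidableEq A] (x y : A) (u v : List A) :
    diffPairs (x :: u) (y :: v) =
      (if x ≠ y then [Sym2.mk x y] else []) ++ diffPairs u v := by
  simp only [diffPairs, List.zip_cons_cons, List.filterMap_cons]
  by_cases h : x = y <;> simp [h]

lemma diffPairs_self [DecidableEq A] (u : List A) : diffPairs u u = [] := by
  induction u with
  | nil => rfl
  | cons x u ih => rw [diffPairs_cons, ih]; simp

lemma diffPairs_append [DecidableEq A] (u₁ v₁ u₂ v₂ : List A)
    (h : u₁.length = v₁.length) :
    diffPairs (u₁ ++ u₂) (v₁ ++ v₂) = diffPairs u₁ v₁ ++ diffPairs u₂ v₂ := by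
  simp only [diffPairs]
  rw [List.zip_append h, List.filterMap_append]

lemma subExt_diffPairs [DecidableEq A] (k : ℕ) (φ : A → List A)
    (hφ : ∀ a, (φ a).length = k) :
    ∀ u v : List A, u.length = v.length →
      subExt (discrep φ) (diffPairs u v) = diffPairs (subExt φ u) (subExt φ v) := by
  intro u
  induction u with
  | nil => intro v hv
           rw [List.length_nil] at hv
           rw [List.eq_nil_of_length_eq_zero hv.symm]; rfl
  | cons x u ih =>
    intro v hv
    cases v with
    | nil => simp at hv
    | cons y v =>
      simp only [List.length_cons, Nat.add_right_cancel_iff] at hv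
      have hbase : subExt φ (x :: u) = φ x ++ subExt φ u := rfl
      have hbase' : subExt φ (y :: v) = φ y ++ subExt φ v := rfl
      rw [diffPairs_cons, hbase, hbase',
        diffPairs_append _ _ _ _ (by rw [hφ, hφ])]
      by_cases h : x = y
      · subst h
        simp only [ne_eq, not_true_eq_false, if_false, List.nil_append,
          diffPairs_self, ih v hv]
      · simp only [ne_eq, h, not_false_eq_true, if_true]
        have : subExt (discrep φ) (Sym2.mk x y :: diffPairs u v) =
            discrep φ (Sym2.mk x y) ++ subExt (discrep φ) (diffPairs u v) := rfl
        rw [List.singleton_append, this, discrep_mk, ih v hv]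

lemma subExt_length (k : ℕ) (φ : A → List A) (hφ : ∀ a, (φ a).length = k)
    (w : List A) : (subExt φ w).length = k * w.length := by
  induction w with
  | nil => simp [subExt]
  | cons x w ih =>
    have : subExt φ (x :: w) = φ x ++ subExt φ w := rfl
    rw [this, List.length_append, hφ, ih, List.length_cons]
    ring

lemma subPow_length (k : ℕ) (φ : A → List A) (hφ : ∀ a, (φ a).length = k)
    (n : ℕ) (a : A) : (subPow φ n a).length = k ^ n := by
  induction n with
  | zero => rfl
  | succ n ih =>
    show (subExt φ (subPow φ n a)).length = k ^ (n + 1)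
    rw [subExt_length k φ hφ, ih, pow_succ, mul_comm]

lemma subPow_discrep [DecidableEq A] (k : ℕ) (φ : A → List A)
    (hφ : ∀ a, (φ a).length = k) (a b : A) (hab : a ≠ b) (n : ℕ) :
    subPow (discrep φ) n (Sym2.mk a b) = diffPairs (subPow φ n a) (subPow φ n b) := by
  induction n with
  | zero =>
    show [Sym2.mk a b] = diffPairs [a] [b]
    rw [diffPairs_cons, diffPairs_nil]
    simp [hab]
  | succ n ih =>
    show subExt (discrep φ) (subPow (discrep φ) n (Sym2.mk a b)) = _
    rw [ih, subExt_diffPairs k φ hφ _ _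
      (by rw [subPow_length k φ hφ, subPow_length k φ hφ])]
    rfl

lemma diffPairs_length [DecidableEq A] (a : A) :
    ∀ u v : List A, u.length = v.length →
      (diffPairs u v).length =
        ((Finset.range u.length).filter
          (fun i => u.getD i a ≠ v.getD i a)).card := by
  intro u
  induction u with
  | nil => intro v hv; simp [diffPairs_nil]
  | cons x u ih =>
    intro v hv
    cases v with
    | nil => simp at hv
    | cons y v =>
      simp only [List.length_cons, Nat.add_right_cancel_iff] at hv
      rw [diffPairs_cons, List.length_append, ih v hv, List.length_cons]
      rw [Finset.card_filter, Finset.card_filter, Finset.sum_range_succ']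
      simp only [List.getD_cons_zero, List.getD_cons_succ]
      by_cases h : x = y <;> simp [h, add_comm]

/-- For a substitution `φ` of constant length `k ≥ 2`, distinct letters
`a, b` and `n ∈ ℕ`, the length of `(φ_s)^n({a,b})` equals the number of indices
`0 ≤ i < k^n` at which the words `φ^n(a)` and `φ^n(b)` differ. -/
theorem stmt2 [DecidableEq A] (k : ℕ) (hk : 2 ≤ k) (φ : A → List A)
    (hφ : ∀ a, (φ a).length = k) (a b : A) (hab : a ≠ b) (n : ℕ) :
    (subPow (discrep φ) n (Sym2.mk a b)).length =
      ((Finset.range (k ^ n)).filter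
        (fun i => (subPow φ n a).getD i a ≠ (subPow φ n b).getD i a)).card := by
  rw [subPow_discrep k φ hφ a b hab n,
    diffPairs_length a _ _ (by rw [subPow_length k φ hφ, subPow_length k φ hφ]),
    subPow_length k φ hφ]
end

section
/- For every nonnegative real square matrix M with dominant eigenvalue λ, there exists d ∈ ℕ and constants c, C > 0 such that c · λ^n · n^d ≤ ‖M^n‖₁ ≤ C · λ^n · n^d for all sufficiently large n, where ‖·‖₁ denotes the maximum column sum. In particular ‖M^n‖₁ = Θ(λ^n n^d). -/
open Filter Topology Polynomial

/-- The maximum column sum norm `‖M‖₁` of a square matrix. -/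
noncomputable def maxColSum {m : Type*} [Fintype m] [Nonempty m]
    (M : Matrix m m ℝ) : ℝ :=
  Finset.univ.sup' Finset.univ_nonempty (fun j => ∑ i, |M i j|)

namespace Stmt9Aux

set_option linter.unusedSectionVars false
set_option maxHeartbeats 1000000

variable {m : Type*} [Fintype m] [DecidableEq m] [Nonempty m]


noncomputable def aSeq (M : Matrix m m ℝ) (n : ℕ) : ℝ := ∑ i, ∑ j, (M ^ n) i j

lemma pow_entry_nonneg {M : Matrix m m ℝ} (hM : ∀ i j, 0 ≤ M i j) (n : ℕ) :
    ∀ i j, 0 ≤ (M ^ n) i j := by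
  induction n with
  | zero => intro i j; by_cases h : i = j <;>
      simp [Matrix.one_apply, h, le_refl, zero_le_one]
  | succ n ih =>
    intro i j
    rw [pow_succ, Matrix.mul_apply]
    exact Finset.sum_nonneg fun k _ => mul_nonneg (ih i k) (hM k j)

lemma colSum_le_aSeq {M : Matrix m m ℝ} (hM : ∀ i j, 0 ≤ M i j) (n : ℕ) (j : m) :
    ∑ i, (M ^ n) i j ≤ aSeq M n := by
  rw [show aSeq M n = ∑ j, ∑ i, (M ^ n) i j from Finset.sum_comm]
  refine Finset.single_le_sum (f := fun j => ∑ i, (M ^ n) i j) ?_ (Finset.mem_univ j)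
  intro k _
  exact Finset.sum_nonneg fun i _ => pow_entry_nonneg hM n i k

lemma aSeq_nonneg {M : Matrix m m ℝ} (hM : ∀ i j, 0 ≤ M i j) (n : ℕ) : 0 ≤ aSeq M n :=
  Finset.sum_nonneg fun i _ => Finset.sum_nonneg fun j _ => pow_entry_nonneg hM n i j

lemma aSeq_submul {M : Matrix m m ℝ} (hM : ∀ i j, 0 ≤ M i j) (p q : ℕ) :
    aSeq M (p + q) ≤ aSeq M p * aSeq M q := by
  have h0 : ∀ k, 0 ≤ ∑ j, (M ^ q) k j := fun k =>
    Finset.sum_nonneg fun j _ => pow_entry_nonneg hM q k j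
  calc aSeq M (p + q) = ∑ i, ∑ j, ∑ k, (M ^ p) i k * (M ^ q) k j := by
        rw [aSeq]; simp only [pow_add, Matrix.mul_apply]
    _ = ∑ i, ∑ k, (M ^ p) i k * (∑ j, (M ^ q) k j) := by
        refine Finset.sum_congr rfl fun i _ => ?_
        rw [Finset.sum_comm]
        exact Finset.sum_congr rfl fun k _ => (Finset.mul_sum _ _ _).symm
    _ = ∑ k, (∑ i, (M ^ p) i k) * (∑ j, (M ^ q) k j) := by
        rw [Finset.sum_comm]
        exact Finset.sum_congr rfl fun k _ => (Finset.sum_mul _ _ _).symm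
    _ ≤ ∑ k, aSeq M p * (∑ j, (M ^ q) k j) := Finset.sum_le_sum fun k _ =>
        mul_le_mul_of_nonneg_right (colSum_le_aSeq hM p k) (h0 k)
    _ = aSeq M p * aSeq M q := by rw [← Finset.mul_sum]; rfl

lemma maxColSum_le_aSeq {M : Matrix m m ℝ} (hM : ∀ i j, 0 ≤ M i j) (n : ℕ) :
    maxColSum (M ^ n) ≤ aSeq M n := by
  refine Finset.sup'_le _ _ fun j _ => ?_
  calc ∑ i, |(M ^ n) i j| = ∑ i, (M ^ n) i j := by
        refine Finset.sum_congr rfl fun i _ => abs_of_nonneg (pow_entry_nonneg hM n i j)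
    _ ≤ aSeq M n := colSum_le_aSeq hM n j

lemma aSeq_le_card_mul_maxColSum {M : Matrix m m ℝ} (hM : ∀ i j, 0 ≤ M i j) (n : ℕ) :
    aSeq M n ≤ (Fintype.card m) * maxColSum (M ^ n) := by
  have : aSeq M n = ∑ j, ∑ i, (M ^ n) i j := Finset.sum_comm
  rw [this]
  calc ∑ j, ∑ i, (M ^ n) i j ≤ ∑ j : m, maxColSum (M ^ n) := by
        refine Finset.sum_le_sum fun j _ => ?_
        have := Finset.le_sup' (fun j => ∑ i, |(M ^ n) i j|) (Finset.mem_univ j)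
        calc ∑ i, (M ^ n) i j = ∑ i, |(M ^ n) i j| := by
              refine Finset.sum_congr rfl fun i _ =>
                (abs_of_nonneg (pow_entry_nonneg hM n i j)).symm
          _ ≤ maxColSum (M ^ n) := this
    _ = (Fintype.card m) * maxColSum (M ^ n) := by
        rw [Finset.sum_const, Finset.card_univ, nsmul_eq_mul]

lemma maxColSum_nonneg {M : Matrix m m ℝ} (hM : ∀ i j, 0 ≤ M i j) (n : ℕ) :
    0 ≤ maxColSum (M ^ n) := by
  obtain ⟨j⟩ := (inferInstance : Nonempty m)
  refine le_trans ?_ (Finset.le_sup' (fun j => ∑ i, |(M ^ n) i j|) (Finset.mem_univ j))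
  exact Finset.sum_nonneg fun i _ => abs_nonneg _


lemma mulVec_sum {ι : Type*} (s : Finset ι) (B : Matrix m m ℂ) (f : ι → (m → ℂ)) :
    B.mulVec (∑ k ∈ s, f k) = ∑ k ∈ s, B.mulVec (f k) := by
  ext i
  simp only [Matrix.mulVec, dotProduct, Finset.sum_apply, Finset.mul_sum]
  exact Finset.sum_comm

lemma sum_mulVec {ι : Type*} (s : Finset ι) (B : ι → Matrix m m ℂ) (v : m → ℂ) :
    (∑ k ∈ s, B k).mulVec v = ∑ k ∈ s, (B k).mulVec v := by
  ext i
  simp only [Matrix.mulVec, dotProduct, Finset.sum_apply, Matrix.sum_apply,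
    Finset.sum_mul]
  exact Finset.sum_comm

lemma map_ofReal_pow (M : Matrix m m ℝ) (n : ℕ) :
    (M.map Complex.ofReal) ^ n = (M ^ n).map Complex.ofReal := by
  induction n with
  | zero => simp [Matrix.map_one Complex.ofReal Complex.ofReal_zero Complex.ofReal_one]
  | succ n ih =>
    rw [pow_succ, pow_succ, ih]
    exact (Matrix.map_mul (f := Complex.ofRealHom)).symm

lemma expansion (M : Matrix m m ℝ) (l : ℝ)
    (hmax : ∀ μ ∈ spectrum ℂ (M.map Complex.ofReal), ‖μ‖ ≤ l) :
    ∃ S : Finset ℂ, ∃ Q : ℂ → Polynomial ℂ,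
      (∀ μ ∈ S, μ ≠ 0 ∧ ‖μ‖ ≤ l) ∧
      ∀ n : ℕ, Fintype.card m ≤ n →
        ((aSeq M n : ℝ) : ℂ) = ∑ μ ∈ S, (Q μ).eval (n : ℂ) * μ ^ n := by
  classical
  set K := Fintype.card m with hK
  have hK1 : 1 ≤ K := Fintype.card_pos
  set A := M.map Complex.ofReal with hA
  set fA : Module.End ℂ (m → ℂ) := Matrix.toLinAlgEquiv' A with hfA
  have htop : (⨆ μ : ℂ, fA.maxGenEigenspace μ) = ⊤ :=
    Module.End.iSup_maxGenEigenspace_eq_top fA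
  have hu : (fun _ => (1:ℂ) : m → ℂ) ∈ ⨆ μ : ℂ, fA.maxGenEigenspace μ := by
    rw [htop]; trivial
  obtain ⟨s, hs⟩ := Submodule.exists_finset_of_mem_iSup _ hu
  rw [Submodule.mem_iSup_finset_iff_exists_sum] at hs
  obtain ⟨v, hv⟩ := hs
  set w : ℂ → (m → ℂ) := fun μ => (v μ : m → ℂ) with hw
  -- kernel property
  have hwmem : ∀ μ, w μ ∈ LinearMap.ker ((fA - μ • 1) ^ K) := by
    intro μ
    have h1 : w μ ∈ fA.maxGenEigenspace μ := (v μ).2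
    rw [Module.End.maxGenEigenspace_eq_genEigenspace_finrank,
      Module.finrank_fintype_fun_eq_card ℂ] at h1
    exact Module.End.mem_genEigenspace_nat.mp h1
  have hker : ∀ μ, ((A - μ • 1) ^ K).mulVec (w μ) = 0 := by
    intro μ
    have h2 : Matrix.toLinAlgEquiv' ((A - μ • 1) ^ K) = (fA - μ • 1) ^ K := by
      rw [map_pow, map_sub]
      congr 2
      rw [← Algebra.algebraMap_eq_smul_one, AlgEquiv.commutes,
        Algebra.algebraMap_eq_smul_one]
    rw [← Matrix.toLinAlgEquiv'_apply, h2]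
    exact LinearMap.mem_ker.mp (hwmem μ)
  -- beta coefficients
  set β : ℂ → ℕ → ℂ := fun μ k => ∑ i, (((A - μ • 1) ^ k).mulVec (w μ)) i with hβ
  -- binomial expansion
  have hbin : ∀ (μ : ℂ) (n : ℕ), K ≤ n →
      ∑ i, ((A ^ n).mulVec (w μ)) i
        = ∑ k ∈ Finset.range K, (n.choose k : ℂ) * μ ^ (n - k) * β μ k := by
    intro μ n hn
    have hcomm : Commute (A - μ • 1) ((μ : ℂ) • (1 : Matrix m m ℂ)) := by
      rw [← Algebra.algebraMap_eq_smul_one]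
      exact (Algebra.commutes μ _).symm
    have hpow : A ^ n = ∑ k ∈ Finset.range (n+1),
        ((n.choose k : ℂ) * μ ^ (n - k)) • (A - μ • 1) ^ k := by
      conv_lhs => rw [(sub_add_cancel A ((μ : ℂ) • 1)).symm]
      rw [hcomm.add_pow]
      refine Finset.sum_congr rfl fun k hk => ?_
      have h1 : ((μ:ℂ) • (1 : Matrix m m ℂ)) ^ (n - k) = (μ ^ (n-k)) • 1 := by
        rw [_root_.smul_pow, one_pow]
      have h2 : ((n.choose k : ℕ) : Matrix m m ℂ) = ((n.choose k : ℂ)) • 1 := by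
        rw [← map_natCast (algebraMap ℂ (Matrix m m ℂ)), Algebra.algebraMap_eq_smul_one]
      rw [h1, h2, mul_smul_comm, mul_one, mul_smul_comm, mul_one, smul_smul]
    have hmv : (A ^ n).mulVec (w μ) = ∑ k ∈ Finset.range (n+1),
        ((n.choose k : ℂ) * μ ^ (n - k)) • (((A - μ • 1) ^ k).mulVec (w μ)) := by
      rw [hpow, sum_mulVec]
      exact Finset.sum_congr rfl fun k _ => Matrix.smul_mulVec _ _ _
    have htail : ∀ k ∈ Finset.Ico K (n+1),
        ((n.choose k : ℂ) * μ ^ (n - k)) • (((A - μ • 1) ^ k).mulVec (w μ)) = 0 := by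
      intro k hk
      obtain ⟨hk1, _⟩ := Finset.mem_Ico.mp hk
      have h3 : (A - μ • 1) ^ k = (A - μ • 1) ^ (k - K) * (A - μ • 1) ^ K := by
        rw [← pow_add]; congr 1; omega
      rw [h3, ← Matrix.mulVec_mulVec, hker, Matrix.mulVec_zero, smul_zero]
    have hsum : (A ^ n).mulVec (w μ) = ∑ k ∈ Finset.range K,
        ((n.choose k : ℂ) * μ ^ (n - k)) • (((A - μ • 1) ^ k).mulVec (w μ)) := by
      rw [hmv, ← Finset.sum_range_add_sum_Ico _ (by omega : K ≤ n + 1),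
        Finset.sum_eq_zero htail, add_zero]
    calc ∑ i, ((A ^ n).mulVec (w μ)) i
        = ∑ i, ∑ k ∈ Finset.range K,
            (((n.choose k : ℂ) * μ ^ (n - k)) • (((A - μ • 1) ^ k).mulVec (w μ))) i := by
          rw [hsum]
          exact Finset.sum_congr rfl fun i _ => Finset.sum_apply i _ _
      _ = ∑ k ∈ Finset.range K, ∑ i,
            (n.choose k : ℂ) * μ ^ (n - k) * (((A - μ • 1) ^ k).mulVec (w μ)) i := by
          rw [Finset.sum_comm]
          exact Finset.sum_congr rfl fun k _ => Finset.sum_congr rfl fun i _ => by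
            simp [smul_eq_mul, mul_assoc]
      _ = ∑ k ∈ Finset.range K, (n.choose k : ℂ) * μ ^ (n - k) * β μ k := by
          refine Finset.sum_congr rfl fun k _ => ?_
          rw [hβ, ← Finset.mul_sum]
  -- total sum identity
  have h_u : ∀ n : ℕ, ((aSeq M n : ℝ) : ℂ) = ∑ i, ((A ^ n).mulVec (fun _ => 1)) i := by
    intro n
    rw [hA, map_ofReal_pow]
    simp only [Matrix.mulVec, dotProduct, Matrix.map_apply, mul_one, aSeq]
    push_cast
    rfl
  have hdecomp : ∀ n : ℕ, ((A ^ n).mulVec (fun _ => (1:ℂ)))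
      = ∑ μ ∈ s, (A ^ n).mulVec (w μ) := by
    intro n
    rw [← hv]
    exact mulVec_sum s (A ^ n) w
  -- the polynomials
  set Q : ℂ → Polynomial ℂ := fun μ => ∑ k ∈ Finset.range K,
    Polynomial.C (β μ k * (μ⁻¹) ^ k * ((k.factorial : ℂ))⁻¹) * descPochhammer ℂ k with hQdef
  have hQ : ∀ μ : ℂ, μ ≠ 0 → ∀ n : ℕ, K ≤ n →
      (Q μ).eval (n : ℂ) * μ ^ n
        = ∑ k ∈ Finset.range K, (n.choose k : ℂ) * μ ^ (n - k) * β μ k := by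
    intro μ hμ n hn
    rw [hQdef]
    rw [Polynomial.eval_finset_sum, Finset.sum_mul]
    refine Finset.sum_congr rfl fun k hk => ?_
    have hk' : k ≤ n := le_trans (Nat.le_of_lt_succ (Nat.lt_succ_of_lt
      (Finset.mem_range.mp hk))) hn
    rw [Polynomial.eval_mul, Polynomial.eval_C,
      descPochhammer_eval_eq_descFactorial ℂ n k,
      Nat.descFactorial_eq_factorial_mul_choose]
    rw [pow_sub₀ μ hμ hk']
    have hfac : ((k.factorial : ℂ)) ≠ 0 := by
      exact_mod_cast Nat.cast_ne_zero.mpr (Nat.factorial_ne_zero k)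
    push_cast
    field_simp
    linear_combination (β μ k * (n.choose k : ℂ)) * mul_inv_cancel₀ (pow_ne_zero k hμ)
  -- spectrum membership
  have hspec : ∀ μ ∈ s, w μ ≠ 0 → ‖μ‖ ≤ l := by
    intro μ hμs hwne
    have hdet : ((A - μ • 1) ^ K).det = 0 :=
      Matrix.exists_mulVec_eq_zero_iff.mp ⟨w μ, hwne, hker μ⟩
    rw [Matrix.det_pow] at hdet
    have hdet1 : (A - μ • 1).det = 0 := by
      exact pow_eq_zero_iff (by omega) |>.mp hdet
    have hmem : μ ∈ spectrum ℂ A := by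
      rw [spectrum.mem_iff]
      intro hunit
      rw [Matrix.isUnit_iff_isUnit_det] at hunit
      have : (algebraMap ℂ (Matrix m m ℂ) μ - A).det = 0 := by
        rw [Algebra.algebraMap_eq_smul_one, ← neg_sub A ((μ:ℂ) • 1),
          Matrix.det_neg, hdet1, mul_zero]
      rw [this] at hunit
      exact (by simpa using hunit : False)
    exact hmax μ hmem
  -- assemble
  refine ⟨s.filter (fun μ => μ ≠ 0 ∧ w μ ≠ 0), Q, ?_, ?_⟩
  · intro μ hμ
    have h1 := Finset.mem_filter.mp hμ
    exact ⟨h1.2.1, hspec μ h1.1 h1.2.2⟩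
  · intro n hn
    have hKn : K ≤ n := hn
    calc ((aSeq M n : ℝ) : ℂ) = ∑ μ ∈ s, ∑ i, ((A ^ n).mulVec (w μ)) i := by
          rw [h_u n, hdecomp n]
          simp only [Finset.sum_apply]
          exact Finset.sum_comm
      _ = ∑ μ ∈ s, ∑ k ∈ Finset.range K, (n.choose k : ℂ) * μ ^ (n - k) * β μ k :=
          Finset.sum_congr rfl fun μ _ => hbin μ n hKn
      _ = ∑ μ ∈ s.filter (fun μ => μ ≠ 0 ∧ w μ ≠ 0),
            ∑ k ∈ Finset.range K, (n.choose k : ℂ) * μ ^ (n - k) * β μ k := by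
          symm
          refine Finset.sum_filter_of_ne ?_
          intro μ hμs hne
          constructor
          · rintro rfl
            refine hne ?_
            refine Finset.sum_eq_zero fun k hk => ?_
            have : n - k ≠ 0 := by
              have := Finset.mem_range.mp hk; omega
            rw [zero_pow this, mul_zero, zero_mul]
          · intro hw0
            refine hne (Finset.sum_eq_zero fun k _ => ?_)
            have hβ0 : β μ k = 0 := by
              simp only [hβ, hw0, Matrix.mulVec_zero]
              simp
            rw [hβ0, mul_zero]
      _ = ∑ μ ∈ s.filter (fun μ => μ ≠ 0 ∧ w μ ≠ 0), (Q μ).eval (n : ℂ) * μ ^ n := by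
          refine Finset.sum_congr rfl fun μ hμ => ?_
          have hμ0 : μ ≠ 0 := ((Finset.mem_filter.mp hμ).2).1
          exact (hQ μ hμ0 n hKn).symm

lemma l_pow_le_aSeq {M : Matrix m m ℝ} (hM : ∀ i j, 0 ≤ M i j) {l : ℝ} (hl : 0 ≤ l)
    (hmem : (l : ℂ) ∈ spectrum ℂ (M.map Complex.ofReal)) (n : ℕ) :
    l ^ n ≤ aSeq M n := by
  classical
  set A := M.map Complex.ofReal with hA
  -- get an eigenvector
  have h1 : ¬ IsUnit (algebraMap ℂ (Matrix m m ℂ) (l : ℂ) - A) := spectrum.mem_iff.mp hmem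
  have hdet : (algebraMap ℂ (Matrix m m ℂ) (l : ℂ) - A).det = 0 := by
    by_contra h
    exact h1 ((Matrix.isUnit_iff_isUnit_det _).mpr (Ne.isUnit h))
  obtain ⟨x, hx0, hx⟩ := Matrix.exists_mulVec_eq_zero_iff.mpr hdet
  have hxe : A.mulVec x = (l : ℂ) • x := by
    have h2 : (algebraMap ℂ (Matrix m m ℂ) (l : ℂ)).mulVec x - A.mulVec x = 0 := by
      rw [← Matrix.sub_mulVec, hx]
    have h3 : (algebraMap ℂ (Matrix m m ℂ) (l : ℂ)).mulVec x = (l : ℂ) • x := by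
      rw [Algebra.algebraMap_eq_smul_one, Matrix.smul_mulVec, Matrix.one_mulVec]
    rw [h3] at h2
    exact (sub_eq_zero.mp h2).symm
  have hxn : ∀ n : ℕ, (A ^ n).mulVec x = ((l : ℂ) ^ n) • x := by
    intro n
    induction n with
    | zero => simp [Matrix.one_mulVec]
    | succ n ih =>
      rw [pow_succ, ← Matrix.mulVec_mulVec, hxe, Matrix.mulVec_smul, ih,
        smul_smul, pow_succ, mul_comm]
  -- take norms
  set T := ∑ j, ‖x j‖ with hT
  have hT0 : 0 < T := by
    have : ∃ j, x j ≠ 0 := by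
      by_contra h
      push_neg at h
      exact hx0 (funext h)
    obtain ⟨j, hj⟩ := this
    have h4 : 0 < ‖x j‖ := norm_pos_iff.mpr hj
    refine lt_of_lt_of_le h4 ?_
    exact Finset.single_le_sum (fun i _ => norm_nonneg _) (Finset.mem_univ j)
  have key : l ^ n * T ≤ aSeq M n * T := by
    have lhs : l ^ n * T = ∑ i, ‖((A ^ n).mulVec x) i‖ := by
      rw [hxn n]
      rw [Finset.mul_sum]
      refine Finset.sum_congr rfl fun i _ => ?_
      rw [Pi.smul_apply, norm_smul, norm_pow, Complex.norm_real,
        Real.norm_of_nonneg hl]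
    rw [lhs]
    have step : ∀ i, ‖((A ^ n).mulVec x) i‖ ≤ ∑ j, (M ^ n) i j * ‖x j‖ := by
      intro i
      rw [hA, map_ofReal_pow]
      calc ‖∑ j, ((M ^ n).map Complex.ofReal) i j * x j‖
          ≤ ∑ j, ‖((M ^ n).map Complex.ofReal) i j * x j‖ := norm_sum_le _ _
        _ = ∑ j, (M ^ n) i j * ‖x j‖ := by
            refine Finset.sum_congr rfl fun j _ => ?_
            rw [norm_mul, Matrix.map_apply, Complex.norm_real,
              Real.norm_of_nonneg (pow_entry_nonneg hM n i j)]
    calc ∑ i, ‖((A ^ n).mulVec x) i‖ ≤ ∑ i, ∑ j, (M ^ n) i j * ‖x j‖ :=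
          Finset.sum_le_sum fun i _ => step i
      _ = ∑ j, (∑ i, (M ^ n) i j) * ‖x j‖ := by
          rw [Finset.sum_comm]
          exact Finset.sum_congr rfl fun j _ => (Finset.sum_mul _ _ _).symm
      _ ≤ ∑ j, aSeq M n * ‖x j‖ := Finset.sum_le_sum fun j _ =>
          mul_le_mul_of_nonneg_right (colSum_le_aSeq hM n j) (norm_nonneg _)
      _ = aSeq M n * T := by rw [← Finset.mul_sum]
  exact le_of_mul_le_mul_right key hT0


/-- polynomial divided by `n^d` tends to top coefficient -/
lemma poly_div_pow_tendsto (P : Polynomial ℂ) (d : ℕ) (hdeg : P.natDegree ≤ d) :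
    Tendsto (fun n : ℕ => P.eval (n : ℂ) * (((n : ℂ)) ^ d)⁻¹ - P.coeff d)
      atTop (𝓝 0) := by
  have heval : ∀ n : ℕ, P.eval (n : ℂ)
      = ∑ j ∈ Finset.range (d + 1), P.coeff j * (n : ℂ) ^ j :=
    fun n => eval_eq_sum_range' (lt_of_le_of_lt hdeg (Nat.lt_succ_self d)) _
  have hmain : ∀ n : ℕ, 1 ≤ n →
      P.eval (n : ℂ) * (((n : ℂ)) ^ d)⁻¹ - P.coeff d
        = ∑ j ∈ Finset.range d, P.coeff j * ((n : ℂ) ^ j * (((n : ℂ)) ^ d)⁻¹) := by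
    intro n hn
    have hne : ((n : ℂ)) ^ d ≠ 0 := by
      apply pow_ne_zero
      exact_mod_cast Nat.cast_ne_zero.mpr (by omega)
    rw [heval n, Finset.sum_range_succ, add_mul, mul_assoc, mul_inv_cancel₀ hne, mul_one,
      add_sub_cancel_right, Finset.sum_mul]
    exact Finset.sum_congr rfl fun j _ => by ring
  have hterm : ∀ j, j < d → Tendsto
      (fun n : ℕ => P.coeff j * ((n : ℂ) ^ j * (((n : ℂ)) ^ d)⁻¹)) atTop (𝓝 0) := by
    intro j hj
    have hb : ∀ᶠ n : ℕ in atTop, ‖P.coeff j * ((n : ℂ) ^ j * (((n : ℂ)) ^ d)⁻¹)‖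
        ≤ ‖P.coeff j‖ * (n : ℝ)⁻¹ := by
      filter_upwards [eventually_ge_atTop 1] with n hn
      rw [norm_mul, norm_mul, norm_pow, norm_inv, norm_pow]
      have hnn : (1 : ℝ) ≤ (n : ℝ) := by exact_mod_cast hn
      have h2 : ‖(n : ℂ)‖ = (n : ℝ) := by
        rw [Complex.norm_natCast]
      rw [h2]
      refine mul_le_mul_of_nonneg_left ?_ (norm_nonneg _)
      rw [← div_eq_mul_inv, div_le_iff₀ (by positivity)]
      have hne : (n : ℝ) ≠ 0 := by positivity
      calc (n:ℝ)^j ≤ (n:ℝ)^(d-1) := pow_le_pow_right₀ hnn (by omega)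
        _ = (n:ℝ)⁻¹ * (n:ℝ)^d := by
            have h5 : (n:ℝ)^d = (n:ℝ)^(d-1) * n := by
              rw [← pow_succ]; congr 1; omega
            rw [h5, mul_comm ((n:ℝ)^(d-1)) _, ← mul_assoc, inv_mul_cancel₀ hne, one_mul]
    refine squeeze_zero_norm' hb ?_
    have : Tendsto (fun n : ℕ => (n : ℝ)⁻¹) atTop (𝓝 0) :=
      tendsto_inv_atTop_nhds_zero_nat
    simpa using this.const_mul (‖P.coeff j‖)
  have hsum : Tendsto (fun n : ℕ =>
      ∑ j ∈ Finset.range d, P.coeff j * ((n : ℂ) ^ j * (((n : ℂ)) ^ d)⁻¹)) atTop (𝓝 0) := by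
    have := tendsto_finset_sum (Finset.range d)
      (fun j hj => hterm j (Finset.mem_range.mp hj))
    simpa using this
  refine hsum.congr' ?_
  filter_upwards [eventually_ge_atTop 1] with n hn
  exact (hmain n hn).symm


lemma cesaro_twist (F : Finset ℂ) (hF : ∀ ω ∈ F, ‖ω‖ = 1) (tc : ℂ → ℂ)
    (s : ℕ → ℝ) (f : ℕ → ℂ)
    (hsf : ∀ n, (s n : ℂ) = (∑ ω ∈ F, tc ω * ω ^ n) + f n)
    (hf0 : Tendsto f atTop (𝓝 0))
    (ν : ℂ) (hν : ‖ν‖ = 1) :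
    Tendsto (fun n : ℕ => (n : ℝ)⁻¹ • ∑ k ∈ Finset.range n,
      ((s k : ℂ) * (starRingEnd ℂ ν) ^ k)) atTop
      (𝓝 (if ν ∈ F then tc ν else 0)) := by
  classical
  have hνν : ν * (starRingEnd ℂ ν) = 1 := by
    rw [Complex.mul_conj]
    have h1 : Complex.normSq ν = 1 := by
      have h2 := Complex.sq_norm ν
      have h3 : ‖ν‖ = 1 := hν
      rw [h3] at h2
      simpa using h2.symm
    rw [h1, Complex.ofReal_one]
  -- decomposition of the average
  have hid : ∀ n : ℕ, (n : ℝ)⁻¹ • ∑ k ∈ Finset.range n, ((s k : ℂ) * (starRingEnd ℂ ν) ^ k)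
      = (∑ ω ∈ F, tc ω * ((n : ℝ)⁻¹ • ∑ k ∈ Finset.range n, (ω * starRingEnd ℂ ν) ^ k))
        + (n : ℝ)⁻¹ • ∑ k ∈ Finset.range n, (f k * (starRingEnd ℂ ν) ^ k) := by
    intro n
    have h4 : ∀ k, (s k : ℂ) * (starRingEnd ℂ ν) ^ k
        = (∑ ω ∈ F, tc ω * (ω * starRingEnd ℂ ν) ^ k) + f k * (starRingEnd ℂ ν) ^ k := by
      intro k
      rw [hsf k, add_mul, Finset.sum_mul]
      congr 1
      exact Finset.sum_congr rfl fun ω _ => by rw [mul_pow]; ring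
    rw [Finset.sum_congr rfl fun k _ => h4 k, Finset.sum_add_distrib, smul_add]
    congr 1
    rw [Finset.sum_comm]
    rw [Finset.smul_sum]
    refine Finset.sum_congr rfl fun ω _ => ?_
    rw [← Finset.mul_sum, mul_smul_comm]
  have hgoal : (if ν ∈ F then tc ν else 0)
      = (∑ ω ∈ F, (if ω = ν then tc ω else 0)) + 0 := by
    rw [add_zero, Finset.sum_ite_eq' F ν tc]
  rw [funext hid, hgoal]
  refine Tendsto.add ?_ ?_
  · refine tendsto_finset_sum F fun ω hω => ?_
    by_cases hcase : ω = ν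
    · subst hcase
      rw [if_pos rfl, hνν]
      have h5 : ∀ᶠ n : ℕ in atTop,
          tc ω * ((n : ℝ)⁻¹ • ∑ k ∈ Finset.range n, (1 : ℂ) ^ k) = tc ω := by
        filter_upwards [eventually_ge_atTop 1] with n hn
        simp only [one_pow, Finset.sum_const, Finset.card_range, nsmul_eq_mul, mul_one]
        have h6 : ((n:ℝ))⁻¹ • ((n : ℕ) : ℂ) = 1 := by
          rw [Complex.real_smul, ← Complex.ofReal_natCast, ← Complex.ofReal_mul,
            inv_mul_cancel₀ (by exact_mod_cast (by omega : n ≠ 0) : (n:ℝ) ≠ 0),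
            Complex.ofReal_one]
        rw [h6, mul_one]
      exact tendsto_const_nhds.congr' (h5.mono fun n h => h.symm)
    · rw [if_neg hcase]
      set ρ : ℂ := ω * starRingEnd ℂ ν with hρ
      have hρ1 : ρ ≠ 1 := by
        intro h
        apply hcase
        have : ω * (starRingEnd ℂ ν * ν) = ν := by
          rw [← mul_assoc, ← hρ, h, one_mul]
        rw [mul_comm (starRingEnd ℂ ν) ν, hνν, mul_one] at this
        exact this
      have hρn : ‖ρ‖ = 1 := by
        rw [hρ, norm_mul, hF ω hω, RCLike.norm_conj, hν, one_mul]
      have hb : ∀ᶠ n : ℕ in atTop,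
          ‖tc ω * ((n : ℝ)⁻¹ • ∑ k ∈ Finset.range n, ρ ^ k)‖
            ≤ ‖tc ω‖ * (2 / ‖ρ - 1‖) * (n : ℝ)⁻¹ := by
        filter_upwards [eventually_ge_atTop 1] with n hn
        rw [norm_mul]
        have hρ0 : (0:ℝ) < ‖ρ - 1‖ := norm_pos_iff.mpr (sub_ne_zero.mpr hρ1)
        have h6 : ‖∑ k ∈ Finset.range n, ρ ^ k‖ ≤ 2 / ‖ρ - 1‖ := by
          rw [geom_sum_eq hρ1, norm_div]
          rw [div_le_div_iff_of_pos_right hρ0]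
          calc ‖ρ ^ n - 1‖ ≤ ‖ρ ^ n‖ + ‖(1:ℂ)‖ := norm_sub_le _ _
            _ = 2 := by rw [norm_pow, hρn, one_pow, norm_one]; norm_num
        calc ‖tc ω‖ * ‖(n : ℝ)⁻¹ • ∑ k ∈ Finset.range n, ρ ^ k‖
            ≤ ‖tc ω‖ * ((n:ℝ)⁻¹ * (2 / ‖ρ - 1‖)) := by
              refine mul_le_mul_of_nonneg_left ?_ (norm_nonneg _)
              rw [norm_smul, norm_inv, Real.norm_natCast]
              exact mul_le_mul_of_nonneg_left h6 (by positivity)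
          _ = ‖tc ω‖ * (2 / ‖ρ - 1‖) * (n : ℝ)⁻¹ := by ring
      refine squeeze_zero_norm' hb ?_
      have : Tendsto (fun n : ℕ => (n : ℝ)⁻¹) atTop (𝓝 0) :=
        tendsto_inv_atTop_nhds_zero_nat
      simpa using this.const_mul (‖tc ω‖ * (2 / ‖ρ - 1‖))
  · have h7 : Tendsto (fun k : ℕ => f k * (starRingEnd ℂ ν) ^ k) atTop (𝓝 0) := by
      refine squeeze_zero_norm (fun k => ?_) (tendsto_zero_iff_norm_tendsto_zero.mp hf0)
      rw [norm_mul, norm_pow, RCLike.norm_conj, hν, one_pow, mul_one]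
    exact h7.cesaro_smul



lemma poly_geom_tendsto (P : Polynomial ℂ) {ρ : ℂ} (hρ : ‖ρ‖ < 1) :
    Tendsto (fun n : ℕ => P.eval (n : ℂ) * ρ ^ n) atTop (𝓝 0) := by
  have h1 : ∀ n : ℕ, P.eval (n : ℂ) * ρ ^ n
      = ∑ j ∈ Finset.range (P.natDegree + 1), P.coeff j * ((n : ℂ) ^ j * ρ ^ n) := by
    intro n
    rw [eval_eq_sum_range, Finset.sum_mul]
    exact Finset.sum_congr rfl fun j _ => by ring
  rw [funext h1]
  have h2 : ∀ j ∈ Finset.range (P.natDegree + 1), Tendsto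
      (fun n : ℕ => P.coeff j * ((n : ℂ) ^ j * ρ ^ n)) atTop (𝓝 0) := by
    intro j _
    have h3 : Tendsto (fun n : ℕ => (n : ℝ) ^ j * ‖ρ‖ ^ n) atTop (𝓝 0) :=
      tendsto_pow_const_mul_const_pow_of_abs_lt_one j
        (by rwa [abs_of_nonneg (norm_nonneg ρ)])
    have hb : ∀ n : ℕ, ‖P.coeff j * ((n : ℂ) ^ j * ρ ^ n)‖
        ≤ ‖P.coeff j‖ * ((n:ℝ) ^ j * ‖ρ‖ ^ n) := by
      intro n
      rw [norm_mul, norm_mul, norm_pow, norm_pow, Complex.norm_natCast]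
    refine squeeze_zero_norm hb ?_
    simpa using h3.const_mul (‖P.coeff j‖)
  have := tendsto_finset_sum (Finset.range (P.natDegree + 1)) h2
  simpa using this

lemma analysis_main (t : ℕ → ℝ) (ht1 : ∀ n, 1 ≤ t n)
    (hsub : ∀ p q : ℕ, t (p + q) ≤ t p * t q)
    (F : Finset ℂ) (hF : ∀ ω ∈ F, ‖ω‖ = 1) (q : ℂ → Polynomial ℂ)
    (hexp : Tendsto (fun n : ℕ => (t n : ℂ) - ∑ ω ∈ F, (q ω).eval (n : ℂ) * ω ^ n)
      atTop (𝓝 0)) :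
    ∃ d : ℕ, ∃ c C : ℝ, 0 < c ∧ 0 < C ∧ ∃ N : ℕ, ∀ n, N ≤ n →
      c * (n : ℝ) ^ d ≤ t n ∧ t n ≤ C * (n : ℝ) ^ d := by
  classical
  set d : ℕ := F.sup fun ω => (q ω).natDegree with hd
  set tc : ℂ → ℂ := fun ω => (q ω).coeff d with htc
  set s : ℕ → ℝ := fun n => t n / (n : ℝ) ^ d with hs
  set f : ℕ → ℂ := fun n => ((s n : ℝ) : ℂ) - ∑ ω ∈ F, tc ω * ω ^ n with hfdef
  have hspos : ∀ n, 0 ≤ s n := fun n =>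
    div_nonneg (le_trans zero_le_one (ht1 n)) (by positivity)
  have hscast : ∀ n : ℕ, ((s n : ℝ) : ℂ) = (t n : ℂ) * (((n : ℂ)) ^ d)⁻¹ := by
    intro n
    rw [hs]
    push_cast
    rw [div_eq_mul_inv]
  have hfn : ∀ n, f n = ((s n : ℝ):ℂ) - ∑ ω ∈ F, tc ω * ω ^ n := fun n => rfl
  have hsn : ∀ n, s n = t n / (n:ℝ)^d := fun n => rfl
  have hsf : ∀ n, ((s n : ℝ) : ℂ) = (∑ ω ∈ F, tc ω * ω ^ n) + f n := by
    intro n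
    rw [hfn n]
    ring
  -- f tends to 0
  have hinvbd : ∀ n : ℕ, ‖(((n : ℂ)) ^ d)⁻¹‖ ≤ 1 := by
    intro n
    rcases Nat.eq_zero_or_pos n with h | h
    · subst h
      rcases Nat.eq_zero_or_pos d with h2 | h2
      · simp [h2]
      · simp [zero_pow (by omega : d ≠ 0)]
    · rw [norm_inv, norm_pow, Complex.norm_natCast]
      have h3 : (1:ℝ) ≤ (n:ℝ) ^ d := one_le_pow₀ (by exact_mod_cast h)
      exact inv_le_one_of_one_le₀ h3
  have hfsplit : ∀ n : ℕ, f n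
      = ((t n : ℂ) - ∑ ω ∈ F, (q ω).eval (n:ℂ) * ω ^ n) * (((n:ℂ)) ^ d)⁻¹
        + ∑ ω ∈ F, ((q ω).eval (n:ℂ) * (((n:ℂ)) ^ d)⁻¹ - tc ω) * ω ^ n := by
    intro n
    have h1 : ∑ ω ∈ F, ((q ω).eval (n:ℂ) * (((n:ℂ)) ^ d)⁻¹ - tc ω) * ω ^ n
        = (∑ ω ∈ F, ((q ω).eval (n:ℂ) * ω ^ n)) * (((n:ℂ)) ^ d)⁻¹
          - ∑ ω ∈ F, tc ω * ω ^ n := by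
      rw [Finset.sum_mul, ← Finset.sum_sub_distrib]
      exact Finset.sum_congr rfl fun ω _ => by ring
    rw [hfn n, hscast, h1]
    ring
  have hf0 : Tendsto f atTop (𝓝 0) := by
    rw [funext hfsplit]
    have hA : Tendsto (fun n : ℕ =>
        ((t n : ℂ) - ∑ ω ∈ F, (q ω).eval (n:ℂ) * ω ^ n) * (((n:ℂ)) ^ d)⁻¹)
        atTop (𝓝 0) := by
      refine squeeze_zero_norm (fun n => ?_) (tendsto_zero_iff_norm_tendsto_zero.mp hexp)
      rw [norm_mul]
      calc ‖(t n : ℂ) - ∑ ω ∈ F, (q ω).eval (n:ℂ) * ω ^ n‖ * ‖(((n:ℂ)) ^ d)⁻¹‖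
          ≤ ‖(t n : ℂ) - ∑ ω ∈ F, (q ω).eval (n:ℂ) * ω ^ n‖ * 1 :=
            mul_le_mul_of_nonneg_left (hinvbd n) (norm_nonneg _)
        _ = _ := mul_one _
    have hB : Tendsto (fun n : ℕ =>
        ∑ ω ∈ F, ((q ω).eval (n:ℂ) * (((n:ℂ)) ^ d)⁻¹ - tc ω) * ω ^ n) atTop (𝓝 0) := by
      have h3 : ∀ ω ∈ F, Tendsto
          (fun n : ℕ => ((q ω).eval (n:ℂ) * (((n:ℂ)) ^ d)⁻¹ - tc ω) * ω ^ n) atTop (𝓝 0) := by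
        intro ω hω
        refine squeeze_zero_norm (fun n => ?_)
          (tendsto_zero_iff_norm_tendsto_zero.mp
            (poly_div_pow_tendsto (q ω) d
              (by rw [hd]; exact Finset.le_sup (f := fun ω => (q ω).natDegree) hω)))
        rw [norm_mul, norm_pow, hF ω hω, one_pow, mul_one]
      simpa using tendsto_finset_sum F h3
    simpa using hA.add hB
  -- real averages
  set R : ℕ → ℝ := fun n => (n:ℝ)⁻¹ * ∑ k ∈ Finset.range n, s k with hR
  set γ : ℂ := if (1:ℂ) ∈ F then tc 1 else 0 with hγ
  have hAv1 := cesaro_twist F hF tc s f hsf hf0 1 norm_one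
  have hAv1' : Tendsto (fun n => ((R n : ℝ) : ℂ)) atTop (𝓝 γ) := by
    refine hAv1.congr fun n => ?_
    rw [hR]
    push_cast
    rw [Complex.real_smul]
    push_cast
    congr 1
    refine Finset.sum_congr rfl fun k _ => ?_
    rw [map_one, one_pow, mul_one]
  have h2R : Tendsto R atTop (𝓝 γ.re) := by
    have := (Complex.continuous_re.tendsto γ).comp hAv1'
    simpa [Function.comp_def] using this
  have hγre : γ = ((γ.re : ℝ) : ℂ) :=
    tendsto_nhds_unique hAv1' ((Complex.continuous_ofReal.tendsto _).comp h2R)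
  set g0 : ℝ := γ.re with hg0def
  have hRnonneg : ∀ n, 0 ≤ R n := fun n =>
    mul_nonneg (by positivity) (Finset.sum_nonneg fun k _ => hspos k)
  have hbnd : ∀ ν ∈ F, ‖tc ν‖ ≤ g0 := by
    intro ν hν
    have hAvν := cesaro_twist F hF tc s f hsf hf0 ν (hF ν hν)
    rw [if_pos hν] at hAvν
    refine le_of_tendsto_of_tendsto' hAvν.norm h2R fun n => ?_
    rw [norm_smul, norm_inv, Real.norm_natCast, hR]
    refine mul_le_mul_of_nonneg_left ?_ (by positivity)
    calc ‖∑ k ∈ Finset.range n, ((s k : ℂ) * (starRingEnd ℂ ν) ^ k)‖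
        ≤ ∑ k ∈ Finset.range n, ‖(s k : ℂ) * (starRingEnd ℂ ν) ^ k‖ := norm_sum_le _ _
      _ = ∑ k ∈ Finset.range n, s k := by
          refine Finset.sum_congr rfl fun k _ => ?_
          rw [norm_mul, norm_pow, RCLike.norm_conj, hF ν hν, one_pow, mul_one,
            Complex.norm_real, Real.norm_of_nonneg (hspos k)]
  -- existence of a nonzero top coefficient
  have hex : ∃ ν ∈ F, tc ν ≠ 0 := by
    by_contra hall
    push_neg at hall
    rcases Nat.eq_zero_or_pos d with hd0 | hdpos
    · have hft : ∀ n : ℕ, f n = ((t n : ℝ) : ℂ) := by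
        intro n
        have hz : ∑ ω ∈ F, tc ω * ω ^ n = 0 :=
          Finset.sum_eq_zero fun ω hω => by rw [hall ω hω, zero_mul]
        rw [hfn n, hz, sub_zero, hsn n, hd0, pow_zero, div_one]
      have hev : ∀ᶠ n : ℕ in atTop, ‖f n‖ < 1 :=
        NormedAddCommGroup.tendsto_nhds_zero.mp hf0 1 one_pos
      obtain ⟨n, hn⟩ := hev.exists
      rw [hft n, Complex.norm_real, Real.norm_of_nonneg
        (le_trans zero_le_one (ht1 n))] at hn
      linarith [ht1 n]
    · have hFne : F.Nonempty := by
        by_contra hFe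
        rw [Finset.not_nonempty_iff_eq_empty] at hFe
        rw [hd, hFe, Finset.sup_empty] at hdpos
        exact lt_irrefl _ hdpos
      obtain ⟨ω₁, hω₁, hsup⟩ := Finset.exists_mem_eq_sup F hFne fun ω => (q ω).natDegree
      have hq1 : q ω₁ ≠ 0 := by
        intro h0
        rw [hd, hsup, h0, Polynomial.natDegree_zero] at hdpos
        exact lt_irrefl _ hdpos
      have htcne : tc ω₁ ≠ 0 := by
        rw [htc]
        have hdeq : d = (q ω₁).natDegree := by rw [hd, hsup]
        rw [hdeq]
        exact Polynomial.leadingCoeff_ne_zero.mpr hq1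
      exact htcne (hall ω₁ hω₁)
  obtain ⟨ν₀, hν₀F, hν₀⟩ := hex
  have hg0pos : 0 < g0 := lt_of_lt_of_le (norm_pos_iff.mpr hν₀) (hbnd ν₀ hν₀F)
  have h1F : (1:ℂ) ∈ F := by
    by_contra h1
    rw [hγ, if_neg h1] at hg0def
    rw [hg0def] at hg0pos
    simp at hg0pos
  have htc1 : tc 1 = ((g0 : ℝ) : ℂ) := by
    have h3 : γ = tc 1 := by rw [hγ, if_pos h1F]
    rw [← h3, hγre]
  -- window bound
  set B0 : ℝ := ∑ ω ∈ F.erase 1, ‖tc ω‖ * (2 / ‖ω - 1‖) with hB0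
  have hB0nonneg : 0 ≤ B0 :=
    Finset.sum_nonneg fun ω _ => by positivity
  have hwin : ∀ n W : ℕ,
      ‖(∑ k ∈ Finset.Ico n (n + W), ∑ ω ∈ F, tc ω * ω ^ k) - (W:ℂ) * tc 1‖ ≤ B0 := by
    intro n W
    have h1 : ∑ k ∈ Finset.Ico n (n + W), ∑ ω ∈ F, tc ω * ω ^ k
        = ∑ ω ∈ F, tc ω * ∑ k ∈ Finset.Ico n (n + W), ω ^ k := by
      rw [Finset.sum_comm]
      exact Finset.sum_congr rfl fun ω _ => (Finset.mul_sum _ _ _).symm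
    have h2 : ∑ ω ∈ F, tc ω * ∑ k ∈ Finset.Ico n (n + W), ω ^ k
        = tc 1 * (W:ℂ) + ∑ ω ∈ F.erase 1, tc ω * ∑ k ∈ Finset.Ico n (n + W), ω ^ k := by
      rw [← Finset.add_sum_erase F _ h1F]
      congr 1
      simp [Nat.card_Ico]
    rw [h1, h2]
    have h3 : tc 1 * (W:ℂ) + (∑ ω ∈ F.erase 1, tc ω * ∑ k ∈ Finset.Ico n (n + W), ω ^ k)
        - (W:ℂ) * tc 1 = ∑ ω ∈ F.erase 1, tc ω * ∑ k ∈ Finset.Ico n (n + W), ω ^ k := by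
      ring
    rw [h3]
    calc ‖∑ ω ∈ F.erase 1, tc ω * ∑ k ∈ Finset.Ico n (n + W), ω ^ k‖
        ≤ ∑ ω ∈ F.erase 1, ‖tc ω * ∑ k ∈ Finset.Ico n (n + W), ω ^ k‖ := norm_sum_le _ _
      _ ≤ B0 := by
          rw [hB0]
          refine Finset.sum_le_sum fun ω hω => ?_
          have hω1 : ω ≠ 1 := Finset.ne_of_mem_erase hω
          have hωF : ω ∈ F := Finset.mem_of_mem_erase hω
          have hωn : ‖ω‖ = 1 := hF ω hωF
          have hgeo : ‖∑ k ∈ Finset.Ico n (n + W), ω ^ k‖ ≤ 2 / ‖ω - 1‖ := by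
            have h4 : ∑ k ∈ Finset.Ico n (n + W), ω ^ k
                = ω ^ n * ∑ j ∈ Finset.range W, ω ^ j := by
              rw [Finset.sum_Ico_eq_sum_range]
              simp only [Nat.add_sub_cancel_left]
              rw [Finset.mul_sum]
              exact Finset.sum_congr rfl fun j _ => by rw [pow_add]
            rw [h4, norm_mul, norm_pow, hωn, one_pow, one_mul]
            rw [geom_sum_eq hω1, norm_div]
            have hω0 : (0:ℝ) < ‖ω - 1‖ := norm_pos_iff.mpr (sub_ne_zero.mpr hω1)
            rw [div_le_div_iff_of_pos_right hω0]
            calc ‖ω ^ W - 1‖ ≤ ‖ω ^ W‖ + ‖(1:ℂ)‖ := norm_sub_le _ _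
              _ = 2 := by rw [norm_pow, hωn, one_pow, norm_one]; norm_num
          rw [norm_mul]
          exact mul_le_mul_of_nonneg_left hgeo (norm_nonneg _)
  -- choose window length W and thresholds
  obtain ⟨W₀, hW₀⟩ := exists_nat_ge ((B0 + 1) * 8 / g0)
  set W : ℕ := max W₀ 1 with hW
  have hW1 : 1 ≤ W := le_max_right _ _
  have hWg : B0 + 1 ≤ (W:ℝ) * g0 / 8 := by
    have h5 : ((B0 + 1) * 8 / g0) ≤ (W:ℝ) := le_trans hW₀ (by exact_mod_cast le_max_left _ _)
    rw [div_le_iff₀ hg0pos] at h5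
    linarith
  obtain ⟨N₁, hN₁⟩ : ∃ N₁ : ℕ, ∀ k, N₁ ≤ k → ‖f k‖ ≤ g0 / 8 := by
    have hev := NormedAddCommGroup.tendsto_nhds_zero.mp hf0 (g0/8) (by positivity)
    rw [eventually_atTop] at hev
    obtain ⟨N₁, hN₁⟩ := hev
    exact ⟨N₁, fun k hk => le_of_lt (hN₁ k hk)⟩
  obtain ⟨N₂, hN₂⟩ : ∃ N₂ : ℕ, ∀ k, N₂ ≤ k → ‖f k‖ ≤ 1 := by
    have hev := NormedAddCommGroup.tendsto_nhds_zero.mp hf0 1 one_pos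
    rw [eventually_atTop] at hev
    obtain ⟨N₂, hN₂⟩ := hev
    exact ⟨N₂, fun k hk => le_of_lt (hN₂ k hk)⟩
  -- good points in every window
  have hgood : ∀ n, N₁ ≤ n → ∃ g ∈ Finset.Ico n (n + W), g0/2 ≤ s g := by
    intro n hn
    by_contra hcon
    push_neg at hcon
    have hcard : (Finset.Ico n (n + W)).card = W := by rw [Nat.card_Ico]; omega
    have hup : ∑ k ∈ Finset.Ico n (n + W), s k ≤ (W:ℝ) * (g0/2) := by
      calc ∑ k ∈ Finset.Ico n (n + W), s k
          ≤ (Finset.Ico n (n + W)).card • (g0/2) :=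
            Finset.sum_le_card_nsmul _ _ _ fun k hk => le_of_lt (hcon k hk)
        _ = (W:ℝ) * (g0/2) := by rw [hcard, nsmul_eq_mul]
    have hlow : (W:ℝ) * g0 - B0 - (W:ℝ) * (g0/8) ≤ ∑ k ∈ Finset.Ico n (n + W), s k := by
      set E : ℂ := (∑ k ∈ Finset.Ico n (n + W), ∑ ω ∈ F, tc ω * ω ^ k) - (W:ℂ) * tc 1
        with hE
      have hsum_c : (∑ k ∈ Finset.Ico n (n + W), ((s k : ℝ):ℂ))
          = (W:ℂ) * tc 1 + E + ∑ k ∈ Finset.Ico n (n + W), f k := by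
        have hsc : ∑ k ∈ Finset.Ico n (n + W), ((s k : ℝ):ℂ)
            = (∑ k ∈ Finset.Ico n (n + W), ∑ ω ∈ F, tc ω * ω ^ k)
              + ∑ k ∈ Finset.Ico n (n + W), f k := by
          rw [← Finset.sum_add_distrib]
          exact Finset.sum_congr rfl fun k _ => hsf k
        rw [hsc, hE]
        ring
      have hre : (∑ k ∈ Finset.Ico n (n + W), ((s k : ℝ):ℂ)).re
          = ∑ k ∈ Finset.Ico n (n + W), s k := by
        rw [Complex.re_sum]
        exact Finset.sum_congr rfl fun k _ => Complex.ofReal_re _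
      have hWre : (((W:ℂ)) * tc 1).re = (W:ℝ) * g0 := by
        rw [htc1]
        rw [show ((W:ℂ)) * ((g0:ℝ):ℂ) = (((W:ℝ) * g0 : ℝ) : ℂ) by push_cast; ring]
        exact Complex.ofReal_re _
      have hEre : -B0 ≤ E.re := by
        have h8 : |E.re| ≤ ‖E‖ := Complex.abs_re_le_norm E
        have h9 : ‖E‖ ≤ B0 := hwin n W
        cases abs_le.mp h8 with
        | intro h10 h11 => linarith
      have hfre : -((W:ℝ) * (g0/8)) ≤ (∑ k ∈ Finset.Ico n (n + W), f k).re := by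
        have h12 : ‖∑ k ∈ Finset.Ico n (n + W), f k‖ ≤ (W:ℝ) * (g0/8) := by
          calc ‖∑ k ∈ Finset.Ico n (n + W), f k‖
              ≤ ∑ k ∈ Finset.Ico n (n + W), ‖f k‖ := norm_sum_le _ _
            _ ≤ (Finset.Ico n (n + W)).card • (g0/8) :=
                Finset.sum_le_card_nsmul _ _ _ fun k hk =>
                  hN₁ k (le_trans hn (Finset.mem_Ico.mp hk).1)
            _ = (W:ℝ) * (g0/8) := by rw [hcard, nsmul_eq_mul]
        have h13 : |(∑ k ∈ Finset.Ico n (n + W), f k).re| ≤ ‖∑ k ∈ Finset.Ico n (n + W), f k‖ :=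
          Complex.abs_re_le_norm _
        cases abs_le.mp h13 with
        | intro h14 h15 => linarith
      have h16 : (∑ k ∈ Finset.Ico n (n + W), ((s k : ℝ):ℂ)).re
          = ((W:ℂ) * tc 1).re + E.re + (∑ k ∈ Finset.Ico n (n + W), f k).re := by
        rw [hsum_c, Complex.add_re, Complex.add_re]
      rw [hre, hWre] at h16
      linarith
    have hfinal : (W:ℝ) * g0 - B0 - (W:ℝ) * (g0/8) ≤ (W:ℝ) * (g0/2) := le_trans hlow hup
    linarith [hWg, hB0nonneg]
  -- T bound over one window
  set T : ℝ := ∑ k ∈ Finset.range (W + 1), t k with hT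
  have hTone : ∀ k, k ≤ W → t k ≤ T := by
    intro k hk
    exact Finset.single_le_sum (fun i _ => le_trans zero_le_one (ht1 i))
      (Finset.mem_range.mpr (by omega))
  have hTpos : 0 < T := lt_of_lt_of_le one_pos (le_trans (ht1 0) (hTone 0 (by omega)))
  have hts : ∀ k : ℕ, 1 ≤ k → t k = s k * (k:ℝ)^d := by
    intro k hk
    rw [hsn k]
    have h21 : ((k:ℝ))^d ≠ 0 := by positivity
    field_simp
  refine ⟨d, g0 / (2 * T), (∑ ω ∈ F, ‖tc ω‖) + 1,
    div_pos hg0pos (by linarith), by positivity, max (max N₁ N₂) 1, fun n hn => ?_⟩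
  have hnN₁ : N₁ ≤ n := le_trans (le_trans (le_max_left _ _) (le_max_left _ _)) hn
  have hnN₂ : N₂ ≤ n := le_trans (le_trans (le_max_right _ _) (le_max_left _ _)) hn
  have hn1 : 1 ≤ n := le_trans (le_max_right _ _) hn
  have hre_le : ∀ z : ℂ, z.re ≤ ‖z‖ := fun z => Complex.re_le_norm z
  constructor
  · obtain ⟨g, hgmem, hgs⟩ := hgood n hnN₁
    obtain ⟨hg1, hg2⟩ := Finset.mem_Ico.mp hgmem
    have hgn1 : 1 ≤ g := le_trans hn1 hg1
    have htg : (g0/2) * (n:ℝ)^d ≤ t g := by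
      rw [hts g hgn1]
      have h17 : ((n:ℝ))^d ≤ (g:ℝ)^d :=
        pow_le_pow_left₀ (by positivity) (by exact_mod_cast hg1) d
      calc (g0/2) * (n:ℝ)^d ≤ (g0/2) * (g:ℝ)^d :=
            mul_le_mul_of_nonneg_left h17 (by positivity)
        _ ≤ s g * (g:ℝ)^d := mul_le_mul_of_nonneg_right hgs (by positivity)
    have hsplit : t g ≤ t n * t (g - n) := by
      have h18 : n + (g - n) = g := by omega
      calc t g = t (n + (g - n)) := by rw [h18]
        _ ≤ t n * t (g - n) := hsub n (g - n)
    have htd : t (g - n) ≤ T := hTone (g - n) (by omega)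
    have h6 : (g0/2) * (n:ℝ)^d ≤ t n * T := by
      calc (g0/2) * (n:ℝ)^d ≤ t g := htg
        _ ≤ t n * t (g-n) := hsplit
        _ ≤ t n * T := mul_le_mul_of_nonneg_left htd (le_trans zero_le_one (ht1 n))
    have hTne : T ≠ 0 := ne_of_gt hTpos
    calc g0/(2*T) * (n:ℝ)^d = ((g0/2) * (n:ℝ)^d) / T := by
          field_simp
      _ ≤ (t n * T)/T := (div_le_div_iff_of_pos_right hTpos).mpr h6
      _ = t n := by field_simp
  · rw [hts n hn1]
    have hsb : s n ≤ (∑ ω ∈ F, ‖tc ω‖) + 1 := by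
      have h7 : s n = ((s n : ℝ):ℂ).re := (Complex.ofReal_re _).symm
      rw [h7, hsf n, Complex.add_re]
      have h19 : (∑ ω ∈ F, tc ω * ω ^ n).re ≤ ∑ ω ∈ F, ‖tc ω‖ := by
        calc (∑ ω ∈ F, tc ω * ω ^ n).re ≤ ‖∑ ω ∈ F, tc ω * ω ^ n‖ := hre_le _
          _ ≤ ∑ ω ∈ F, ‖tc ω * ω ^ n‖ := norm_sum_le _ _
          _ = ∑ ω ∈ F, ‖tc ω‖ := Finset.sum_congr rfl fun ω hω => by
              rw [norm_mul, norm_pow, hF ω hω, one_pow, mul_one]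
      have h20 : (f n).re ≤ 1 := le_trans (hre_le _) (hN₂ n hnN₂)
      linarith
    exact mul_le_mul_of_nonneg_right hsb (by positivity)



end Stmt9Aux

open Stmt9Aux in
/-- Let `M` be a nonnegative real square matrix and let `l` be its
dominant (Perron–Frobenius) eigenvalue, i.e. `l` is a (real, nonnegative) eigenvalue of
`M` dominating the absolute value of every complex eigenvalue of `M`.  Then there exist
`d ∈ ℕ` and constants `c, C > 0` with
`c · l^n · n^d ≤ ‖M^n‖₁ ≤ C · l^n · n^d` for all sufficiently large `n`. -/
theorem stmt9 {m : Type*} [Fintype m] [DecidableEq m] [Nonempty m]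
    (M : Matrix m m ℝ) (hM : ∀ i j, 0 ≤ M i j) (l : ℝ) (hl : 0 ≤ l)
    (hmem : (l : ℂ) ∈ spectrum ℂ (M.map (Complex.ofReal)))
    (hmax : ∀ μ ∈ spectrum ℂ (M.map (Complex.ofReal)), ‖μ‖ ≤ l) :
    ∃ d : ℕ, ∃ c C : ℝ, 0 < c ∧ 0 < C ∧ ∃ N : ℕ, ∀ n : ℕ, N ≤ n →
      c * l ^ n * (n : ℝ) ^ d ≤ maxColSum (M ^ n) ∧
      maxColSum (M ^ n) ≤ C * l ^ n * (n : ℝ) ^ d := by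
  classical
  obtain ⟨S, Q, hSprop, hSexp⟩ := expansion M l hmax
  set K := Fintype.card m with hK
  rcases eq_or_lt_of_le hl with hl0 | hlpos
  · -- case l = 0 : the matrix is nilpotent
    have hSempty : S = ∅ := by
      refine Finset.eq_empty_of_forall_notMem fun μ hμ => ?_
      obtain ⟨h1, h2⟩ := hSprop μ hμ
      rw [← hl0] at h2
      exact h1 (norm_eq_zero.mp (le_antisymm h2 (norm_nonneg μ)))
    have haK : aSeq M K = 0 := by
      have h3 := hSexp K le_rfl
      rw [hSempty, Finset.sum_empty] at h3
      exact_mod_cast h3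
    refine ⟨0, 1, 1, one_pos, one_pos, K + 1, fun n hn => ?_⟩
    have ha0 : aSeq M n = 0 := by
      refine le_antisymm ?_ (aSeq_nonneg hM n)
      have h4 : n = K + (n - K) := by omega
      calc aSeq M n = aSeq M (K + (n - K)) := by rw [← h4]
        _ ≤ aSeq M K * aSeq M (n - K) := aSeq_submul hM K (n - K)
        _ = 0 := by rw [haK, zero_mul]
    have hmc0 : maxColSum (M ^ n) = 0 :=
      le_antisymm (ha0 ▸ maxColSum_le_aSeq hM n) (maxColSum_nonneg hM n)
    rw [hmc0, ← hl0, zero_pow (by omega : n ≠ 0)]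
    norm_num
  · -- case l > 0
    have hlne : ((l : ℝ) : ℂ) ≠ 0 := by
      simpa using ne_of_gt hlpos
    set t : ℕ → ℝ := fun n => aSeq M n / l ^ n with ht
    have htn : ∀ n, t n = aSeq M n / l ^ n := fun n => rfl
    have hlp : ∀ n : ℕ, (0:ℝ) < l ^ n := fun n => pow_pos hlpos n
    have ht1 : ∀ n, 1 ≤ t n := fun n =>
      (one_le_div (hlp n)).mpr (l_pow_le_aSeq hM hl hmem n)
    have htsub : ∀ p q : ℕ, t (p + q) ≤ t p * t q := by
      intro p q
      rw [htn, htn, htn, pow_add, div_mul_div_comm]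
      exact (div_le_div_iff_of_pos_right (by positivity)).mpr (aSeq_submul hM p q)
    -- peripheral data
    set F : Finset ℂ := (S.filter (fun μ => ‖μ‖ = l)).image (fun μ => μ / (l : ℂ))
      with hFdef
    set q' : ℂ → Polynomial ℂ := fun ω => Q (ω * (l : ℂ)) with hq'def
    have hF : ∀ ω ∈ F, ‖ω‖ = 1 := by
      intro ω hω
      obtain ⟨μ, hμ, rfl⟩ := Finset.mem_image.mp hω
      obtain ⟨hμS, hμl⟩ := Finset.mem_filter.mp hμ
      rw [norm_div, hμl, Complex.norm_real, Real.norm_of_nonneg hl,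
        div_self (ne_of_gt hlpos)]
    have hexp : Tendsto
        (fun n : ℕ => ((t n : ℝ) : ℂ) - ∑ ω ∈ F, (q' ω).eval (n : ℂ) * ω ^ n)
        atTop (𝓝 0) := by
      have hev : ∀ n : ℕ, K ≤ n →
          ((t n : ℝ) : ℂ) - ∑ ω ∈ F, (q' ω).eval (n : ℂ) * ω ^ n
            = ∑ μ ∈ S.filter (fun μ => ¬ ‖μ‖ = l),
                (Q μ).eval (n : ℂ) * (μ / (l : ℂ)) ^ n := by
        intro n hn
        have h5 : ((t n : ℝ) : ℂ) = ∑ μ ∈ S, (Q μ).eval (n : ℂ) * (μ / (l : ℂ)) ^ n := by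
          rw [htn]
          push_cast
          rw [hSexp n hn, Finset.sum_div]
          refine Finset.sum_congr rfl fun μ _ => ?_
          rw [div_pow, mul_div_assoc]
        have h6 : ∑ ω ∈ F, (q' ω).eval (n : ℂ) * ω ^ n
            = ∑ μ ∈ S.filter (fun μ => ‖μ‖ = l),
                (Q μ).eval (n : ℂ) * (μ / (l : ℂ)) ^ n := by
          rw [hFdef, Finset.sum_image ?hinj]
          case hinj =>
            intro x _ y _ hxy
            have h7 := congrArg (fun z : ℂ => z * (l : ℂ)) hxy
            simpa [div_mul_cancel₀, hlne] using h7
          refine Finset.sum_congr rfl fun μ hμ => ?_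
          have h8 : (μ / (l : ℂ)) * (l : ℂ) = μ := div_mul_cancel₀ μ hlne
          rw [hq'def]
          simp only [h8]
        rw [h5, h6, ← Finset.sum_filter_add_sum_filter_not S (fun μ => ‖μ‖ = l)
          (fun μ => (Q μ).eval (n : ℂ) * (μ / (l : ℂ)) ^ n)]
        ring
      have hT0 : Tendsto (fun n : ℕ => ∑ μ ∈ S.filter (fun μ => ¬ ‖μ‖ = l),
          (Q μ).eval (n : ℂ) * (μ / (l : ℂ)) ^ n) atTop (𝓝 0) := by
        have h9 : ∀ μ ∈ S.filter (fun μ => ¬ ‖μ‖ = l), Tendsto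
            (fun n : ℕ => (Q μ).eval (n : ℂ) * (μ / (l : ℂ)) ^ n) atTop (𝓝 0) := by
          intro μ hμ
          obtain ⟨hμS, hμl⟩ := Finset.mem_filter.mp hμ
          refine poly_geom_tendsto (Q μ) ?_
          rw [norm_div, Complex.norm_real, Real.norm_of_nonneg hl]
          rw [div_lt_one hlpos]
          exact lt_of_le_of_ne (hSprop μ hμS).2 hμl
        have := tendsto_finset_sum (S.filter (fun μ => ¬ ‖μ‖ = l)) h9
        simpa using this
      refine hT0.congr' ?_
      rw [Filter.eventuallyEq_iff_exists_mem]
      exact ⟨{n | K ≤ n}, mem_atTop K, fun n hn => (hev n hn).symm⟩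
    obtain ⟨d, c, C, hc, hC, N, hbounds⟩ := analysis_main t ht1 htsub F hF q' hexp
    have hcard : (0:ℝ) < (Fintype.card m : ℝ) := by
      exact_mod_cast Fintype.card_pos
    refine ⟨d, c / (Fintype.card m : ℝ), C, div_pos hc hcard, hC,
      max N 1, fun n hn => ?_⟩
    have hnN : N ≤ n := le_trans (le_max_left _ _) hn
    obtain ⟨hlow, hup⟩ := hbounds n hnN
    have haeq : aSeq M n = t n * l ^ n := by
      rw [htn, div_mul_cancel₀ _ (ne_of_gt (hlp n))]
    constructor
    · have h10 : c * (n:ℝ) ^ d * l ^ n ≤ aSeq M n := by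
        rw [haeq]
        exact mul_le_mul_of_nonneg_right hlow (le_of_lt (hlp n))
      have h11 : aSeq M n ≤ (Fintype.card m : ℝ) * maxColSum (M ^ n) :=
        aSeq_le_card_mul_maxColSum hM n
      rw [div_mul_eq_mul_div, div_mul_eq_mul_div, div_le_iff₀ hcard]
      calc c * l ^ n * (n:ℝ) ^ d = c * (n:ℝ) ^ d * l ^ n := by ring
        _ ≤ aSeq M n := h10
        _ ≤ (Fintype.card m : ℝ) * maxColSum (M ^ n) := h11
        _ = maxColSum (M ^ n) * (Fintype.card m : ℝ) := by ring
    · calc maxColSum (M ^ n) ≤ aSeq M n := maxColSum_le_aSeq hM n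
        _ = t n * l ^ n := haeq
        _ ≤ (C * (n:ℝ) ^ d) * l ^ n :=
            mul_le_mul_of_nonneg_right hup (le_of_lt (hlp n))
        _ = C * l ^ n * (n:ℝ) ^ d := by ring
end

section
/- Let (X,T) be a minimal subshift over a finite alphabet A. Then X is null if and only if there exists t ∈ ℕ such that for every x ∈ X, every pair of distinct letters a, b ∈ A, and every set G ⊂ ℤ with |G| = t, the set {a,b}^t is not contained in L(x,G), where L(x,G) = { (T^i x)|_G : i ∈ ℤ } is the set of patterns of x read along G. -/
/-- The left shift by `i ∈ ℤ` on bi-infinite sequences: `(T^i x)_n = x_{n+i}`. -/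
def shiftZ {A : Type*} (i : ℤ) (x : ℤ → A) : ℤ → A := fun n => x (n + i)

/-- `S ⊆ ℤ` is an independence set for the pair of sets `(U₀, U₁)` relative to `X`:
for every finite `G ⊆ S` and every choice function `σ : G → {0,1}` there is `x ∈ X`
with `T^i x ∈ U_{σ(i)}` for all `i ∈ G`. -/
def IsIndepSet {A : Type*} (X U₀ U₁ : Set (ℤ → A)) (S : Set ℤ) : Prop :=
  ∀ G : Finset ℤ, ↑G ⊆ S → ∀ σ : ℤ → Bool,
    ∃ x ∈ X, ∀ i ∈ G, shiftZ i x ∈ (if σ i then U₁ else U₀)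

/-- `(x₀, x₁)` is an IN pair for the subshift `X`: every pair of (ambient) open
neighbourhoods of `x₀` and `x₁` admits arbitrarily large finite independence sets. -/
def IsINPair {A : Type*} [TopologicalSpace A] (X : Set (ℤ → A)) (x₀ x₁ : ℤ → A) : Prop :=
  ∀ U₀ U₁ : Set (ℤ → A), IsOpen U₀ → IsOpen U₁ → x₀ ∈ U₀ → x₁ ∈ U₁ →
    ∀ t : ℕ, ∃ G : Finset ℤ, t ≤ G.card ∧ IsIndepSet X (U₀ ∩ X) (U₁ ∩ X) ↑G

/-- A subshift is null if it has no nontrivial IN pairs. -/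
def IsNullSystem {A : Type*} [TopologicalSpace A] (X : Set (ℤ → A)) : Prop :=
  ∀ x₀ ∈ X, ∀ x₁ ∈ X, IsINPair X x₀ x₁ → x₀ = x₁



section Prelim
variable {A : Type*}

lemma shiftZ_shiftZ (i j : ℤ) (x : ℤ → A) : shiftZ i (shiftZ j x) = shiftZ (i + j) x := by
  funext n; simp [shiftZ, add_assoc, add_comm i j]

lemma shiftZ_zero (x : ℤ → A) : shiftZ 0 x = x := by funext n; simp [shiftZ]

lemma shiftZ_apply (i : ℤ) (x : ℤ → A) (n : ℤ) : shiftZ i x n = x (n + i) := rfl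

variable [TopologicalSpace A]

lemma continuous_shiftZ (i : ℤ) : Continuous (shiftZ (A := A) i) :=
  continuous_pi fun n => continuous_apply (n + i)

variable {X : Set (ℤ → A)}

omit [TopologicalSpace A] in
lemma shift_mem (hinv : shiftZ 1 '' X = X) {x : ℤ → A} (hx : x ∈ X) (i : ℤ) :
    shiftZ i x ∈ X := by
  have h1 : ∀ y ∈ X, shiftZ 1 y ∈ X := by
    intro y hy; rw [← hinv]; exact Set.mem_image_of_mem _ hy
  have hm1 : ∀ y ∈ X, shiftZ (-1) y ∈ X := by
    intro y hy
    rw [← hinv] at hy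
    obtain ⟨z, hz, rfl⟩ := hy
    rw [shiftZ_shiftZ]; norm_num [shiftZ_zero]; exact hz
  induction i using Int.induction_on with
  | zero => rwa [shiftZ_zero]
  | succ k ih =>
      have := h1 _ ih
      rwa [shiftZ_shiftZ, add_comm] at this
  | pred k ih =>
      have := hm1 _ ih
      rw [shiftZ_shiftZ] at this
      have e : (-1 : ℤ) + -(k : ℤ) = -(k : ℤ) - 1 := by ring
      rwa [e] at this

/-- cylinder sets are open -/
lemma cyl_isOpen [DiscreteTopology A] (w : ℤ → A) (F : Finset ℤ) :
    IsOpen {y : ℤ → A | ∀ f ∈ F, y f = w f} := by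
  have : {y : ℤ → A | ∀ f ∈ F, y f = w f}
      = ⋂ f ∈ F, (fun y : ℤ → A => y f) ⁻¹' {w f} := by
    ext y; simp
  rw [this]
  exact isOpen_biInter_finset fun f _ => (continuous_apply f).isOpen_preimage _ (isOpen_discrete _)

/-- every point of `X` has dense orbit (minimality), pattern form -/
lemma dense_orbit [DiscreteTopology A] (hclosed : IsClosed X)
    (hinv : shiftZ 1 '' X = X)
    (hmin : ∀ Y : Set (ℤ → A), Y ⊆ X → IsClosed Y → shiftZ 1 '' Y = Y → Y = ∅ ∨ Y = X)
    {x y : ℤ → A} (hx : x ∈ X) (hy : y ∈ X) (F : Finset ℤ) :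
    ∃ i : ℤ, ∀ g ∈ F, x (g + i) = y g := by
  classical
  set O : Set (ℤ → A) := Set.range (fun i : ℤ => shiftZ i x) with hO
  have hOX : O ⊆ X := by rintro _ ⟨i, rfl⟩; exact shift_mem hinv hx i
  set Y := closure O with hY
  have hYX : Y ⊆ X := closure_minimal hOX hclosed
  have hshift : ∀ j : ℤ, shiftZ j '' Y ⊆ Y := by
    intro j
    have h1 : shiftZ j '' O ⊆ O := by
      rintro _ ⟨_, ⟨i, rfl⟩, rfl⟩
      exact ⟨j + i, by rw [shiftZ_shiftZ]⟩
    calc shiftZ j '' closure O ⊆ closure (shiftZ j '' O) :=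
          image_closure_subset_closure_image (continuous_shiftZ j)
      _ ⊆ closure O := closure_mono h1
  have hinvY : shiftZ 1 '' Y = Y := by
    refine le_antisymm (hshift 1) ?_
    intro z hz
    refine ⟨shiftZ (-1) z, hshift (-1) ⟨z, hz, rfl⟩, ?_⟩
    rw [shiftZ_shiftZ]; norm_num [shiftZ_zero]
  have hne' : Y ≠ ∅ := by
    have : x ∈ Y := subset_closure ⟨0, by simp [shiftZ_zero]⟩
    intro h; rw [h] at this; exact this
  have hYeq : Y = X := (hmin Y hYX isClosed_closure hinvY).resolve_left hne'
  -- y ∈ closure O, use cylinder nbhd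
  have hyY : y ∈ Y := hYeq ▸ hy
  have hop : IsOpen {w : ℤ → A | ∀ f ∈ F, w f = y f} := cyl_isOpen y F
  have hmem : y ∈ {w : ℤ → A | ∀ f ∈ F, w f = y f} := fun f _ => rfl
  obtain ⟨z, hz1, hz2⟩ := mem_closure_iff.mp hyY _ hop hmem
  obtain ⟨i, rfl⟩ := hz2
  exact ⟨i, fun g hg => hz1 g hg⟩
end Prelim

section Back
variable {A : Type*} [TopologicalSpace A] [DiscreteTopology A] {X : Set (ℤ → A)}

lemma dir_back (hclosed : IsClosed X)
    (hinv : shiftZ 1 '' X = X)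
    (hmin : ∀ Y : Set (ℤ → A), Y ⊆ X → IsClosed Y → shiftZ 1 '' Y = Y → Y = ∅ ∨ Y = X)
    (h : ∃ t : ℕ, ∀ x ∈ X, ∀ a b : A, a ≠ b → ∀ G : Finset ℤ, G.card = t →
        ¬ (∀ u : ℤ → A, (∀ g ∈ G, u g = a ∨ u g = b) →
            ∃ i : ℤ, ∀ g ∈ G, x (i + g) = u g)) :
    IsNullSystem X := by
  classical
  obtain ⟨t, hP⟩ := h
  intro x₀ hx₀ x₁ hx₁ hIN
  by_contra hne'
  have hn : ∃ n : ℤ, x₀ n ≠ x₁ n := by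
    by_contra hc; push_neg at hc; exact hne' (funext hc)
  obtain ⟨n, hab⟩ := hn
  set a := x₀ n with ha
  set b := x₁ n with hb
  set U₀ : Set (ℤ → A) := {y | y n = a} with hU₀
  set U₁ : Set (ℤ → A) := {y | y n = b} with hU₁
  have hU₀o : IsOpen U₀ := by
    have := cyl_isOpen x₀ {n}
    simpa [hU₀] using this
  have hU₁o : IsOpen U₁ := by
    have := cyl_isOpen x₁ {n}
    simpa [hU₁] using this
  obtain ⟨G, htG, hind⟩ := hIN U₀ U₁ hU₀o hU₁o rfl rfl t
  obtain ⟨G₁, hG₁sub, hG₁card⟩ := Finset.exists_subset_card_eq htG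
  set H : Finset ℤ := G₁.image (fun g => g + n) with hH
  have hHcard : H.card = t := by
    rw [hH, Finset.card_image_of_injective _ (add_left_injective n), hG₁card]
  have := hP x₀ hx₀ a b hab H hHcard
  push_neg at this
  obtain ⟨u, hu, hnot⟩ := this
  set σ : ℤ → Bool := fun i => decide (u (i + n) = b) with hσ
  obtain ⟨z, hzX, hz⟩ := hind G₁ (by exact_mod_cast hG₁sub) σ
  -- z matches u on H
  have hzu : ∀ g ∈ H, z g = u g := by
    intro g hg
    rw [hH, Finset.mem_image] at hg
    obtain ⟨i, hi, rfl⟩ := hg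
    have := hz i hi
    by_cases hc : u (i + n) = b
    · have hσt : σ i = true := by simp [hσ, hc]
      rw [hσt] at this
      simp only [if_true] at this
      have : shiftZ i z ∈ U₁ := this.1
      have : z (n + i) = b := this
      rw [add_comm n i] at this
      rw [this, hc]
    · have hσf : σ i = false := by simp [hσ, hc]
      rw [hσf] at this
      simp only [Bool.false_eq_true, if_false] at this
      have : shiftZ i z ∈ U₀ := this.1
      have hza : z (n + i) = a := this
      rw [add_comm n i] at hza
      rcases hu (i + n) (Finset.mem_image_of_mem _ hi) with h1 | h1
      · rw [hza, h1]
      · exact absurd h1 hc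
  obtain ⟨i, hi⟩ := dense_orbit hclosed hinv hmin hx₀ hzX H
  obtain ⟨g, hg, hgne⟩ := hnot i
  exact hgne (by rw [add_comm i g, hi g hg, hzu g hg])
end Back

section Ramsey

/-- homogeneity statement for strictly monotone `t`-tuples with colours in `κ` -/
def RamseyProp (t : ℕ) (κ : Type) (R N : ℕ) : Prop :=
  ∀ (S : Finset ℤ) (f : (Fin t → ℤ) → κ), R ≤ S.card →
    ∃ T, T ⊆ S ∧ N ≤ T.card ∧ ∀ g g' : Fin t → ℤ, StrictMono g → StrictMono g' →
      (∀ j, g j ∈ T) → (∀ j, g' j ∈ T) → f g = f g'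

theorem ramsey_tuples (t : ℕ) (κ : Type) [Fintype κ] (N : ℕ) : ∃ R, RamseyProp t κ R N := by
  classical
  induction t generalizing N with
  | zero =>
      refine ⟨N, fun S f hS => ⟨S, le_refl _, hS, fun g g' _ _ _ _ => ?_⟩⟩
      have : g = g' := funext fun j => absurd j.2 (by omega)
      rw [this]
  | succ t ih =>
      -- prehomogeneous sets
      have prehom : ∀ m : ℕ, ∃ R, ∀ (S : Finset ℤ) (f : (Fin (t+1) → ℤ) → κ), R ≤ S.card →
          ∃ (T : Finset ℤ) (γ : ℤ → κ), T ⊆ S ∧ m ≤ T.card ∧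
            ∀ h : Fin (t+1) → ℤ, StrictMono h → (∀ j, h j ∈ T) → f h = γ (h 0) := by
        intro m
        induction m with
        | zero =>
            refine ⟨0, fun S f _ => ?_⟩
            refine ⟨∅, fun _ => f (fun _ => 0), Finset.empty_subset _, by simp, ?_⟩
            exact fun h _ hmem => absurd (hmem 0) (by simp)
        | succ m ihm =>
            obtain ⟨Rm, hRm⟩ := ihm
            obtain ⟨Rr, hRr⟩ := ih (Rm + t)
            refine ⟨Rr + 1, fun S f hS => ?_⟩
            have hSne : S.Nonempty := Finset.card_pos.mp (by omega)
            set a := S.min' hSne with ha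
            set S' := S.erase a with hS'
            have hS'card : Rr ≤ S'.card := by
              rw [hS', Finset.card_erase_of_mem (S.min'_mem hSne)]; omega
            set f' : (Fin t → ℤ) → κ := fun g => f (Fin.cases a g) with hf'
            obtain ⟨T₁, hT₁sub, hT₁card, hT₁hom⟩ := hRr S' f' hS'card
            obtain ⟨T', γ', hT'sub, hT'card, hT'prop⟩ := hRm T₁ f (by omega)
            obtain ⟨T₂, hT₂sub, hT₂card⟩ := Finset.exists_subset_card_eq (show t ≤ T₁.card by omega)
            set g₁ : Fin t → ℤ := fun j => (T₂.orderIsoOfFin hT₂card j : ℤ) with hg₁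
            have hg₁mono : StrictMono g₁ := fun i j hij => by
              exact_mod_cast (T₂.orderIsoOfFin hT₂card).strictMono hij
            have hg₁mem : ∀ j, g₁ j ∈ T₁ := fun j => hT₂sub (T₂.orderIsoOfFin hT₂card j).2
            have haS' : ∀ x ∈ S', a < x := by
              intro x hx
              rcases Finset.mem_erase.mp hx with ⟨hxa, hxS⟩
              exact lt_of_le_of_ne (S.min'_le x hxS) (Ne.symm hxa)
            refine ⟨insert a T', Function.update γ' a (f' g₁), ?_, ?_, ?_⟩
            · intro x hx
              rcases Finset.mem_insert.mp hx with rfl | hx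
              · exact S.min'_mem hSne
              · exact Finset.erase_subset _ _ (hT₁sub (hT'sub hx))
            · have : a ∉ T' := fun hc => lt_irrefl a (haS' a (hT₁sub (hT'sub hc)))
              rw [Finset.card_insert_of_notMem this]; omega
            · intro h hmono hmem
              by_cases h0 : h 0 = a
              · have hrest : ∀ j : Fin t, h j.succ ∈ T' := by
                  intro j
                  rcases Finset.mem_insert.mp (hmem j.succ) with hc | hc
                  · exfalso
                    have : h 0 < h j.succ := hmono (Fin.succ_pos j)
                    rw [h0, hc] at this; exact lt_irrefl _ this
                  · exact hc
                have hdec : h = Fin.cases a (fun j => h j.succ) := by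
                  funext j
                  induction j using Fin.cases with
                  | zero => simpa using h0
                  | succ j => simp
                have hsmono : StrictMono (fun j : Fin t => h j.succ) :=
                  fun i j hij => hmono (Fin.succ_lt_succ_iff.mpr hij)
                have hfh : f h = f' (fun j => h j.succ) := congrArg f hdec
                rw [hfh, h0, Function.update_self]
                exact hT₁hom _ _ hsmono hg₁mono (fun j => hT'sub (hrest j)) hg₁mem
              · have hrange : ∀ j, h j ∈ T' := by
                  intro j
                  rcases Finset.mem_insert.mp (hmem j) with hc | hc
                  · exfalso
                    have h0T : h 0 ∈ T' := by
                      rcases Finset.mem_insert.mp (hmem 0) with hc0 | hc0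
                      · exact absurd hc0 h0
                      · exact hc0
                    have ha0 : a < h 0 := haS' _ (hT₁sub (hT'sub h0T))
                    have h0j : h 0 ≤ h j := hmono.monotone (Fin.zero_le j)
                    rw [hc] at h0j
                    exact absurd h0j (not_le.mpr ha0)
                  · exact hc
                rw [hT'prop h hmono hrange, Function.update_of_ne h0]
      obtain ⟨R, hR⟩ := prehom (Fintype.card κ * N + 1)
      refine ⟨R, fun S f hS => ?_⟩
      obtain ⟨T, γ, hTsub, hTcard, hprop⟩ := hR S f hS
      have hpig : ∃ y ∈ Finset.univ (α := κ), N < (T.filter fun x => γ x = y).card := by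
        apply Finset.exists_lt_card_fiber_of_mul_lt_card_of_maps_to
        · exact fun a _ => Finset.mem_univ _
        · calc Finset.univ.card * N = Fintype.card κ * N := by rw [Finset.card_univ]
            _ < T.card := by omega
      obtain ⟨y, _, hy⟩ := hpig
      refine ⟨T.filter fun x => γ x = y, (Finset.filter_subset _ _).trans hTsub, by omega, ?_⟩
      intro g g' hg hg' hgm hg'm
      have h1 : ∀ j, g j ∈ T := fun j => Finset.filter_subset _ _ (hgm j)
      have h1' : ∀ j, g' j ∈ T := fun j => Finset.filter_subset _ _ (hg'm j)
      rw [hprop g hg h1, hprop g' hg' h1']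
      have e1 : γ (g 0) = y := (Finset.mem_filter.mp (hgm 0)).2
      have e2 : γ (g' 0) = y := (Finset.mem_filter.mp (hg'm 0)).2
      rw [e1, e2]
end Ramsey

set_option linter.unusedSectionVars false
set_option linter.unusedVariables false
section Split
variable {A : Type*} {X D₀ D₁ V V' : Set (ℤ → A)}

/-- `G` is a (full) independence set for `(D₀, D₁)` relative to `X`. -/
def FullIndep (X D₀ D₁ : Set (ℤ → A)) (G : Finset ℤ) : Prop :=
  ∀ σ : ℤ → Bool, ∃ z ∈ X, ∀ i ∈ G, shiftZ i z ∈ (if σ i then D₁ else D₀)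

/-- `(D₀, D₁)` admits arbitrarily large finite independence sets relative to `X`. -/
def AL (X D₀ D₁ : Set (ℤ → A)) : Prop :=
  ∀ t : ℕ, ∃ G : Finset ℤ, t ≤ G.card ∧ FullIndep X D₀ D₁ G

/-- tuple version of independence -/
def TIndep (X D₀ D₁ : Set (ℤ → A)) {t : ℕ} (g : Fin t → ℤ) : Prop :=
  ∀ τ : Fin t → Bool, ∃ z ∈ X, ∀ j, shiftZ (g j) z ∈ (if τ j then D₁ else D₀)

lemma FullIndep.mono {E₀ E₁ : Set (ℤ → A)} (h : FullIndep X D₀ D₁ G)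
    (h₀ : D₀ ⊆ E₀) (h₁ : D₁ ⊆ E₁) : FullIndep X E₀ E₁ G := by
  intro σ
  obtain ⟨z, hzX, hz⟩ := h σ
  refine ⟨z, hzX, fun i hi => ?_⟩
  have := hz i hi
  by_cases hb : σ i <;> simp only [hb, if_true, if_false] at * <;>
    [exact h₁ this; exact h₀ this]

lemma AL.mono {E₀ E₁ : Set (ℤ → A)} (h : AL X D₀ D₁) (h₀ : D₀ ⊆ E₀) (h₁ : D₁ ⊆ E₁) :
    AL X E₀ E₁ := fun t => by
  obtain ⟨G, hc, hf⟩ := h t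
  exact ⟨G, hc, hf.mono h₀ h₁⟩

lemma FullIndep.swap (h : FullIndep X D₀ D₁ G) : FullIndep X D₁ D₀ G := by
  intro σ
  obtain ⟨z, hzX, hz⟩ := h (fun i => !σ i)
  refine ⟨z, hzX, fun i hi => ?_⟩
  have := hz i hi
  by_cases hb : σ i <;> simp [hb] at * <;> exact this

lemma AL.swap (h : AL X D₀ D₁) : AL X D₁ D₀ := fun t => by
  obtain ⟨G, hc, hf⟩ := h t
  exact ⟨G, hc, hf.swap⟩

lemma TIndep.toFull {t : ℕ} {g : Fin t → ℤ} (h : TIndep X D₀ D₁ g)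
    (hg : Function.Injective g) :
    FullIndep X D₀ D₁ (Finset.image g Finset.univ) := by
  intro σ
  obtain ⟨z, hzX, hz⟩ := h (fun j => σ (g j))
  refine ⟨z, hzX, fun i hi => ?_⟩
  obtain ⟨j, _, rfl⟩ := Finset.mem_image.mp hi
  exact hz j

/-- key arithmetic fact -/
lemma neq_mul_add (t a b s : ℕ) (h1 : 1 ≤ s) (h2 : s ≤ t) : (t+1)*a + s ≠ (t+1)*b := by
  intro h
  rcases le_or_gt b a with hc | hc
  · have : (t+1)*b ≤ (t+1)*a := Nat.mul_le_mul_left _ hc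
    omega
  · have : (t+1)*(a+1) ≤ (t+1)*b := Nat.mul_le_mul_left _ hc
    rw [Nat.mul_add, Nat.mul_one] at this
    omega

end Split

section SplitCore
variable {A : Type*} {X D₀ V V' : Set (ℤ → A)}

theorem split_t (hne : X.Nonempty) (hAL : AL X D₀ (V ∪ V')) (t : ℕ) :
    (∃ T : Finset ℤ, t ≤ T.card ∧ FullIndep X D₀ V T) ∨
    (∃ T : Finset ℤ, t ≤ T.card ∧ FullIndep X D₀ V' T) := by
  classical
  rcases Nat.eq_zero_or_pos t with rfl | htpos
  · exact Or.inl ⟨∅, by simp, fun σ => ⟨hne.choose, hne.choose_spec, by simp⟩⟩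
  set M₀ := (t+1)*(2*t+1) with hM₀
  obtain ⟨R, hR⟩ := ramsey_tuples t ((Fin t → Bool) × (Fin t → Bool)) M₀
  obtain ⟨G, hGR, hGfull⟩ := hAL R
  by_contra hcon
  push_neg at hcon
  obtain ⟨h1, h2⟩ := hcon
  -- no strictly monotone t-tuple is independent for (D₀,V) or (D₀,V')
  have notGood : ∀ g : Fin t → ℤ, StrictMono g →
      ¬ TIndep X D₀ V g ∧ ¬ TIndep X D₀ V' g := by
    intro g hg
    constructor
    · intro hT
      have hcard : (Finset.image g Finset.univ).card = t := by
        rw [Finset.card_image_of_injective _ hg.injective, Finset.card_univ, Fintype.card_fin]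
      exact h1 _ (le_of_eq hcard.symm) (hT.toFull hg.injective)
    · intro hT
      have hcard : (Finset.image g Finset.univ).card = t := by
        rw [Finset.card_image_of_injective _ hg.injective, Finset.card_univ, Fintype.card_fin]
      exact h2 _ (le_of_eq hcard.symm) (hT.toFull hg.injective)
  -- witnesses
  have hwit : ∀ (C : Set (ℤ → A)) (g : Fin t → ℤ), ¬ TIndep X D₀ C g →
      ∃ τ : Fin t → Bool, ¬ ∃ z ∈ X, ∀ j, shiftZ (g j) z ∈ (if τ j then C else D₀) := by
    intro C g hg
    by_contra hc
    push_neg at hc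
    exact hg fun τ => by
      have := hc τ
      exact this
  set wit : Set (ℤ → A) → (Fin t → ℤ) → (Fin t → Bool) := fun C g =>
    if hg : ¬ TIndep X D₀ C g then (hwit C g hg).choose else (fun _ => false) with hwitdef
  have hwitspec : ∀ (C : Set (ℤ → A)) (g : Fin t → ℤ) (hg : ¬ TIndep X D₀ C g),
      ¬ ∃ z ∈ X, ∀ j, shiftZ (g j) z ∈ (if wit C g j then C else D₀) := by
    intro C g hg
    have : wit C g = (hwit C g hg).choose := by rw [hwitdef]; exact dif_pos hg
    rw [this]
    exact (hwit C g hg).choose_spec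
  set f : (Fin t → ℤ) → (Fin t → Bool) × (Fin t → Bool) := fun g => (wit V g, wit V' g) with hf
  obtain ⟨TR, hTRsub, hTRcard, hhom⟩ := hR G f hGR
  obtain ⟨M', hM'sub, hM'card⟩ := Finset.exists_subset_card_eq hTRcard
  set e := M'.orderIsoOfFin hM'card with he
  set E : ℕ → ℤ := fun n => if h : n < M₀ then (e ⟨n, h⟩ : ℤ) else 0 with hE
  have hEmono : ∀ {m n : ℕ}, m < n → n < M₀ → E m < E n := by
    intro m n hmn hn
    rw [hE]
    simp only [dif_pos hn, dif_pos (lt_trans hmn hn)]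
    exact_mod_cast e.strictMono (show (⟨m, lt_trans hmn hn⟩ : Fin M₀) < ⟨n, hn⟩ from hmn)
  have hEmem : ∀ {n : ℕ}, n < M₀ → E n ∈ M' := by
    intro n hn
    rw [hE]; simp only [dif_pos hn]
    exact (e ⟨n, hn⟩).2
  have hEinj : ∀ {m n : ℕ}, m < M₀ → n < M₀ → E m = E n → m = n := by
    intro m n hm hn hEq
    rcases lt_trichotomy m n with h | h | h
    · exact absurd hEq (ne_of_lt (hEmono h hn))
    · exact h
    · exact absurd hEq.symm (ne_of_lt (hEmono h hm))
  have htM₀ : t < M₀ := by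
    rw [hM₀]
    have := Nat.le_mul_of_pos_right (t+1) (show 0 < 2*t+1 by omega)
    omega
  set g₀ : Fin t → ℤ := fun j => E j with hg₀
  have hg₀mono : StrictMono g₀ := fun i j hij => hEmono hij (lt_trans j.2 htM₀)
  have hg₀mem : ∀ j, g₀ j ∈ M' := fun j => hEmem (lt_trans j.2 htM₀)
  set tpair := f g₀ with htpair
  set O : Finset ℤ := (Finset.Icc 1 (2*t)).image (fun k => E ((t+1)*k)) with hO
  have hkM₀ : ∀ k, k ∈ Finset.Icc 1 (2*t) → (t+1)*k < M₀ := by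
    intro k hk
    rw [Finset.mem_Icc] at hk
    have h1 : (t+1)*k ≤ (t+1)*(2*t) := Nat.mul_le_mul_left _ hk.2
    have h2 : (t+1)*(2*t) + (t+1) = M₀ := by rw [hM₀]; ring
    omega
  have hOsubM' : ↑O ⊆ (M' : Set ℤ) := by
    intro i hi
    simp only [hO, Finset.coe_image, Set.mem_image] at hi
    obtain ⟨k, hk, rfl⟩ := hi
    exact hEmem (hkM₀ k (by exact_mod_cast hk))
  have hOcard : O.card = 2*t := by
    rw [hO, Finset.card_image_of_injOn, Nat.card_Icc]
    · omega
    · intro k₁ hk₁ k₂ hk₂ hEq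
      have h₁ := hkM₀ k₁ hk₁
      have h₂ := hkM₀ k₂ hk₂
      have := hEinj h₁ h₂ hEq
      have ht1 : 0 < t + 1 := Nat.succ_pos t
      exact Nat.eq_of_mul_eq_mul_left ht1 this
  set σs : ℤ → Bool := fun i => decide (i ∈ O) with hσs
  obtain ⟨z, hzX, hz⟩ := hGfull σs
  set Af : Finset ℤ := O.filter (fun i => shiftZ i z ∈ V) with hAf
  set Bf : Finset ℤ := O.filter (fun i => shiftZ i z ∉ V) with hBf
  have hABcard : Af.card + Bf.card = 2*t := by
    rw [hAf, hBf, Finset.card_filter_add_card_filter_not, hOcard]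
  have hMG : ∀ x ∈ M', x ∈ G := fun x hx => hTRsub (hM'sub hx)
  have hzO : ∀ i ∈ O, shiftZ i z ∈ V ∪ V' := by
    intro i hi
    have hiG : i ∈ G := hMG i (hOsubM' hi)
    have h' := hz i hiG
    have hσi : σs i = true := by rw [hσs]; simp [hi]
    rw [hσi] at h'
    simpa using h'
  have hzNotO : ∀ i ∈ M', i ∉ O → shiftZ i z ∈ D₀ := by
    intro i hiM hiO
    have h' := hz i (hMG i hiM)
    have hσi : σs i = false := by rw [hσs]; simp [hiO]
    rw [hσi] at h'
    simpa using h'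
  -- the key contradiction lemma
  have key : ∀ (C : Set (ℤ → A)) (τC : Fin t → Bool) (Wf : Finset ℤ),
      Wf ⊆ O → t ≤ Wf.card → (∀ i ∈ Wf, shiftZ i z ∈ C) →
      (∀ h : Fin t → ℤ, StrictMono h → (∀ j, h j ∈ M') →
        ¬ ∃ z' ∈ X, ∀ j, shiftZ (h j) z' ∈ (if τC j then C else D₀)) → False := by
    intro C τC Wf hWfO hWfcard hWfC hcontra
    set K : Finset ℕ := (Finset.Icc 1 (2*t)).filter (fun k => E ((t+1)*k) ∈ Wf) with hK
    have hWfK : Wf = K.image (fun k => E ((t+1)*k)) := by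
      ext i; constructor
      · intro hi
        have hiO := hWfO hi
        rw [hO, Finset.mem_image] at hiO
        obtain ⟨k, hk, rfl⟩ := hiO
        exact Finset.mem_image.mpr ⟨k, Finset.mem_filter.mpr ⟨hk, hi⟩, rfl⟩
      · intro hi
        obtain ⟨k, hk, rfl⟩ := Finset.mem_image.mp hi
        exact (Finset.mem_filter.mp hk).2
    have hKcard : t ≤ K.card := by
      calc t ≤ Wf.card := hWfcard
        _ ≤ K.card := by rw [hWfK]; exact Finset.card_image_le
    obtain ⟨K', hK'sub, hK'card⟩ := Finset.exists_subset_card_eq hKcard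
    set uu : ℕ → ℕ := fun m => if h : m < t then ((K'.orderIsoOfFin hK'card) ⟨m, h⟩ : ℕ) else 0
      with huu
    have huumem : ∀ {m : ℕ}, m < t → uu m ∈ K := by
      intro m hm
      rw [huu]; simp only [dif_pos hm]
      exact hK'sub ((K'.orderIsoOfFin hK'card) ⟨m, hm⟩).2
    have huumono : ∀ {m n : ℕ}, m < n → n < t → uu m < uu n := by
      intro m n hmn hn
      rw [huu]; simp only [dif_pos hn, dif_pos (lt_trans hmn hn)]
      exact_mod_cast (K'.orderIsoOfFin hK'card).strictMono
        (show (⟨m, lt_trans hmn hn⟩ : Fin t) < ⟨n, hn⟩ from hmn)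
    have huumono' : ∀ {m n : ℕ}, m ≤ n → n < t → uu m ≤ uu n := by
      intro m n hmn hn
      rcases eq_or_lt_of_le hmn with rfl | h
      · exact le_refl _
      · exact le_of_lt (huumono h hn)
    have huubound : ∀ {m : ℕ}, m < t → 1 ≤ uu m ∧ uu m ≤ 2*t := by
      intro m hm
      have := huumem hm
      rw [hK, Finset.mem_filter, Finset.mem_Icc] at this
      exact this.1
    have huuWf : ∀ {m : ℕ}, m < t → E ((t+1) * uu m) ∈ Wf := by
      intro m hm
      have := huumem hm
      rw [hK, Finset.mem_filter] at this
      exact this.2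
    set τN : ℕ → Bool := fun n => if h : n < t then τC ⟨n, h⟩ else false with hτN
    have hτNeq : ∀ j : Fin t, τN ↑j = τC j := by
      intro j; rw [hτN]; simp only [dif_pos j.2, Fin.eta]
    set rr : ℕ → ℕ := fun n => ((Finset.range n).filter (fun m => τN m = true)).card with hrr
    set zz : ℕ → ℕ := fun n => ((Finset.range n).filter (fun m => ¬ τN m = true)).card with hzz
    have hrz : ∀ n, rr n + zz n = n := by
      intro n
      rw [hrr, hzz, Finset.card_filter_add_card_filter_not, Finset.card_range]
    have hrstep : ∀ n, rr (n+1) = rr n + (if τN n = true then 1 else 0) := by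
      intro n
      simp only [hrr]
      rw [Finset.range_add_one, Finset.filter_insert]
      by_cases h : τN n = true
      · rw [if_pos h, if_pos h, Finset.card_insert_of_notMem (by simp)]
      · rw [if_neg h, if_neg h, Nat.add_zero]
    have hrmono : ∀ {m n : ℕ}, m ≤ n → rr m ≤ rr n := by
      intro m n hmn
      rw [hrr]
      exact Finset.card_le_card (Finset.filter_subset_filter _
        (Finset.range_subset_range.mpr hmn))
    have hzmono : ∀ {m n : ℕ}, m ≤ n → zz m ≤ zz n := by
      intro m n hmn
      rw [hzz]
      exact Finset.card_le_card (Finset.filter_subset_filter _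
        (Finset.range_subset_range.mpr hmn))
    have hrle : ∀ n, rr n ≤ n := fun n => le_trans (Nat.le_add_right _ _) (le_of_eq (hrz n))
    have hzle : ∀ n, zz n ≤ n := fun n => le_trans (Nat.le_add_left _ _) (le_of_eq (hrz n))
    have hrstrict : ∀ {m n : ℕ}, m < n → τN m = true → rr m < rr n := by
      intro m n hmn hm
      have h1 : rr (m+1) = rr m + 1 := by rw [hrstep m, if_pos hm]
      have h2 := hrmono (show m+1 ≤ n by omega)
      omega
    have hzstrict : ∀ {m n : ℕ}, m < n → τN m = false → zz m < zz n := by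
      intro m n hmn hm
      have h1 : zz (m+1) = zz m + 1 := by
        have := hrstep m
        have h2 := hrz m
        have h3 := hrz (m+1)
        rw [hm] at this; simp at this; omega
      have h4 := hzmono (show m+1 ≤ n by omega)
      omega
    set Bb : ℕ → ℕ := fun n => if 0 < rr n then uu (rr n - 1) else 0 with hBb
    set idx : ℕ → ℕ := fun n =>
      if τN n = true then (t+1) * uu (rr n) else (t+1) * Bb n + (zz n + 1) with hidx
    have hM₀split : (t+1)*(2*t) + (t+1) = M₀ := by rw [hM₀]; ring
    have hBbbound : ∀ {n : ℕ}, n < t → Bb n ≤ 2*t := by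
      intro n hn
      simp only [hBb]
      by_cases h : 0 < rr n
      · rw [if_pos h]
        exact (huubound (by have := hrle n; omega)).2
      · rw [if_neg h]; omega
    have hidxlt : ∀ {n : ℕ}, n < t → idx n < M₀ := by
      intro n hn
      simp only [hidx]
      by_cases h : τN n = true
      · rw [if_pos h]
        have h1 : uu (rr n) ≤ 2*t := (huubound (by have := hrle n; omega)).2
        have h2 : (t+1) * uu (rr n) ≤ (t+1)*(2*t) := Nat.mul_le_mul_left _ h1
        omega
      · rw [if_neg h]
        have h1 : (t+1) * Bb n ≤ (t+1)*(2*t) := Nat.mul_le_mul_left _ (hBbbound hn)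
        have h2 : zz n + 1 ≤ t := by have := hzle n; omega
        omega
    have hBbmono : ∀ {m n : ℕ}, m ≤ n → n < t → Bb m ≤ Bb n := by
      intro m n hmn hn
      simp only [hBb]
      by_cases h : 0 < rr m
      · have h2 : 0 < rr n := lt_of_lt_of_le h (hrmono hmn)
        rw [if_pos h, if_pos h2]
        exact huumono' (by have := hrmono hmn; omega) (by have := hrle n; omega)
      · rw [if_neg h]; omega
    have hidxmono : ∀ {m n : ℕ}, m < n → n < t → idx m < idx n := by
      intro m n hmn hn
      have hmt : m < t := lt_trans hmn hn
      have hrrnt : rr n < t := lt_of_le_of_lt (hrle n) hn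
      have hrrmt : rr m < t := lt_of_le_of_lt (hrle m) hmt
      simp only [hidx]
      by_cases hm : τN m = true <;> by_cases hn' : τN n = true
      · rw [if_pos hm, if_pos hn']
        have := huumono (hrstrict hmn hm) hrrnt
        have h5 : (t+1) * (uu (rr m) + 1) ≤ (t+1) * uu (rr n) := Nat.mul_le_mul_left _ (by omega)
        have h6 : (t+1) * (uu (rr m)) + (t+1) = (t+1) * (uu (rr m) + 1) := by ring
        omega
      · rw [if_pos hm, if_neg hn']
        have h1 : rr m < rr n := hrstrict hmn hm
        have h2 : 0 < rr n := by omega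
        have h3 : Bb n = uu (rr n - 1) := by simp only [hBb]; rw [if_pos h2]
        have h4 : uu (rr m) ≤ uu (rr n - 1) := huumono' (by omega) (by omega)
        have h5 : (t+1) * uu (rr m) ≤ (t+1) * Bb n := by
          rw [h3]; exact Nat.mul_le_mul_left _ h4
        omega
      · rw [if_neg hm, if_pos hn']
        have hBlt : Bb m < uu (rr n) := by
          simp only [hBb]
          by_cases h : 0 < rr m
          · rw [if_pos h]
            exact huumono (by have := hrmono (le_of_lt hmn); omega) hrrnt
          · rw [if_neg h]
            exact lt_of_lt_of_le Nat.zero_lt_one (huubound hrrnt).1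
        have h1 : zz m + 1 ≤ t := by have := hzle m; omega
        have h2 : (t+1) * Bb m + (t+1) ≤ (t+1) * uu (rr n) := by
          have : (t+1) * (Bb m + 1) ≤ (t+1) * uu (rr n) := Nat.mul_le_mul_left _ (by omega)
          rw [Nat.mul_add, Nat.mul_one] at this
          exact this
        omega
      · rw [if_neg hm, if_neg hn']
        have h1 : Bb m ≤ Bb n := hBbmono (le_of_lt hmn) hn
        have h2 : zz m < zz n := hzstrict hmn (by simpa using hm)
        have h3 : (t+1) * Bb m ≤ (t+1) * Bb n := Nat.mul_le_mul_left _ h1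
        omega
    set hh : Fin t → ℤ := fun j => E (idx ↑j) with hhh
    have hhmono : StrictMono hh := by
      intro i j hij
      exact hEmono (hidxmono hij j.2) (hidxlt j.2)
    have hhmem : ∀ j, hh j ∈ M' := fun j => hEmem (hidxlt j.2)
    refine hcontra hh hhmono hhmem ⟨z, hzX, fun j => ?_⟩
    by_cases hτ : τC j = true
    · rw [if_pos hτ]
      have hτn : τN ↑j = true := by rw [hτNeq]; exact hτ
      have : hh j ∈ Wf := by
        simp only [hhh]
        have hieq : idx ↑j = (t+1) * uu (rr ↑j) := by simp only [hidx]; rw [if_pos hτn]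
        rw [hieq]
        exact huuWf (lt_of_le_of_lt (hrle _) j.2)
      exact hWfC _ this
    · rw [if_neg hτ]
      have hτn : ¬ τN ↑j = true := by rw [hτNeq]; exact hτ
      have hidxj : idx ↑j = (t+1) * Bb ↑j + (zz ↑j + 1) := by
        simp only [hidx]; rw [if_neg hτn]
      have hnotO : hh j ∉ O := by
        intro hmem
        rw [hO, Finset.mem_image] at hmem
        obtain ⟨k, hk, hEk⟩ := hmem
        have h1 := hkM₀ k hk
        have h2 : idx ↑j = (t+1)*k := hEinj (hidxlt j.2) h1 hEk.symm
        rw [hidxj] at h2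
        have h3 : zz ↑j + 1 ≤ t := by have := hzle (↑j : ℕ); have := j.2; omega
        exact neq_mul_add t (Bb ↑j) k (zz ↑j + 1) (by omega) h3 h2
      exact hzNotO _ (hhmem j) hnotO

  rcases le_or_gt t Af.card with hA | hA
  · refine key V tpair.1 Af (Finset.filter_subset _ _) hA
      (fun i hi => (Finset.mem_filter.mp hi).2) ?_
    intro h hmono hmem
    have hfeq : f h = f g₀ :=
      hhom h g₀ hmono hg₀mono (fun j => hM'sub (hmem j)) (fun j => hM'sub (hg₀mem j))
    have hnt : ¬ TIndep X D₀ V h := (notGood h hmono).1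
    have := hwitspec V h hnt
    have hw1 : wit V h = tpair.1 := by
      have : (f h).1 = (f g₀).1 := by rw [hfeq]
      exact this
    rwa [hw1] at this
  · have hB : t ≤ Bf.card := by omega
    refine key V' tpair.2 Bf (Finset.filter_subset _ _) hB (fun i hi => ?_) ?_
    · have hi' := Finset.mem_filter.mp hi
      rcases hzO i hi'.1 with h | h
      · exact absurd h hi'.2
      · exact h
    · intro h hmono hmem
      have hfeq : f h = f g₀ :=
        hhom h g₀ hmono hg₀mono (fun j => hM'sub (hmem j)) (fun j => hM'sub (hg₀mem j))
      have hnt : ¬ TIndep X D₀ V' h := (notGood h hmono).2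
      have := hwitspec V' h hnt
      have hw2 : wit V' h = tpair.2 := by
        have : (f h).2 = (f g₀).2 := by rw [hfeq]
        exact this
      rwa [hw2] at this
end SplitCore

section Iterate
variable {A : Type*} {X D₀ : Set (ℤ → A)}

lemma AL_empty_false (hAL : AL X D₀ ∅) : False := by
  obtain ⟨G, hc, hf⟩ := hAL 1
  obtain ⟨z, hzX, hz⟩ := hf (fun _ => true)
  have hGne : G.Nonempty := Finset.card_pos.mp (by omega)
  have := hz hGne.choose hGne.choose_spec
  simpa using this

lemma AL_split (hne : X.Nonempty) {V V' : Set (ℤ → A)} (hAL : AL X D₀ (V ∪ V')) :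
    AL X D₀ V ∨ AL X D₀ V' := by
  by_cases h : AL X D₀ V
  · exact Or.inl h
  right
  rw [AL] at h; push_neg at h
  obtain ⟨t₁, ht₁⟩ := h
  intro t
  rcases split_t hne hAL (max t t₁) with ⟨T, hc, hfull⟩ | ⟨T, hc, hfull⟩
  · exact absurd hfull (ht₁ T (le_trans (le_max_right _ _) hc))
  · exact ⟨T, le_trans (le_max_left _ _) hc, hfull⟩

lemma AL_union {ι : Type*} (hne : X.Nonempty) (Es : ι → Set (ℤ → A)) :
    ∀ s : Finset ι, AL X D₀ (⋃ i ∈ s, Es i) → ∃ i ∈ s, AL X D₀ (Es i) := by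
  classical
  intro s
  induction s using Finset.induction_on with
  | empty =>
      intro hAL
      simp only [Finset.notMem_empty, Set.iUnion_of_empty, Set.iUnion_empty] at hAL
      exact absurd hAL AL_empty_false
  | @insert a s hns ih =>
      intro hAL
      have heq : (⋃ i ∈ insert a s, Es i) = Es a ∪ ⋃ i ∈ s, Es i :=
        Finset.set_biUnion_insert _ _ _
      rcases AL_split hne (heq ▸ hAL) with h | h
      · exact ⟨a, Finset.mem_insert_self _ _, h⟩
      · obtain ⟨i, his, hi⟩ := ih h
        exact ⟨i, Finset.mem_insert_of_mem his, hi⟩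

lemma refine_AL [Fintype A] [DecidableEq A] (hne : X.Nonempty)
    {Ca Cb : Set (ℤ → A)} (hAL : AL X Ca Cb) (F : Finset ℤ) :
    ∃ v₀ v₁ : (↥F → A),
      AL X (Ca ∩ {y | ∀ f : ↥F, y ↑f = v₀ f}) (Cb ∩ {y | ∀ f : ↥F, y ↑f = v₁ f}) := by
  classical
  have hsub : ∀ (C : Set (ℤ → A)),
      C ⊆ ⋃ v ∈ (Finset.univ : Finset (↥F → A)), (C ∩ {y | ∀ f : ↥F, y ↑f = v f}) := by
    intro C y hy
    refine Set.mem_biUnion (Finset.mem_univ (fun f : ↥F => y ↑f)) ⟨hy, fun f => rfl⟩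
  have h1 : AL X Ca (⋃ v ∈ (Finset.univ : Finset (↥F → A)),
      (Cb ∩ {y | ∀ f : ↥F, y ↑f = v f})) := hAL.mono subset_rfl (hsub Cb)
  obtain ⟨v₁, _, h2⟩ := AL_union hne _ _ h1
  have h3 := h2.swap
  have h4 : AL X (Cb ∩ {y | ∀ f : ↥F, y ↑f = v₁ f})
      (⋃ v ∈ (Finset.univ : Finset (↥F → A)), (Ca ∩ {y | ∀ f : ↥F, y ↑f = v f})) :=
    h3.mono subset_rfl (hsub Ca)
  obtain ⟨v₀, _, h5⟩ := AL_union hne _ _ h4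
  exact ⟨v₀, v₁, h5.swap⟩

end Iterate

section Forward
variable {A : Type*} [Fintype A] [DecidableEq A] [TopologicalSpace A] [DiscreteTopology A]
variable {X : Set (ℤ → A)}

/-- the compactness approximation sets -/
def Kset (X : Set (ℤ → A)) (aa bb : A) (n : ℕ) : Set ((ℤ → A) × (ℤ → A)) :=
  {w | w.1 ∈ X ∧ w.2 ∈ X ∧ w.1 0 = aa ∧ w.2 0 = bb ∧
    ∃ G : Finset ℤ, n ≤ G.card ∧ ∀ σ : ℤ → Bool, ∃ z ∈ X, ∀ i ∈ G,
      ∀ f ∈ Finset.Icc (-(n:ℤ)) n, z (f + i) = (if σ i then w.2 else w.1) f}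

lemma Kset_antitone (aa bb : A) (n : ℕ) : Kset X aa bb (n+1) ⊆ Kset X aa bb n := by
  rintro w ⟨h1, h2, h3, h4, G, hGc, hG⟩
  refine ⟨h1, h2, h3, h4, G, by omega, fun σ => ?_⟩
  obtain ⟨z, hzX, hz⟩ := hG σ
  refine ⟨z, hzX, fun i hi f hf => hz i hi f ?_⟩
  rw [Finset.mem_Icc] at hf ⊢
  constructor <;> [push_cast; push_cast] <;> omega

lemma Kset_closed (hclosed : IsClosed X) (aa bb : A) (n : ℕ) :
    IsClosed (Kset X aa bb n) := by
  classical
  set F' : Finset ℤ := Finset.Icc (-(n:ℤ)) n with hF'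
  set ρ : ((ℤ → A) × (ℤ → A)) → ((↥F' → A) × (↥F' → A)) :=
    fun w => (fun f => w.1 ↑f, fun f => w.2 ↑f) with hρ
  have hρc : Continuous ρ := by
    refine Continuous.prodMk ?_ ?_
    · exact continuous_pi fun f => (continuous_apply (f : ℤ)).comp continuous_fst
    · exact continuous_pi fun f => (continuous_apply (f : ℤ)).comp continuous_snd
  set P : ((ℤ → A) × (ℤ → A)) → Prop := fun w => w.1 0 = aa ∧ w.2 0 = bb ∧
    ∃ G : Finset ℤ, n ≤ G.card ∧ ∀ σ : ℤ → Bool, ∃ z ∈ X, ∀ i ∈ G,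
      ∀ f ∈ F', z (f + i) = (if σ i then w.2 else w.1) f with hP
  have h0F : (0:ℤ) ∈ F' := by
    rw [hF', Finset.mem_Icc]
    constructor <;> [norm_num; norm_num]
  have hPfact : ∀ w w', ρ w = ρ w' → P w' → P w := by
    intro w w' hρeq hPw'
    have h1 : ∀ f : ↥F', w.1 ↑f = w'.1 ↑f := fun f => congrFun (congrArg Prod.fst hρeq) f
    have h2 : ∀ f : ↥F', w.2 ↑f = w'.2 ↑f := fun f => congrFun (congrArg Prod.snd hρeq) f
    obtain ⟨ha', hb', G, hGc, hG⟩ := hPw'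
    refine ⟨by rw [← ha']; exact h1 ⟨0, h0F⟩, by rw [← hb']; exact h2 ⟨0, h0F⟩,
      G, hGc, fun σ => ?_⟩
    obtain ⟨z, hzX, hz⟩ := hG σ
    refine ⟨z, hzX, fun i hi f hf => ?_⟩
    have := hz i hi f hf
    by_cases hσ : σ i = true
    · rw [if_pos hσ] at this ⊢
      rw [this]; exact (h2 ⟨f, hf⟩).symm
    · rw [if_neg hσ] at this ⊢
      rw [this]; exact (h1 ⟨f, hf⟩).symm
  have hKeq : Kset X aa bb n = (X ×ˢ X) ∩ ρ ⁻¹' (ρ '' {w | P w}) := by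
    ext w
    constructor
    · rintro ⟨h1, h2, h3, h4, hG⟩
      exact ⟨⟨h1, h2⟩, Set.mem_image_of_mem ρ ⟨h3, h4, hG⟩⟩
    · rintro ⟨⟨h1, h2⟩, hpre⟩
      obtain ⟨w', hPw', hρeq⟩ := hpre
      obtain ⟨h3, h4, hG⟩ := hPfact w w' hρeq.symm hPw'
      exact ⟨h1, h2, h3, h4, hG⟩
  rw [hKeq]
  exact (hclosed.prod hclosed).inter ((isClosed_discrete _).preimage hρc)

lemma Kset_nonempty (hne : X.Nonempty) (hinv : shiftZ 1 '' X = X) {aa bb : A}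
    (hAL : AL X {y : ℤ → A | y 0 = aa} {y : ℤ → A | y 0 = bb}) (n : ℕ) :
    (Kset X aa bb n).Nonempty := by
  classical
  set F' : Finset ℤ := Finset.Icc (-(n:ℤ)) n with hF'
  obtain ⟨v₀, v₁, hAL'⟩ := refine_AL hne hAL F'
  obtain ⟨G, hGcard, hGfull⟩ := hAL' (max n 1)
  have hGne : G.Nonempty := Finset.card_pos.mp (by omega)
  set i₀ := hGne.choose with hi₀
  have hi₀G : i₀ ∈ G := hGne.choose_spec
  obtain ⟨z₀, hz₀X, hz₀⟩ := hGfull (fun _ => false)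
  obtain ⟨z₁, hz₁X, hz₁⟩ := hGfull (fun _ => true)
  have h₀ := hz₀ i₀ hi₀G
  have h₁ := hz₁ i₀ hi₀G
  simp only [Bool.false_eq_true, if_false, if_true] at h₀ h₁
  set x₀ := shiftZ i₀ z₀ with hx₀
  set x₁ := shiftZ i₀ z₁ with hx₁
  refine ⟨(x₀, x₁), shift_mem hinv hz₀X i₀, shift_mem hinv hz₁X i₀,
    h₀.1, h₁.1, G, le_trans (le_max_left _ _) hGcard, fun σ => ?_⟩
  obtain ⟨z, hzX, hz⟩ := hGfull σ
  refine ⟨z, hzX, fun i hi f hf => ?_⟩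
  have hzi := hz i hi
  by_cases hσ : σ i = true
  · rw [if_pos hσ] at hzi ⊢
    have e1 : z (f + i) = v₁ ⟨f, hf⟩ := hzi.2 ⟨f, hf⟩
    have e2 : x₁ f = v₁ ⟨f, hf⟩ := h₁.2 ⟨f, hf⟩
    show z (f + i) = x₁ f
    rw [e1, e2]
  · rw [if_neg hσ] at hzi ⊢
    have e1 : z (f + i) = v₀ ⟨f, hf⟩ := hzi.2 ⟨f, hf⟩
    have e2 : x₀ f = v₀ ⟨f, hf⟩ := h₀.2 ⟨f, hf⟩
    show z (f + i) = x₀ f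
    rw [e1, e2]

/-- cylinder neighbourhoods form a basis (discrete product) -/
lemma exists_cyl_subset {U : Set (ℤ → A)} {x : ℤ → A} (hU : IsOpen U) (hx : x ∈ U) :
    ∃ m : ℕ, ∀ y : ℤ → A, (∀ i ∈ Finset.Icc (-(m:ℤ)) m, y i = x i) → y ∈ U := by
  have hUx : U ∈ nhds x := hU.mem_nhds hx
  rw [nhds_pi] at hUx
  rw [Filter.mem_pi] at hUx
  obtain ⟨I, hIfin, ts, hts, hsub⟩ := hUx
  set m : ℕ := hIfin.toFinset.sup (fun i => i.natAbs) with hm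
  refine ⟨m, fun y hy => ?_⟩
  apply hsub
  intro i hi
  have hiF : i ∈ hIfin.toFinset := hIfin.mem_toFinset.mpr hi
  have hile : i.natAbs ≤ m := Finset.le_sup (f := fun i : ℤ => i.natAbs) hiF
  have hyi : y i = x i := by
    apply hy
    rw [Finset.mem_Icc]
    omega
  rw [hyi]
  have := hts i
  rwa [nhds_discrete, Filter.mem_pure] at this

lemma dir_forward (hclosed : IsClosed X) (hne : X.Nonempty)
    (hinv : shiftZ 1 '' X = X)
    (hnot : ¬ ∃ t : ℕ, ∀ x ∈ X, ∀ a b : A, a ≠ b → ∀ G : Finset ℤ, G.card = t →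
        ¬ (∀ u : ℤ → A, (∀ g ∈ G, u g = a ∨ u g = b) →
            ∃ i : ℤ, ∀ g ∈ G, x (i + g) = u g)) :
    ¬ IsNullSystem X := by
  classical
  push_neg at hnot
  choose x hxX a b hab G hGc hall using hnot
  set pfun : ℕ → A × A := fun t => (a t, b t) with hpfun
  obtain ⟨c, hcinf⟩ := Finite.exists_infinite_fiber pfun
  have hcinf' : (pfun ⁻¹' {c}).Infinite := Set.infinite_coe_iff.mp hcinf
  set aa := c.1 with haa
  set bb := c.2 with hbb
  have hfib : ∀ t ∈ pfun ⁻¹' {c}, a t = aa ∧ b t = bb := by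
    intro t ht
    have : pfun t = c := ht
    constructor
    · rw [haa, ← this]
    · rw [hbb, ← this]
  have habne : aa ≠ bb := by
    obtain ⟨t, ht⟩ := hcinf'.nonempty
    obtain ⟨h1, h2⟩ := hfib t ht
    rw [← h1, ← h2]; exact hab t
  have hALmain : AL X {y : ℤ → A | y 0 = aa} {y : ℤ → A | y 0 = bb} := by
    intro t
    obtain ⟨t', ht'mem, htt'⟩ := hcinf'.exists_gt t
    obtain ⟨ha', hb'⟩ := hfib t' ht'mem
    refine ⟨G t', by rw [hGc t']; omega, fun σ => ?_⟩
    set u : ℤ → A := fun g => if σ g then bb else aa with hu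
    have huab : ∀ g ∈ G t', u g = a t' ∨ u g = b t' := by
      intro g _
      simp only [hu, ha', hb']
      by_cases hσ : σ g = true
      · right; rw [if_pos hσ]
      · left; rw [if_neg hσ]
    obtain ⟨i, hi⟩ := hall t' u huab
    refine ⟨shiftZ i (x t'), shift_mem hinv (hxX t') i, fun g hg => ?_⟩
    have hval : shiftZ g (shiftZ i (x t')) 0 = u g := by
      rw [shiftZ_apply, shiftZ_apply]
      rw [zero_add, add_comm g i]
      exact hi g hg
    by_cases hσ : σ g = true
    · rw [if_pos hσ]
      show shiftZ g (shiftZ i (x t')) 0 = bb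
      rw [hval]; simp only [hu]; rw [if_pos hσ]
    · rw [if_neg hσ]
      show shiftZ g (shiftZ i (x t')) 0 = aa
      rw [hval]; simp only [hu]; rw [if_neg hσ]
  -- compact intersection
  have hKne : ∀ n, (Kset X aa bb n).Nonempty := Kset_nonempty hne hinv hALmain
  have hKcl : ∀ n, IsClosed (Kset X aa bb n) := Kset_closed hclosed aa bb
  have hKcp : IsCompact (Kset X aa bb 0) := (hKcl 0).isCompact
  obtain ⟨w, hw⟩ := IsCompact.nonempty_iInter_of_sequence_nonempty_isCompact_isClosed
    (Kset X aa bb) (Kset_antitone aa bb) hKne hKcp hKcl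
  have hwmem : ∀ n, w ∈ Kset X aa bb n := fun n => Set.mem_iInter.mp hw n
  obtain ⟨x₀, x₁⟩ := w
  have hx₀X : x₀ ∈ X := (hwmem 0).1
  have hx₁X : x₁ ∈ X := (hwmem 0).2.1
  have hx₀0 : x₀ 0 = aa := (hwmem 0).2.2.1
  have hx₁0 : x₁ 0 = bb := (hwmem 0).2.2.2.1
  intro hnull
  have hINP : IsINPair X x₀ x₁ := by
    intro U₀ U₁ hU₀ hU₁ hx₀U hx₁U t
    obtain ⟨m₀, hm₀⟩ := exists_cyl_subset hU₀ hx₀U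
    obtain ⟨m₁, hm₁⟩ := exists_cyl_subset hU₁ hx₁U
    set N := max (max m₀ m₁) t with hN
    obtain ⟨G', hG'card, hG'⟩ := (hwmem N).2.2.2.2
    refine ⟨G', by omega, ?_⟩
    intro G'' hG''sub σ
    obtain ⟨z, hzX, hz⟩ := hG' σ
    refine ⟨z, hzX, fun i hi => ?_⟩
    have hiG' : i ∈ G' := by exact_mod_cast hG''sub hi
    have hcond := hz i hiG'
    have hIccsub : ∀ m : ℕ, m ≤ N → Finset.Icc (-(m:ℤ)) m ⊆ Finset.Icc (-(N:ℤ)) N := by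
      intro m hm
      apply Finset.Icc_subset_Icc <;> [push_cast; push_cast] <;> omega
    by_cases hσ : σ i = true
    · rw [if_pos hσ]
      refine ⟨hm₁ _ (fun j hj => ?_), shift_mem hinv hzX i⟩
      have := hcond j (hIccsub m₁ (by omega) hj)
      rw [if_pos hσ] at this
      rw [shiftZ_apply]
      exact this
    · rw [if_neg hσ]
      refine ⟨hm₀ _ (fun j hj => ?_), shift_mem hinv hzX i⟩
      have := hcond j (hIccsub m₀ (by omega) hj)
      rw [if_neg hσ] at this
      rw [shiftZ_apply]
      exact this
  have := hnull x₀ hx₀X x₁ hx₁X hINP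
  rw [this] at hx₀0
  rw [hx₀0] at hx₁0
  exact habne hx₁0
end Forward

/-- A minimal subshift `(X, T)` over a finite alphabet `A` is null if
and only if there exists `t ∈ ℕ` such that for every `x ∈ X`, all distinct letters
`a, b ∈ A`, and every `G ⊂ ℤ` of size `t`, the set of patterns `L(x, G)` of `x` read
along `G` does not contain all of `{a,b}^t`. -/
theorem stmt10 {A : Type*} [Fintype A] [DecidableEq A]
    [TopologicalSpace A] [DiscreteTopology A]
    (X : Set (ℤ → A)) (hclosed : IsClosed X) (hne : X.Nonempty)
    (hinv : shiftZ 1 '' X = X)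
    (hmin : ∀ Y : Set (ℤ → A), Y ⊆ X → IsClosed Y → shiftZ 1 '' Y = Y →
      Y = ∅ ∨ Y = X) :
    IsNullSystem X ↔
      ∃ t : ℕ, ∀ x ∈ X, ∀ a b : A, a ≠ b → ∀ G : Finset ℤ, G.card = t →
        ¬ (∀ u : ℤ → A, (∀ g ∈ G, u g = a ∨ u g = b) →
            ∃ i : ℤ, ∀ g ∈ G, x (i + g) = u g) := by
  constructor
  · intro hnull
    by_contra hnot
    exact dir_forward hclosed hne hinv hnot hnull
  · exact dir_back hclosed hinv hmin
end

section
/- Let k ≥ 2 and let x ∈ A^ℤ be a sequence over a finite alphabet A such that for each m ≥ 1 at most one residue 0 ≤ j < k^m satisfies x_n = x_{j + k^m n} for all n ∈ ℤ, and such that the k-kernel of x is finite. If every element z of the k-kernel of x with z ≠ x is null, then x is null. -/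
/-- The `k`-kernel of a bi-infinite sequence `x`: all subsequences
`(x_{i + k^m n})_{n ∈ ℤ}` with `m ∈ ℕ` and `0 ≤ i < k^m`. -/
def kerSet {A : Type*} (k : ℕ) (x : ℤ → A) : Set (ℤ → A) :=
  {y | ∃ m : ℕ, ∃ i : ℕ, i < k ^ m ∧ y = fun n => x ((i : ℤ) + (k : ℤ) ^ m * n)}

/-- A sequence `y` is `t`-null if for all distinct letters `a, b` and every `G ⊆ ℤ` of
size `t`, not every `{a,b}`-valued pattern along `G` is realised in some shift of `y`. -/
def IsTNull {A : Type*} (y : ℤ → A) (t : ℕ) : Prop :=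
  ∀ a b : A, a ≠ b → ∀ G : Finset ℤ, G.card = t →
    ¬ (∀ u : ℤ → A, (∀ g ∈ G, u g = a ∨ u g = b) →
        ∃ i : ℤ, ∀ g ∈ G, y (i + g) = u g)

/-- A sequence is null if it is `t`-null for some `t`. -/
def IsNullSeq {A : Type*} (y : ℤ → A) : Prop := ∃ t : ℕ, IsTNull y t

open Classical

namespace Stmt11Aux

variable {A : Type*}

theorem isTNull_mono {y : ℤ → A} {t t' : ℕ} (h : IsTNull y t) (htt : t ≤ t') :
    IsTNull y t' := by
  intro a b hab G hG
  obtain ⟨G', hG'sub, hG'card⟩ := Finset.exists_subset_card_eq (hG ▸ htt)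
  have h0 := h a b hab G' hG'card
  intro Hbig
  apply h0
  intro u hu
  obtain ⟨i, hi⟩ := Hbig (fun g => if g ∈ G' then u g else a)
    (by intro g hg; by_cases hgg : g ∈ G'
        · simpa only [if_pos hgg] using hu g hgg
        · simp [hgg])
  refine ⟨i, fun g hg => ?_⟩
  have := hi g (hG'sub hg)
  rwa [if_pos hg] at this

theorem blockExists {y : ℤ → A} {T : ℕ} (h : IsTNull y T) (a b : A) (hab : a ≠ b)
    (Q : Finset ℤ) (hQ : T ≤ Q.card) :
    ∃ φ : ℤ → A, (∀ q ∈ Q, φ q = a ∨ φ q = b) ∧ ∀ p : ℤ, ∃ q ∈ Q, y (p + q) ≠ φ q := by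
  obtain ⟨Q', hQ'sub, hQ'card⟩ := Finset.exists_subset_card_eq hQ
  have h0 := h a b hab Q' hQ'card
  push_neg at h0
  obtain ⟨u, huval, hublock⟩ := h0
  refine ⟨fun q => if q ∈ Q' then u q else a, ?_, ?_⟩
  · intro q hq
    by_cases hq' : q ∈ Q'
    · simpa only [if_pos hq'] using huval q hq'
    · simp [hq']
  · intro p
    obtain ⟨q, hq, hne⟩ := hublock p
    exact ⟨q, hQ'sub hq, by simpa [if_pos hq] using hne⟩

theorem blockAll (N' : Finset (ℤ → A)) (T : ℕ) (a b : A) (hab : a ≠ b) :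
    ∀ (V : Finset ℤ), (∀ z ∈ N', IsTNull z T) → N'.card * T ≤ V.card →
    ∃ φ : ℤ → A, (∀ v ∈ V, φ v = a ∨ φ v = b) ∧
      ∀ z ∈ N', ∀ p : ℤ, ∃ v ∈ V, z (p + v) ≠ φ v := by
  induction N' using Finset.induction_on with
  | empty =>
      intro V _ _
      exact ⟨fun _ => a, fun v _ => Or.inl rfl, by simp⟩
  | @insert z N'' hz ih =>
      intro V hnull hV
      rw [Finset.card_insert_of_notMem hz] at hV
      have hmul : N''.card * T + T ≤ V.card := by nlinarith
      have hTV : T ≤ V.card := by omega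
      obtain ⟨Q, hQsub, hQcard⟩ := Finset.exists_subset_card_eq hTV
      obtain ⟨φz, hφzval, hφzblock⟩ :=
        blockExists (hnull z (Finset.mem_insert_self z N'')) a b hab Q (le_of_eq hQcard.symm)
      have hVQ : N''.card * T ≤ (V \ Q).card := by
        rw [Finset.card_sdiff_of_subset hQsub, hQcard]; omega
      obtain ⟨φ', hφ'val, hφ'block⟩ := ih (V \ Q)
        (fun z' hz' => hnull z' (Finset.mem_insert_of_mem hz')) hVQ
      refine ⟨fun v => if v ∈ Q then φz v else φ' v, ?_, ?_⟩
      · intro v hv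
        by_cases hvQ : v ∈ Q
        · simpa only [if_pos hvQ] using hφzval v hvQ
        · simpa only [if_neg hvQ] using hφ'val v (Finset.mem_sdiff.2 ⟨hv, hvQ⟩)
      · intro z' hz' p
        rcases Finset.mem_insert.1 hz' with h | h
        · obtain ⟨q, hq, hne⟩ := hφzblock p
          subst h
          exact ⟨q, hQsub hq, by simpa [if_pos hq] using hne⟩
        · obtain ⟨v, hv, hne⟩ := hφ'block z' h p
          have hvQ : v ∉ Q := (Finset.mem_sdiff.1 hv).2
          exact ⟨v, (Finset.sdiff_subset) hv, by simpa [if_neg hvQ] using hne⟩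


theorem gadget (x : ℤ → A) (N' : Finset (ℤ → A)) (T : ℕ) (a b : A) (hab : a ≠ b)
    (hnull : ∀ z ∈ N', IsTNull z T)
    (S : Finset ℤ) (hS : N'.card * (T - 1) < S.card)
    (P : ℤ → Prop) (seq : ℤ → ℤ → A) (pos : ℤ → ℤ) (time : ℤ → ℤ)
    (hmem : ∀ g ∈ S, seq g ∈ N')
    (heval : ∀ i, P i → ∀ g ∈ S, x (i + g) = seq g (time i + pos g)) :
    ∃ u : ℤ → A, (∀ g ∈ S, u g = a ∨ u g = b) ∧
      ∀ i, P i → ∃ g ∈ S, x (i + g) ≠ u g := by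
  by_cases hcol : ∃ g ∈ S, ∃ g' ∈ S, g ≠ g' ∧ seq g = seq g' ∧ pos g = pos g'
  · obtain ⟨g, hg, g', hg', hne, hseq, hpos⟩ := hcol
    refine ⟨fun h => if h = g' then b else a, ?_, ?_⟩
    · intro h _
      by_cases hh : h = g'
      · simp [hh]
      · simp [hh]
    · intro i hPi
      by_contra hcon
      push_neg at hcon
      have e1 : x (i + g) = a := by simpa [hne] using hcon g hg
      have e2 : x (i + g') = b := by simpa using hcon g' hg'
      have e3 : x (i + g) = x (i + g') := by
        rw [heval i hPi g hg, heval i hPi g' hg', hseq, hpos]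
      exact hab (e1 ▸ e2 ▸ e3)
  · push_neg at hcol
    -- pigeonhole: some fiber of `seq` on S has at least T elements
    have hsum : S.card = ∑ z ∈ N', (S.filter fun g => seq g = z).card :=
      Finset.card_eq_sum_card_fiberwise hmem
    have hfib : ∃ z ∈ N', T ≤ (S.filter fun g => seq g = z).card := by
      by_contra hno
      push_neg at hno
      have : S.card ≤ N'.card * (T - 1) := by
        rw [hsum]
        calc ∑ z ∈ N', (S.filter fun g => seq g = z).card
            ≤ ∑ _z ∈ N', (T - 1) := by
              refine Finset.sum_le_sum ?_
              intro z hz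
              have := hno z hz
              omega
          _ = N'.card * (T - 1) := by rw [Finset.sum_const, smul_eq_mul]
      omega
    obtain ⟨z, hzN, hzcard⟩ := hfib
    set F := S.filter fun g => seq g = z with hF
    have hFsub : F ⊆ S := Finset.filter_subset _ _
    have hposinj : Set.InjOn pos F := by
      intro g hg g' hg' hpe
      by_contra hne
      have h1 := (Finset.mem_filter.1 hg).2
      have h2 := (Finset.mem_filter.1 hg').2
      exact hcol g (hFsub hg) g' (hFsub hg') hne (h1.trans h2.symm) hpe
    have hQcard : T ≤ (F.image pos).card := by
      rwa [Finset.card_image_of_injOn hposinj]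
    obtain ⟨φ, hφval, hφblock⟩ := blockExists (hnull z hzN) a b hab (F.image pos) hQcard
    refine ⟨fun g => if g ∈ F then φ (pos g) else a, ?_, ?_⟩
    · intro g _
      by_cases hgF : g ∈ F
      · simpa only [if_pos hgF] using hφval (pos g) (Finset.mem_image_of_mem pos hgF)
      · simp [hgF]
    · intro i hPi
      obtain ⟨q, hq, hqne⟩ := hφblock (time i)
      obtain ⟨g₀, hg₀F, hg₀pos⟩ := Finset.mem_image.1 hq
      refine ⟨g₀, hFsub hg₀F, ?_⟩
      have hseqg₀ : seq g₀ = z := (Finset.mem_filter.1 hg₀F).2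
      have : x (i + g₀) = z (time i + q) := by
        rw [heval i hPi g₀ (hFsub hg₀F), hseqg₀, hg₀pos]
      rw [this]
      simpa only [if_pos hg₀F, hg₀pos] using hqne

theorem memK {k : ℕ} (x : ℤ → A) (m : ℕ) (j : ℤ) (h0 : 0 ≤ j) (hlt : j < (k : ℤ) ^ m) :
    (fun t => x (j + (k : ℤ) ^ m * t)) ∈ kerSet k x := by
  refine ⟨m, j.toNat, ?_, ?_⟩
  · have : (j.toNat : ℤ) < ((k ^ m : ℕ) : ℤ) := by
      push_cast
      rwa [Int.toNat_of_nonneg h0]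
    exact_mod_cast this
  · funext n
    have : ((j.toNat : ℤ)) = j := Int.toNat_of_nonneg h0
    rw [this]

theorem multiGadget (x : ℤ → A) (k : ℕ) (N' : Finset (ℤ → A)) (T : ℕ) (a b : A)
    (hab : a ≠ b) (hnull : ∀ z ∈ N', IsTNull z T) (F : Finset ℤ) :
    ∀ (pool : Finset ℤ),
    F.card * (N'.card * (T - 1) + 1) + (N'.card * T) ≤ pool.card →
    (∀ c ∈ F, ∃ (Bp : ℤ → Prop) (seq : ℤ → ℤ → A) (pos : ℤ → ℤ) (time : ℤ → ℤ),
      (pool.filter Bp).card < N'.card * T ∧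
      ∀ g, ¬ Bp g → seq g ∈ N' ∧
        ∀ i : ℤ, i % (k : ℤ) = c → x (i + g) = seq g (time i + pos g)) →
    ∃ u : ℤ → A, (∀ g ∈ pool, u g = a ∨ u g = b) ∧
      ∀ i : ℤ, i % (k : ℤ) ∈ F → ∃ g ∈ pool, x (i + g) ≠ u g := by
  induction F using Finset.induction_on with
  | empty =>
      intro pool _ _
      exact ⟨fun _ => a, fun g _ => Or.inl rfl, by simp⟩
  | @insert c F' hcF ih =>
      intro pool hsize hdata
      obtain ⟨Bp, seq, pos, time, hBcard, hgood⟩ := hdata c (Finset.mem_insert_self c F')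
      rw [Finset.card_insert_of_notMem hcF] at hsize
      set θ' := N'.card * (T - 1) + 1 with hθ'
      set θ := N'.card * T with hθ
      have hS0 : θ' ≤ (pool.filter fun g => ¬ Bp g).card := by
        have hsplit := Finset.card_filter_add_card_filter_not (s := pool) (p := Bp)
        have : pool.card ≤ (pool.filter Bp).card + (pool.filter fun g => ¬ Bp g).card := by
          omega
        have h2 : (F'.card + 1) * θ' + θ ≤ pool.card := hsize
        have hexp : (F'.card + 1) * θ' = F'.card * θ' + θ' := by ring
        omega
      obtain ⟨Sc, hScsub, hSccard⟩ :=
        Finset.exists_subset_card_eq hS0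
      have hScpool : Sc ⊆ pool := hScsub.trans (Finset.filter_subset _ _)
      obtain ⟨uc, hucval, hucblock⟩ := gadget x N' T a b hab hnull Sc
        (by rw [hSccard]; omega)
        (fun i => i % (k : ℤ) = c) seq pos time
        (fun g hg => (hgood g (Finset.mem_filter.1 (hScsub hg)).2).1)
        (fun i hi g hg => (hgood g (Finset.mem_filter.1 (hScsub hg)).2).2 i hi)
      have hpool' : F'.card * θ' + θ ≤ (pool \ Sc).card := by
        rw [Finset.card_sdiff_of_subset hScpool, hSccard]
        have h2 : (F'.card + 1) * θ' + θ ≤ pool.card := hsize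
        have hexp : (F'.card + 1) * θ' = F'.card * θ' + θ' := by ring
        omega
      obtain ⟨u', hu'val, hu'block⟩ := ih (pool \ Sc) hpool'
        (by
          intro c' hc'
          obtain ⟨Bp', seq', pos', time', hB', hgood'⟩ :=
            hdata c' (Finset.mem_insert_of_mem hc')
          refine ⟨Bp', seq', pos', time', ?_, hgood'⟩
          calc ((pool \ Sc).filter Bp').card
              ≤ (pool.filter Bp').card :=
                Finset.card_le_card (Finset.filter_subset_filter _ Finset.sdiff_subset)
            _ < θ := hB')
      refine ⟨fun g => if g ∈ Sc then uc g else u' g, ?_, ?_⟩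
      · intro g hg
        by_cases hgSc : g ∈ Sc
        · simpa only [if_pos hgSc] using hucval g hgSc
        · simpa only [if_neg hgSc] using hu'val g (Finset.mem_sdiff.2 ⟨hg, hgSc⟩)
      · intro i hi
        rcases Finset.mem_insert.1 hi with h | h
        · obtain ⟨g, hgSc, hne⟩ := hucblock i h
          exact ⟨g, hScpool hgSc, by simpa only [if_pos hgSc] using hne⟩
        · obtain ⟨g, hg, hne⟩ := hu'block i h
          have hgSc : g ∉ Sc := (Finset.mem_sdiff.1 hg).2
          exact ⟨g, (Finset.mem_sdiff.1 hg).1, by simpa only [if_neg hgSc] using hne⟩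

theorem shattered (x : ℤ → A) (k : ℕ) (hk : 2 ≤ k) (N' : Finset (ℤ → A)) (T : ℕ)
    (a b : A) (hab : a ≠ b) (hnull : ∀ z ∈ N', IsTNull z T)
    (hK2N : ∀ z, z ∈ kerSet k x → z ≠ x → z ∈ N')
    (jstar : ℤ) (hj0 : 0 ≤ jstar) (hjk : jstar < (k : ℤ))
    (huq : ∀ j' : ℤ, 0 ≤ j' → j' < (k : ℤ) → (∀ n : ℤ, x n = x (j' + (k : ℤ) * n)) → j' = jstar)
    (V : Finset ℤ)
    (hsize : k * (N'.card * (T - 1) + 1) + 2 * (N'.card * T) ≤ V.card)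
    (hshat : ∀ r : ℤ, (V.filter fun g => g % (k : ℤ) = r).card < N'.card * T) :
    ∃ w : ℤ → A, (∀ v ∈ V, w v = a ∨ w v = b) ∧
      (∀ p : ℤ, ∃ v ∈ V, x (p + v) ≠ w v) ∧
      (∀ z ∈ N', ∀ p : ℤ, ∃ v ∈ V, z (p + v) ≠ w v) := by
  have hkpos : (0 : ℤ) < (k : ℤ) := by exact_mod_cast (by omega : 0 < k)
  have hkne : (k : ℤ) ≠ 0 := ne_of_gt hkpos
  set θ := N'.card * T with hθ
  set θ' := N'.card * (T - 1) + 1 with hθ'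
  have hθV : θ ≤ V.card := by omega
  obtain ⟨Sstar, hSsub, hScard⟩ := Finset.exists_subset_card_eq hθV
  obtain ⟨wstar, hwsval, hwsblock⟩ := blockAll N' T a b hab Sstar hnull (le_of_eq hScard.symm)
  set pool := V \ Sstar with hpool
  have hpoolcard : k * θ' + θ ≤ pool.card := by
    rw [hpool, Finset.card_sdiff_of_subset hSsub, hScard]; omega
  set F := (Finset.range k).image (fun n : ℕ => (n : ℤ)) with hF
  have hFcard : F.card = k := by
    rw [hF, Finset.card_image_of_injective _ (fun m n h => by exact_mod_cast h),
      Finset.card_range]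
  obtain ⟨u, huval, hublock⟩ := multiGadget x k N' T a b hab hnull F pool
    (by rw [hFcard]; exact hpoolcard)
    (by
      intro c _
      refine ⟨fun g => g % (k : ℤ) = (jstar - c) % (k : ℤ),
        fun g => fun t => x ((c + g) % (k : ℤ) + (k : ℤ) * t),
        fun g => (c + g) / (k : ℤ), fun i => i / (k : ℤ), ?_, ?_⟩
      · refine lt_of_le_of_lt (Finset.card_le_card ?_) (hshat ((jstar - c) % (k : ℤ)))
        intro g hg
        simp only [hpool, Finset.mem_filter, Finset.mem_sdiff] at hg ⊢
        exact ⟨hg.1.1, hg.2⟩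
      · intro g hBp
        constructor
        · -- seq g ∈ N'
          have h0 : 0 ≤ (c + g) % (k : ℤ) := Int.emod_nonneg _ hkne
          have h1 : (c + g) % (k : ℤ) < (k : ℤ) := Int.emod_lt_of_pos _ hkpos
          have hker : (fun t => x ((c + g) % (k : ℤ) + (k : ℤ) * t)) ∈ kerSet k x := by
            have := memK x (k := k) 1 ((c + g) % (k : ℤ)) h0 (by rwa [pow_one])
            simpa [pow_one] using this
          refine hK2N _ hker ?_
          intro heq
          have hxz : ∀ n : ℤ, x n = x ((c + g) % (k : ℤ) + (k : ℤ) * n) :=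
            fun n => (congrFun heq n).symm
          have hjj : (c + g) % (k : ℤ) = jstar := huq _ h0 h1 hxz
          apply hBp
          have e2 : (k : ℤ) * ((c + g) / (k : ℤ)) + (c + g) % (k : ℤ) = c + g :=
            Int.mul_ediv_add_emod _ _
          have hd : (k : ℤ) ∣ (g - (jstar - c)) :=
            ⟨(c + g) / (k : ℤ), by linarith⟩
          rw [Int.emod_eq_emod_iff_emod_sub_eq_zero]
          exact Int.emod_eq_zero_of_dvd hd
        · intro i hi
          have e1 : (k : ℤ) * (i / (k : ℤ)) + i % (k : ℤ) = i := Int.mul_ediv_add_emod _ _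
          have e2 : (k : ℤ) * ((c + g) / (k : ℤ)) + (c + g) % (k : ℤ) = c + g :=
            Int.mul_ediv_add_emod _ _
          have key : i + g = (c + g) % (k : ℤ)
              + (k : ℤ) * (i / (k : ℤ) + (c + g) / (k : ℤ)) := by
            linear_combination hi - e1 - e2
          exact congrArg x key)
  refine ⟨fun v => if v ∈ Sstar then wstar v else u v, ?_, ?_, ?_⟩
  · intro v hv
    by_cases hvS : v ∈ Sstar
    · simpa only [if_pos hvS] using hwsval v hvS
    · simpa only [if_neg hvS] using huval v (Finset.mem_sdiff.2 ⟨hv, hvS⟩)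
  · intro p
    have hcov : p % (k : ℤ) ∈ F := by
      have h0 : 0 ≤ p % (k : ℤ) := Int.emod_nonneg _ hkne
      have h1 : p % (k : ℤ) < (k : ℤ) := Int.emod_lt_of_pos _ hkpos
      refine Finset.mem_image.2 ⟨(p % (k : ℤ)).toNat, Finset.mem_range.2 ?_, ?_⟩
      · omega
      · rw [Int.toNat_of_nonneg h0]
    obtain ⟨g, hgpool, hne⟩ := hublock p hcov
    have hgS : g ∉ Sstar := (Finset.mem_sdiff.1 hgpool).2
    exact ⟨g, (Finset.mem_sdiff.1 hgpool).1, by simpa only [if_neg hgS] using hne⟩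
  · intro z hz p
    obtain ⟨s, hs, hne⟩ := hwsblock z hz p
    exact ⟨s, hSsub hs, by simpa only [if_pos hs] using hne⟩

/-- Blocking positions `i` that are misaligned at scale `M`, via a pattern `w` on the
contraction of the class of `ρ` that is unrealized in every null kernel element. -/
theorem misBlock (x : ℤ → A) (k : ℕ) (hk : 2 ≤ k) (N' : Finset (ℤ → A))
    (hK2N : ∀ z, z ∈ kerSet k x → z ≠ x → z ∈ N')
    (M : ℕ) (J ρ : ℤ)
    (huq : ∀ j' : ℤ, 0 ≤ j' → j' < (k : ℤ) ^ M →
      (∀ n : ℤ, x n = x (j' + (k : ℤ) ^ M * n)) → j' = J)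
    (G : Finset ℤ) (w : ℤ → A)
    (hwz : ∀ z ∈ N', ∀ p : ℤ, ∃ v ∈ (G.filter fun g => (k : ℤ) ^ M ∣ (g - ρ)).image
      (fun g => (g - ρ) / (k : ℤ) ^ M), z (p + v) ≠ w v)
    (i : ℤ) (hal : ¬ (k : ℤ) ^ M ∣ (i + ρ - J)) :
    ∃ g₀ ∈ G, ((k : ℤ) ^ M ∣ (g₀ - ρ)) ∧ x (i + g₀) ≠ w ((g₀ - ρ) / (k : ℤ) ^ M) := by
  have hkpos : (0 : ℤ) < (k : ℤ) ^ M := by positivity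
  have hkne : ((k : ℤ) ^ M) ≠ 0 := ne_of_gt hkpos
  set km := (k : ℤ) ^ M with hkm
  set j' := (i + ρ) % km with hj'
  have h0 : 0 ≤ j' := Int.emod_nonneg _ hkne
  have h1 : j' < km := Int.emod_lt_of_pos _ hkpos
  have e1 : km * ((i + ρ) / km) + (i + ρ) % km = i + ρ := Int.mul_ediv_add_emod _ _
  have hzK : (fun t => x (j' + km * t)) ∈ kerSet k x := memK x M j' h0 h1
  have hzne : (fun t => x (j' + km * t)) ≠ x := by
    intro heq
    have hxz : ∀ n : ℤ, x n = x (j' + km * n) := fun n => (congrFun heq n).symm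
    have hjJ : j' = J := huq j' h0 h1 hxz
    apply hal
    refine ⟨(i + ρ) / km, ?_⟩
    rw [← hjJ]
    linarith
  have hzN : (fun t => x (j' + km * t)) ∈ N' := hK2N _ hzK hzne
  obtain ⟨v, hvV, hne⟩ := hwz _ hzN ((i + ρ) / km)
  obtain ⟨g₀, hg₀C, hg₀v⟩ := Finset.mem_image.1 hvV
  have hg₀G : g₀ ∈ G := (Finset.mem_filter.1 hg₀C).1
  have hg₀d : km ∣ (g₀ - ρ) := (Finset.mem_filter.1 hg₀C).2
  refine ⟨g₀, hg₀G, hg₀d, ?_⟩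
  have hv' : (g₀ - ρ) / km * km = g₀ - ρ := Int.ediv_mul_cancel hg₀d
  have key : i + g₀ = j' + km * ((i + ρ) / km + (g₀ - ρ) / km) := by
    linear_combination - e1 - hv'
  rw [hg₀v]
  calc x (i + g₀) = x (j' + km * ((i + ρ) / km + v)) := by rw [key, hg₀v]
    _ ≠ w v := hne

theorem claimA (x : ℤ → A) (k : ℕ) (hk : 2 ≤ k) (N' : Finset (ℤ → A)) (T : ℕ)
    (a b : A) (hab : a ≠ b) (hnull : ∀ z ∈ N', IsTNull z T)
    (hK2N : ∀ z, z ∈ kerSet k x → z ≠ x → z ∈ N')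
    (M : ℕ) (J ρ : ℤ)
    (huq : ∀ j' : ℤ, 0 ≤ j' → j' < (k : ℤ) ^ M →
      (∀ n : ℤ, x n = x (j' + (k : ℤ) ^ M * n)) → j' = J)
    (G : Finset ℤ)
    (hC : N'.card * T ≤ (G.filter fun g => (k : ℤ) ^ M ∣ (g - ρ)).card)
    (hcomp : N'.card * (T - 1) + 1 ≤ (G \ G.filter fun g => (k : ℤ) ^ M ∣ (g - ρ)).card) :
    ∃ u : ℤ → A, (∀ g ∈ G, u g = a ∨ u g = b) ∧ ∀ i : ℤ, ∃ g ∈ G, x (i + g) ≠ u g := by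
  have hkpos : (0 : ℤ) < (k : ℤ) ^ M := by positivity
  have hkne : ((k : ℤ) ^ M) ≠ 0 := ne_of_gt hkpos
  set km := (k : ℤ) ^ M with hkm
  set C := G.filter fun g => km ∣ (g - ρ) with hCdef
  set V := C.image (fun g => (g - ρ) / km) with hVdef
  have hdminj : Set.InjOn (fun g => (g - ρ) / km) C := by
    intro g hg g' hg' he
    have d1 : km ∣ (g - ρ) := (Finset.mem_filter.1 hg).2
    have d2 : km ∣ (g' - ρ) := (Finset.mem_filter.1 hg').2
    have e1 : (g - ρ) / km * km = g - ρ := Int.ediv_mul_cancel d1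
    have e2 : (g' - ρ) / km * km = g' - ρ := Int.ediv_mul_cancel d2
    simp only at he
    nlinarith [e1, e2, he]
  have hVcard : N'.card * T ≤ V.card := by
    rw [hVdef, Finset.card_image_of_injOn hdminj]; exact hC
  obtain ⟨w, hwval, hwblock⟩ := blockAll N' T a b hab V hnull hVcard
  -- gadget on the complement, for aligned i
  obtain ⟨ug, hugval, hugblock⟩ := gadget x N' T a b hab hnull (G \ C)
    (by omega)
    (fun i => km ∣ (i + ρ - J))
    (fun g => fun t => x ((J - ρ + g) % km + km * t))
    (fun g => (J - ρ + g) / km)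
    (fun i => (i + ρ - J) / km)
    (by
      intro g hg
      have hgG : g ∈ G := (Finset.mem_sdiff.1 hg).1
      have hgnd : ¬ km ∣ (g - ρ) := by
        have := (Finset.mem_sdiff.1 hg).2
        intro hd
        exact this (Finset.mem_filter.2 ⟨hgG, hd⟩)
      have h0 : 0 ≤ (J - ρ + g) % km := Int.emod_nonneg _ hkne
      have h1 : (J - ρ + g) % km < km := Int.emod_lt_of_pos _ hkpos
      refine hK2N _ (memK x M _ h0 h1) ?_
      intro heq
      have hxz : ∀ n : ℤ, x n = x ((J - ρ + g) % km + km * n) :=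
        fun n => (congrFun heq n).symm
      have hjJ : (J - ρ + g) % km = J := huq _ h0 h1 hxz
      apply hgnd
      have e2 : km * ((J - ρ + g) / km) + (J - ρ + g) % km = J - ρ + g :=
        Int.mul_ediv_add_emod _ _
      exact ⟨(J - ρ + g) / km, by linarith⟩)
    (by
      intro i hPi g hg
      obtain ⟨S₀, hS₀⟩ := hPi
      have e2 : km * ((J - ρ + g) / km) + (J - ρ + g) % km = J - ρ + g :=
        Int.mul_ediv_add_emod _ _
      have htime : (i + ρ - J) / km = S₀ := by
        rw [hS₀]; exact Int.mul_ediv_cancel_left _ hkne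
      have key : i + g = (J - ρ + g) % km + km * ((i + ρ - J) / km + (J - ρ + g) / km) := by
        rw [htime]
        linear_combination hS₀ - e2
      exact congrArg x key)
  refine ⟨fun g => if km ∣ (g - ρ) then w ((g - ρ) / km) else ug g, ?_, ?_⟩
  · intro g hg
    by_cases hd : km ∣ (g - ρ)
    · have : (g - ρ) / km ∈ V :=
        Finset.mem_image_of_mem _ (Finset.mem_filter.2 ⟨hg, hd⟩)
      simpa only [if_pos hd] using hwval _ this
    · have : g ∈ G \ C := Finset.mem_sdiff.2 ⟨hg, fun hc => hd (Finset.mem_filter.1 hc).2⟩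
      simpa only [if_neg hd] using hugval g this
  · intro i
    by_cases hal : km ∣ (i + ρ - J)
    · obtain ⟨g, hgS, hne⟩ := hugblock i hal
      have hgnd : ¬ km ∣ (g - ρ) := by
        have := (Finset.mem_sdiff.1 hgS).2
        intro hd
        exact this (Finset.mem_filter.2 ⟨(Finset.mem_sdiff.1 hgS).1, hd⟩)
      exact ⟨g, (Finset.mem_sdiff.1 hgS).1, by simpa only [if_neg hgnd] using hne⟩
    · obtain ⟨g₀, hg₀G, hg₀d, hne⟩ := misBlock x k hk N' hK2N M J ρ huq G w hwblock i hal
      exact ⟨g₀, hg₀G, by simpa only [hkm, if_pos hg₀d] using hne⟩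

theorem claimB (x : ℤ → A) (k : ℕ) (hk : 2 ≤ k) (N' : Finset (ℤ → A))
    (a b : A)
    (hK2N : ∀ z, z ∈ kerSet k x → z ≠ x → z ∈ N')
    (M : ℕ) (J ρ : ℤ)
    (hss : ∀ n : ℤ, x (J + (k : ℤ) ^ M * n) = x n)
    (huq : ∀ j' : ℤ, 0 ≤ j' → j' < (k : ℤ) ^ M →
      (∀ n : ℤ, x n = x (j' + (k : ℤ) ^ M * n)) → j' = J)
    (G : Finset ℤ) (w : ℤ → A)
    (hwval : ∀ v ∈ (G.filter fun g => (k : ℤ) ^ M ∣ (g - ρ)).image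
      (fun g => (g - ρ) / (k : ℤ) ^ M), w v = a ∨ w v = b)
    (hwx : ∀ p : ℤ, ∃ v ∈ (G.filter fun g => (k : ℤ) ^ M ∣ (g - ρ)).image
      (fun g => (g - ρ) / (k : ℤ) ^ M), x (p + v) ≠ w v)
    (hwz : ∀ z ∈ N', ∀ p : ℤ, ∃ v ∈ (G.filter fun g => (k : ℤ) ^ M ∣ (g - ρ)).image
      (fun g => (g - ρ) / (k : ℤ) ^ M), z (p + v) ≠ w v) :
    ∃ u : ℤ → A, (∀ g ∈ G, u g = a ∨ u g = b) ∧ ∀ i : ℤ, ∃ g ∈ G, x (i + g) ≠ u g := by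
  have hkpos : (0 : ℤ) < (k : ℤ) ^ M := by positivity
  set km := (k : ℤ) ^ M with hkm
  refine ⟨fun g => if km ∣ (g - ρ) then w ((g - ρ) / km) else a, ?_, ?_⟩
  · intro g hg
    by_cases hd : km ∣ (g - ρ)
    · have : (g - ρ) / km ∈ (G.filter fun g => km ∣ (g - ρ)).image (fun g => (g - ρ) / km) :=
        Finset.mem_image_of_mem _ (Finset.mem_filter.2 ⟨hg, hd⟩)
      simpa only [if_pos hd] using hwval _ this
    · simp [hd]
  · intro i
    by_cases hal : km ∣ (i + ρ - J)
    · obtain ⟨S₀, hS₀⟩ := hal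
      obtain ⟨v, hvV, hne⟩ := hwx S₀
      obtain ⟨g₀, hg₀C, hg₀v⟩ := Finset.mem_image.1 hvV
      have hg₀G : g₀ ∈ G := (Finset.mem_filter.1 hg₀C).1
      have hg₀d : km ∣ (g₀ - ρ) := (Finset.mem_filter.1 hg₀C).2
      refine ⟨g₀, hg₀G, ?_⟩
      have hv' : (g₀ - ρ) / km * km = g₀ - ρ := Int.ediv_mul_cancel hg₀d
      have key : i + g₀ = J + km * (S₀ + (g₀ - ρ) / km) := by
        linear_combination hS₀ - hv'
      have : x (i + g₀) = x (S₀ + (g₀ - ρ) / km) := by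
        rw [key]; exact hss _
      simp only [if_pos hg₀d]
      rw [this, hg₀v]
      exact hne
    · obtain ⟨g₀, hg₀G, hg₀d, hne⟩ := misBlock x k hk N' hK2N M J ρ huq G w hwz i hal
      exact ⟨g₀, hg₀G, by simpa only [hkm, if_pos hg₀d] using hne⟩

theorem caseII (x : ℤ → A) (k : ℕ) (hk : 2 ≤ k) (N' : Finset (ℤ → A)) (T : ℕ)
    (a b : A) (hab : a ≠ b) (hnull : ∀ z ∈ N', IsTNull z T)
    (hK2N : ∀ z, z ∈ kerSet k x → z ≠ x → z ∈ N')
    (hns : ∀ j : ℤ, 0 ≤ j → j < (k : ℤ) → (fun t => x (j + (k : ℤ) * t)) ≠ x)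
    (hθ1 : 1 ≤ N'.card * T)
    (G : Finset ℤ) (hsize : k * (N'.card * T) ≤ G.card) :
    ∃ u : ℤ → A, (∀ g ∈ G, u g = a ∨ u g = b) ∧ ∀ i : ℤ, ∃ g ∈ G, x (i + g) ≠ u g := by
  have hkpos : (0 : ℤ) < (k : ℤ) := by exact_mod_cast (by omega : 0 < k)
  have hkne : (k : ℤ) ≠ 0 := ne_of_gt hkpos
  set θ := N'.card * T with hθ
  set F := (Finset.range k).image (fun n : ℕ => (n : ℤ)) with hF
  have hFcard : F.card = k := by
    rw [hF, Finset.card_image_of_injective _ (fun m n h => by exact_mod_cast h),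
      Finset.card_range]
  have hmap : ∀ g ∈ G, g % (k : ℤ) ∈ F := by
    intro g _
    have h0 : 0 ≤ g % (k : ℤ) := Int.emod_nonneg _ hkne
    have h1 : g % (k : ℤ) < (k : ℤ) := Int.emod_lt_of_pos _ hkpos
    refine Finset.mem_image.2 ⟨(g % (k : ℤ)).toNat, Finset.mem_range.2 (by omega), ?_⟩
    rw [Int.toNat_of_nonneg h0]
  have hsum : G.card = ∑ r ∈ F, (G.filter fun g => g % (k : ℤ) = r).card :=
    Finset.card_eq_sum_card_fiberwise hmap
  have hfib : ∃ r ∈ F, θ ≤ (G.filter fun g => g % (k : ℤ) = r).card := by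
    by_contra hno
    push_neg at hno
    have : G.card ≤ k * (θ - 1) := by
      rw [hsum]
      calc ∑ r ∈ F, (G.filter fun g => g % (k : ℤ) = r).card
          ≤ ∑ _r ∈ F, (θ - 1) := by
            refine Finset.sum_le_sum ?_
            intro r hr
            have := hno r hr
            omega
        _ = k * (θ - 1) := by rw [Finset.sum_const, smul_eq_mul, hFcard]
    have hs : θ - 1 + 1 = θ := by omega
    have h3 : k * (θ - 1) + k = k * θ := by
      calc k * (θ - 1) + k = k * ((θ - 1) + 1) := by ring
        _ = k * θ := by rw [hs]
    linarith [this, hsize, h3, show 2 ≤ k from hk]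
  obtain ⟨r, _, hrcard⟩ := hfib
  set C := G.filter fun g => g % (k : ℤ) = r with hCdef
  have hCdvd : ∀ g ∈ C, (k : ℤ) ∣ (g - r) := by
    intro g hg
    have hgr : g % (k : ℤ) = r := (Finset.mem_filter.1 hg).2
    have e1 : (k : ℤ) * (g / (k : ℤ)) + g % (k : ℤ) = g := Int.mul_ediv_add_emod _ _
    exact ⟨g / (k : ℤ), by linarith⟩
  have hdminj : Set.InjOn (fun g => (g - r) / (k : ℤ)) C := by
    intro g hg g' hg' he
    have e1 : (g - r) / (k : ℤ) * (k : ℤ) = g - r := Int.ediv_mul_cancel (hCdvd g hg)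
    have e2 : (g' - r) / (k : ℤ) * (k : ℤ) = g' - r := Int.ediv_mul_cancel (hCdvd g' hg')
    simp only at he
    nlinarith [e1, e2, he]
  set V := C.image (fun g => (g - r) / (k : ℤ)) with hVdef
  have hVcard : θ ≤ V.card := by
    rw [hVdef, Finset.card_image_of_injOn hdminj]; exact hrcard
  obtain ⟨w, hwval, hwblock⟩ := blockAll N' T a b hab V hnull hVcard
  refine ⟨fun g => if g % (k : ℤ) = r then w ((g - r) / (k : ℤ)) else a, ?_, ?_⟩
  · intro g hg
    by_cases hgr : g % (k : ℤ) = r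
    · have : (g - r) / (k : ℤ) ∈ V :=
        Finset.mem_image_of_mem _ (Finset.mem_filter.2 ⟨hg, hgr⟩)
      simpa only [if_pos hgr] using hwval _ this
    · simp [hgr]
  · intro i
    set j' := (i + r) % (k : ℤ) with hj'
    have h0 : 0 ≤ j' := Int.emod_nonneg _ hkne
    have h1 : j' < (k : ℤ) := Int.emod_lt_of_pos _ hkpos
    have hzK : (fun t => x (j' + (k : ℤ) * t)) ∈ kerSet k x := by
      have := memK x (k := k) 1 j' h0 (by rwa [pow_one])
      simpa [pow_one] using this
    have hzN : (fun t => x (j' + (k : ℤ) * t)) ∈ N' := hK2N _ hzK (hns j' h0 h1)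
    obtain ⟨v, hvV, hne⟩ := hwblock _ hzN ((i + r) / (k : ℤ))
    obtain ⟨g₀, hg₀C, hg₀v⟩ := Finset.mem_image.1 hvV
    have hg₀G : g₀ ∈ G := (Finset.mem_filter.1 hg₀C).1
    have hg₀r : g₀ % (k : ℤ) = r := (Finset.mem_filter.1 hg₀C).2
    refine ⟨g₀, hg₀G, ?_⟩
    have e1 : (k : ℤ) * ((i + r) / (k : ℤ)) + (i + r) % (k : ℤ) = i + r := Int.mul_ediv_add_emod _ _
    have hv' : (g₀ - r) / (k : ℤ) * (k : ℤ) = g₀ - r := Int.ediv_mul_cancel (hCdvd g₀ hg₀C)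
    have key : i + g₀ = j' + (k : ℤ) * ((i + r) / (k : ℤ) + (g₀ - r) / (k : ℤ)) := by
      linear_combination - e1 - hv'
    simp only [if_pos hg₀r]
    rw [hg₀v]
    calc x (i + g₀) = x (j' + (k : ℤ) * ((i + r) / (k : ℤ) + v)) := by rw [key, hg₀v]
      _ ≠ w v := hne

/-- The fixed residue of the self-similarity iterated to level `m`. -/
def Jfun (k : ℕ) (j : ℤ) : ℕ → ℤ
  | 0 => 0
  | m + 1 => j + k * Jfun k j m

theorem Jfun_nonneg (k : ℕ) (j : ℤ) (hj : 0 ≤ j) : ∀ m, 0 ≤ Jfun k j m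
  | 0 => le_refl 0
  | m + 1 => by
      have := Jfun_nonneg k j hj m
      have hk0 : (0 : ℤ) ≤ (k : ℤ) := by positivity
      simp only [Jfun]
      nlinarith

theorem Jfun_lt (k : ℕ) (hk : 2 ≤ k) (j : ℤ) (hj0 : 0 ≤ j) (hjk : j < (k : ℤ)) :
    ∀ m, Jfun k j m < (k : ℤ) ^ m
  | 0 => by simp [Jfun]
  | m + 1 => by
      have ih := Jfun_lt k hk j hj0 hjk m
      have h0 := Jfun_nonneg k j hj0 m
      have hk2 : (2 : ℤ) ≤ (k : ℤ) := by exact_mod_cast hk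
      have h1 : Jfun k j m + 1 ≤ (k : ℤ) ^ m := ih
      simp only [Jfun, pow_succ]
      nlinarith

theorem Jfun_selfsim {A : Type*} (x : ℤ → A) (k : ℕ) (j : ℤ)
    (hss : ∀ n : ℤ, x n = x (j + (k : ℤ) * n)) :
    ∀ m, ∀ n : ℤ, x (Jfun k j m + (k : ℤ) ^ m * n) = x n
  | 0 => by intro n; simp [Jfun]
  | m + 1 => by
      intro n
      have ih := Jfun_selfsim x k j hss m
      have e : Jfun k j (m + 1) + (k : ℤ) ^ (m + 1) * n
          = j + (k : ℤ) * (Jfun k j m + (k : ℤ) ^ m * n) := by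
        simp only [Jfun, pow_succ]; ring
      rw [e, ← hss (Jfun k j m + (k : ℤ) ^ m * n), ih n]
end Stmt11Aux


open Stmt11Aux

set_option maxHeartbeats 2000000

/-- Let `k ≥ 2` and let `x ∈ A^ℤ` be a sequence over a finite alphabet
with finite `k`-kernel such that for each `m ≥ 1` at most one residue `0 ≤ j < k^m`
satisfies `x_n = x_{j + k^m n}` for all `n ∈ ℤ`.  If every element `z ≠ x` of the
`k`-kernel of `x` is null, then `x` is null. -/
theorem stmt11 {A : Type*} [Fintype A] (k : ℕ) (hk : 2 ≤ k) (x : ℤ → A)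
    (hker : (kerSet k x).Finite)
    (huniq : ∀ m : ℕ, 1 ≤ m → ∀ j j' : ℕ, j < k ^ m → j' < k ^ m →
      (∀ n : ℤ, x n = x ((j : ℤ) + (k : ℤ) ^ m * n)) →
      (∀ n : ℤ, x n = x ((j' : ℤ) + (k : ℤ) ^ m * n)) → j = j')
    (hnull : ∀ z ∈ kerSet k x, z ≠ x → IsNullSeq z) :
    IsNullSeq x := by
  classical
  set Nf : Finset (ℤ → A) := hker.toFinset.filter (fun z => z ≠ x) with hNfdef
  have hK2N : ∀ z, z ∈ kerSet k x → z ≠ x → z ∈ Nf := by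
    intro z hz hne
    exact Finset.mem_filter.2 ⟨(Set.Finite.mem_toFinset hker).2 hz, hne⟩
  have hNker : ∀ z ∈ Nf, z ∈ kerSet k x ∧ z ≠ x := by
    intro z hz
    exact ⟨(Set.Finite.mem_toFinset hker).1 (Finset.mem_filter.1 hz).1,
      (Finset.mem_filter.1 hz).2⟩
  -- a common nullness degree T ≥ 2
  have hex : ∀ z ∈ Nf, ∃ t, IsTNull z t := fun z hz =>
    hnull z (hNker z hz).1 (hNker z hz).2
  choose f hf using hex
  set T : ℕ := Nf.sup (fun z => if h : z ∈ Nf then f z h else 0) + 2 with hTdef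
  have hT2 : 2 ≤ T := by omega
  have hT : ∀ z ∈ Nf, IsTNull z T := by
    intro z hz
    refine isTNull_mono (hf z hz) ?_
    have h1 : (fun z' => if h : z' ∈ Nf then f z' h else 0) z
        ≤ Nf.sup (fun z' => if h : z' ∈ Nf then f z' h else 0) :=
      Finset.le_sup (f := fun z' => if h : z' ∈ Nf then f z' h else 0) hz
    simp only [dif_pos hz] at h1
    omega
  -- basic facts about k
  have hkZpos : (0 : ℤ) < (k : ℤ) := by exact_mod_cast (by omega : 0 < k)
  have hkZ1 : (1 : ℤ) < (k : ℤ) := by exact_mod_cast (by omega : 1 < k)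
  -- Nf is nonempty
  have hNne : 1 ≤ Nf.card := by
    have mem0 : (fun t => x ((0 : ℤ) + (k : ℤ) * t)) ∈ kerSet k x := by
      have := memK x (k := k) 1 0 (le_refl 0) (by rwa [pow_one])
      simpa [pow_one] using this
    have mem1 : (fun t => x ((1 : ℤ) + (k : ℤ) * t)) ∈ kerSet k x := by
      have := memK x (k := k) 1 1 (by norm_num) (by rwa [pow_one])
      simpa [pow_one] using this
    by_cases h0 : (fun t => x ((0 : ℤ) + (k : ℤ) * t)) = x
    · by_cases h1 : (fun t => x ((1 : ℤ) + (k : ℤ) * t)) = x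
      · exfalso
        have hp0 : ∀ n : ℤ, x n = x (((0 : ℕ) : ℤ) + (k : ℤ) ^ 1 * n) := by
          intro n
          have := (congrFun h0 n).symm
          simpa [pow_one] using this
        have hp1 : ∀ n : ℤ, x n = x (((1 : ℕ) : ℤ) + (k : ℤ) ^ 1 * n) := by
          intro n
          have := (congrFun h1 n).symm
          simpa [pow_one] using this
        have := huniq 1 (le_refl 1) 0 1 (by rw [pow_one]; omega) (by rw [pow_one]; omega)
          hp0 hp1
        omega
      · have := hK2N _ mem1 h1
        exact Finset.card_pos.2 ⟨_, this⟩
    · have := hK2N _ mem0 h0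
      exact Finset.card_pos.2 ⟨_, this⟩
  set θ : ℕ := Nf.card * T with hθdef
  set θ' : ℕ := Nf.card * (T - 1) + 1 with hθ'def
  have hθ2 : 2 ≤ θ := by
    rw [hθdef]
    calc 2 = 1 * 2 := by omega
      _ ≤ Nf.card * T := Nat.mul_le_mul hNne hT2
  set t : ℕ := k * θ + k * θ' + 2 * θ + θ' with htdef
  refine ⟨t, ?_⟩
  intro a b hab G hGcard
  intro Hfull
  -- it suffices to produce a blocked pattern
  suffices hbl : ∃ u : ℤ → A, (∀ g ∈ G, u g = a ∨ u g = b) ∧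
      ∀ i : ℤ, ∃ g ∈ G, x (i + g) ≠ u g by
    obtain ⟨u, huval, hublock⟩ := hbl
    obtain ⟨i, hi⟩ := Hfull u huval
    obtain ⟨g, hg, hne⟩ := hublock i
    exact hne (hi g hg)
  by_cases hsim : ∃ j : ℤ, 0 ≤ j ∧ j < (k : ℤ) ∧ ∀ n : ℤ, x n = x (j + (k : ℤ) * n)
  · -- self-similar case
    obtain ⟨js, hjs0, hjsk, hss1⟩ := hsim
    set J : ℕ → ℤ := Jfun k js with hJdef
    have hJ0 : ∀ m, 0 ≤ J m := Jfun_nonneg k js hjs0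
    have hJlt : ∀ m, J m < (k : ℤ) ^ m := Jfun_lt k hk js hjs0 hjsk
    have hssM : ∀ m, ∀ n : ℤ, x (J m + (k : ℤ) ^ m * n) = x n := Jfun_selfsim x k js hss1
    have hJ1 : J 1 = js := by simp [hJdef, Jfun]
    -- uniqueness at each level
    have UNIQ : ∀ M : ℕ, 1 ≤ M → ∀ j' : ℤ, 0 ≤ j' → j' < (k : ℤ) ^ M →
        (∀ n : ℤ, x n = x (j' + (k : ℤ) ^ M * n)) → j' = J M := by
      intro M hM j' h0 h1 hp
      have hcast : ((j'.toNat : ℤ)) = j' := Int.toNat_of_nonneg h0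
      have hcastJ : (((J M).toNat : ℤ)) = J M := Int.toNat_of_nonneg (hJ0 M)
      have hlt1 : j'.toNat < k ^ M := by
        have : (j'.toNat : ℤ) < ((k ^ M : ℕ) : ℤ) := by push_cast; rw [hcast]; exact h1
        exact_mod_cast this
      have hlt2 : (J M).toNat < k ^ M := by
        have : ((J M).toNat : ℤ) < ((k ^ M : ℕ) : ℤ) := by
          push_cast; rw [hcastJ]; exact hJlt M
        exact_mod_cast this
      have h := huniq M hM j'.toNat (J M).toNat hlt1 hlt2
        (by intro n; rw [hcast]; exact hp n)
        (by intro n; rw [hcastJ]; exact (hssM M n).symm)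
      omega
    have UNIQ1 : ∀ j' : ℤ, 0 ≤ j' → j' < (k : ℤ) →
        (∀ n : ℤ, x n = x (j' + (k : ℤ) * n)) → j' = js := by
      intro j' h0 h1 hp
      rw [← hJ1]
      exact UNIQ 1 (le_refl 1) j' h0 (by rwa [pow_one]) (by intro n; rw [pow_one]; exact hp n)
    -- maximal scale with a θ-large class
    set B : ℕ := G.sup (fun g => g.natAbs) with hBdef
    set Q : ℕ → Prop :=
      fun m => ∃ c : ℤ, θ ≤ (G.filter fun g => (k : ℤ) ^ m ∣ (g - c)).card with hQdef
    have hQ0 : Q 0 := by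
      refine ⟨0, ?_⟩
      have : (G.filter fun g => (k : ℤ) ^ 0 ∣ (g - 0)).card = G.card := by
        rw [Finset.filter_true_of_mem]
        intro g _
        simp
      rw [this, hGcard, htdef]
      linarith [Nat.zero_le (k * θ), Nat.zero_le (k * θ'), Nat.zero_le θ']
    have hQbound : ∀ m, Q m → m ≤ 2 * B := by
      intro m hQm
      obtain ⟨c, hc⟩ := hQm
      have h2 : 1 < (G.filter fun g => (k : ℤ) ^ m ∣ (g - c)).card := by omega
      obtain ⟨g, hg, g', hg', hne⟩ := Finset.one_lt_card.1 h2
      have hgG : g ∈ G := (Finset.mem_filter.1 hg).1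
      have hg'G : g' ∈ G := (Finset.mem_filter.1 hg').1
      have hdvd : (k : ℤ) ^ m ∣ (g - g') := by
        have d1 := (Finset.mem_filter.1 hg).2
        have d2 := (Finset.mem_filter.1 hg').2
        have : g - g' = (g - c) - (g' - c) := by ring
        rw [this]
        exact dvd_sub d1 d2
      have hne0 : g - g' ≠ 0 := sub_ne_zero.2 hne
      have hnatdvd : k ^ m ∣ (g - g').natAbs := by
        have := Int.natAbs_dvd_natAbs.2 hdvd
        simpa [Int.natAbs_pow] using this
      have hle : k ^ m ≤ (g - g').natAbs :=
        Nat.le_of_dvd (Int.natAbs_pos.2 hne0) hnatdvd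
      have hB1 : g.natAbs ≤ B := Finset.le_sup hgG
      have hB2 : g'.natAbs ≤ B := Finset.le_sup hg'G
      have habs : (g - g').natAbs ≤ g.natAbs + g'.natAbs := Int.natAbs_sub_le g g'
      have hm2 : m < 2 ^ m := Nat.lt_two_pow_self
      have hpow : 2 ^ m ≤ k ^ m := Nat.pow_le_pow_left hk m
      omega
    set M : ℕ := Nat.findGreatest Q (2 * B) with hMdef
    have hQM : Q M := Nat.findGreatest_spec (Nat.zero_le _) hQ0
    have hQM1 : ¬ Q (M + 1) := by
      intro hQ
      have hb := hQbound _ hQ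
      exact absurd hQ (Nat.findGreatest_is_greatest (by omega) hb)
    obtain ⟨c₀, hc₀⟩ := hQM
    by_cases hM0 : M = 0
    · -- G is shattered at scale 1 : apply the shattered lemma directly
      have hQ1 : ¬ Q 1 := by rwa [hM0] at hQM1
      have hshat : ∀ r : ℤ, (G.filter fun g => g % (k : ℤ) = r).card < θ := by
        intro r
        simp only [hQdef] at hQ1
        push_neg at hQ1
        refine lt_of_le_of_lt (Finset.card_le_card ?_) (hQ1 r)
        intro g hg
        simp only [Finset.mem_filter] at hg ⊢
        refine ⟨hg.1, ?_⟩
        rw [pow_one]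
        have e1 : (k : ℤ) * (g / (k : ℤ)) + g % (k : ℤ) = g := Int.mul_ediv_add_emod _ _
        exact ⟨g / (k : ℤ), by linarith [hg.2]⟩
      obtain ⟨w, hwval, hwx, _⟩ := shattered x k hk Nf T a b hab hT hK2N js hjs0 hjsk
        UNIQ1 G (by
          rw [hGcard, htdef, ← hθdef, ← hθ'def]
          linarith [Nat.zero_le (k * θ), Nat.zero_le θ']) (by
          intro r
          rw [← hθdef]
          exact hshat r)
      exact ⟨w, hwval, hwx⟩
    · -- M ≥ 1
      have hM1 : 1 ≤ M := by omega
      set C := G.filter (fun g => (k : ℤ) ^ M ∣ (g - c₀)) with hCdef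
      by_cases hcomp : θ' ≤ (G \ C).card
      · refine claimA x k hk Nf T a b hab hT hK2N M (J M) c₀ (UNIQ M hM1) G ?_ ?_
        · rw [← hθdef]; exact hc₀
        · rw [← hθ'def]; exact hcomp
      · push_neg at hcomp
        have hCsub : C ⊆ G := Finset.filter_subset _ _
        have hCcard : k * θ' + 2 * θ ≤ C.card := by
          have := Finset.card_sdiff_add_card_eq_card hCsub
          have hGt : G.card = t := hGcard
          omega
        have hCdvd : ∀ g ∈ C, (k : ℤ) ^ M ∣ (g - c₀) := fun g hg =>
          (Finset.mem_filter.1 hg).2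
        have hkMpos : (0 : ℤ) < (k : ℤ) ^ M := by positivity
        have hdminj : Set.InjOn (fun g => (g - c₀) / (k : ℤ) ^ M) C := by
          intro g hg g' hg' he
          have e1 : (g - c₀) / (k : ℤ) ^ M * (k : ℤ) ^ M = g - c₀ :=
            Int.ediv_mul_cancel (hCdvd g hg)
          have e2 : (g' - c₀) / (k : ℤ) ^ M * (k : ℤ) ^ M = g' - c₀ :=
            Int.ediv_mul_cancel (hCdvd g' hg')
          simp only at he
          nlinarith [e1, e2, he]
        set V := C.image (fun g => (g - c₀) / (k : ℤ) ^ M) with hVdef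
        have hVcard : k * θ' + 2 * θ ≤ V.card := by
          rw [hVdef, Finset.card_image_of_injOn hdminj]; exact hCcard
        have hshatV : ∀ r : ℤ, (V.filter fun g => g % (k : ℤ) = r).card < θ := by
          intro r
          have hQ1 : ¬ Q (M + 1) := hQM1
          simp only [hQdef] at hQ1
          push_neg at hQ1
          refine lt_of_le_of_lt (Finset.card_le_card_of_injOn
            (fun v => c₀ + (k : ℤ) ^ M * v) ?_ ?_) (hQ1 (c₀ + (k : ℤ) ^ M * r))
          · intro v hv
            have hv : v ∈ V.filter (fun g => g % (k : ℤ) = r) := hv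
            show c₀ + (k : ℤ) ^ M * v ∈ G.filter
              (fun g => (k : ℤ) ^ (M + 1) ∣ (g - (c₀ + (k : ℤ) ^ M * r)))
            simp only [Finset.mem_filter] at hv ⊢
            obtain ⟨hvV, hvr⟩ := hv
            obtain ⟨g₀, hg₀C, hg₀v⟩ := Finset.mem_image.1 hvV
            have hg₀d : (k : ℤ) ^ M ∣ (g₀ - c₀) := hCdvd g₀ hg₀C
            have e1 : (g₀ - c₀) / (k : ℤ) ^ M * (k : ℤ) ^ M = g₀ - c₀ :=
              Int.ediv_mul_cancel hg₀d
            have hfv : c₀ + (k : ℤ) ^ M * v = g₀ := by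
              rw [← hg₀v]; linarith
            constructor
            · rw [hfv]; exact hCsub hg₀C
            · have hkdvd : (k : ℤ) ∣ (v - r) := by
                have e2 : (k : ℤ) * (v / (k : ℤ)) + v % (k : ℤ) = v := Int.mul_ediv_add_emod _ _
                exact ⟨v / (k : ℤ), by linarith [hvr]⟩
              obtain ⟨s, hs⟩ := hkdvd
              refine ⟨s, ?_⟩
              rw [pow_succ]
              have : c₀ + (k : ℤ) ^ M * v - (c₀ + (k : ℤ) ^ M * r) = (k : ℤ) ^ M * (v - r) := by
                ring
              rw [this, hs]
              ring
          · intro v _ v' _ he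
            simp only at he
            have : (k : ℤ) ^ M * v = (k : ℤ) ^ M * v' := by linarith
            exact mul_left_cancel₀ (ne_of_gt hkMpos) this
        obtain ⟨w, hwval, hwx, hwz⟩ := shattered x k hk Nf T a b hab hT hK2N js hjs0 hjsk
          UNIQ1 V (by rw [← hθdef, ← hθ'def]; exact hVcard)
          (by intro r; rw [← hθdef]; exact hshatV r)
        exact claimB x k hk Nf a b hK2N M (J M) c₀ (hssM M) (UNIQ M hM1) G w
          (by rw [← hCdef, ← hVdef]; exact hwval)
          (by rw [← hCdef, ← hVdef]; exact hwx)
          (by rw [← hCdef, ← hVdef]; exact hwz)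
  · -- non-self-similar case
    push_neg at hsim
    have hns : ∀ j : ℤ, 0 ≤ j → j < (k : ℤ) → (fun t => x (j + (k : ℤ) * t)) ≠ x := by
      intro j h0 h1 heq
      obtain ⟨n, hn⟩ := hsim j h0 h1
      exact hn (congrFun heq n).symm
    have hθ1 : 1 ≤ Nf.card * T :=
      le_trans hNne (Nat.le_mul_of_pos_right Nf.card (by omega : 0 < T))
    refine caseII x k hk Nf T a b hab hT hK2N hns hθ1 G ?_
    rw [hGcard, htdef, ← hθdef]
    linarith [Nat.zero_le (k * θ'), Nat.zero_le θ', Nat.zero_le θ]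
end

section
/- Let k ≥ 2 and let x ∈ A^ℤ be a sequence with finite k-kernel such that for some m ≥ 1, no residue 0 ≤ j < k^m satisfies x_n = x_{j+k^m n} for all n ∈ ℤ (i.e., x does not occur among its own k^m-arithmetic-progression subsequences). If every element of Ker_k(x) \ {x} is null, then x is null; more precisely, if every z ∈ Ker_k(x)\{x} is s'-null, then x is (k^m+1)·s'·|Ker_k(x)|-null. -/
lemma isTNull_mono {A : Type*} {y : ℤ → A} {t T : ℕ} (h : IsTNull y t) (hle : t ≤ T) :
    IsTNull y T := by
  classical
  intro a b hab G hG
  obtain ⟨G', hsub, hcard⟩ := Finset.exists_subset_card_eq (hG ▸ hle)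
  intro H
  refine h a b hab G' hcard fun u hu => ?_
  obtain ⟨i, hi⟩ := H (fun g => if g ∈ G' then u g else a) (by
    intro g _
    by_cases hg : g ∈ G'
    · simpa [hg] using hu g hg
    · simp [hg])
  exact ⟨i, fun g hg => by simpa [hg] using hi g (hsub hg)⟩

/-- Let `k ≥ 2` and let `x ∈ A^ℤ` have finite `k`-kernel, and suppose
that for some `m ≥ 1` no residue `0 ≤ j < k^m` satisfies `x_n = x_{j + k^m n}` for all
`n ∈ ℤ`.  If every element of `Ker_k(x) \ {x}` is null then `x` is null; more precisely,
if every `z ∈ Ker_k(x) \ {x}` is `s'`-null, then `x` is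
`(k^m + 1)·s'·|Ker_k(x)|`-null. -/
theorem stmt12 {A : Type*} [Fintype A] (k : ℕ) (hk : 2 ≤ k) (x : ℤ → A)
    (hker : (kerSet k x).Finite)
    (m : ℕ) (hm : 1 ≤ m)
    (hno : ¬ ∃ j : ℕ, j < k ^ m ∧ ∀ n : ℤ, x n = x ((j : ℤ) + (k : ℤ) ^ m * n)) :
    ((∀ z ∈ kerSet k x, z ≠ x → IsNullSeq z) → IsNullSeq x) ∧
    (∀ s' : ℕ, (∀ z ∈ kerSet k x, z ≠ x → IsTNull z s') →
      IsTNull x ((k ^ m + 1) * s' * hker.toFinset.card)) := by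
  classical
  by_cases hAB : ∃ a b : A, a ≠ b
  case neg =>
    constructor
    · intro _
      exact ⟨0, fun a b hab => absurd ⟨a, b, hab⟩ hAB⟩
    · intro s' _ a b hab
      exact absurd ⟨a, b, hab⟩ hAB
  obtain ⟨a₀, b₀, hab₀⟩ := hAB
  set K : Finset (ℤ → A) := hker.toFinset with hK
  set N : ℕ := K.card with hNdef
  set pm : ℤ := (k : ℤ) ^ m with hpmdef
  have hk0 : (0 : ℤ) < (k : ℤ) := by exact_mod_cast (by omega : 0 < k)
  have hpm : (0 : ℤ) < pm := by rw [hpmdef]; positivity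
  have hpmnat : pm = ((k ^ m : ℕ) : ℤ) := by rw [hpmdef]; push_cast; ring
  have hmemK : ∀ z, z ∈ K ↔ z ∈ kerSet k x := fun z => hker.mem_toFinset
  have hxker : x ∈ kerSet k x := ⟨0, 0, by simp, by funext n; simp⟩
  have hxK : x ∈ K := (hmemK x).2 hxker
  have hN1 : 1 ≤ N := Finset.card_pos.2 ⟨x, hxK⟩
  have hzc : ∀ c : ℤ, 0 ≤ c → c < pm →
      (fun n => x (c + pm * n)) ∈ kerSet k x ∧ (fun n => x (c + pm * n)) ≠ x := by
    intro c hc0 hc1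
    have hcn : (c.toNat : ℤ) = c := Int.toNat_of_nonneg hc0
    have hclt : c.toNat < k ^ m := by
      rw [hpmnat] at hc1
      exact_mod_cast hcn ▸ hc1
    constructor
    · refine ⟨m, c.toNat, hclt, ?_⟩
      funext n
      rw [hcn]
    · intro he
      refine hno ⟨c.toNat, hclt, fun n => ?_⟩
      have h1 := congrFun he n
      rw [hcn]
      exact h1.symm
  have key : ∀ s' : ℕ, (∀ z ∈ kerSet k x, z ≠ x → IsTNull z s') →
      IsTNull x ((k ^ m + 1) * s' * N) := by
    intro s' hs'
    have hs1 : 1 ≤ s' := by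
      by_contra hcon
      have hs0 : s' = 0 := by omega
      obtain ⟨hker0, hne0⟩ := hzc 0 le_rfl hpm
      have h0 := hs' _ hker0 hne0
      rw [hs0] at h0
      exact h0 a₀ b₀ hab₀ ∅ rfl
        (fun u _ => ⟨0, fun g hg => absurd hg (Finset.notMem_empty g)⟩)
    intro a b hab G hG Hreal
    -- pigeonhole on residues mod pm
    have hmaps : ∀ g ∈ G, g % pm ∈ Finset.Ico (0 : ℤ) pm := fun g _ =>
      Finset.mem_Ico.2 ⟨Int.emod_nonneg g (ne_of_gt hpm), Int.emod_lt_of_pos g hpm⟩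
    have hIco : (Finset.Ico (0 : ℤ) pm).card = k ^ m := by
      rw [Int.card_Ico, sub_zero, hpmnat, Int.toNat_natCast]
    have hsN : 1 ≤ s' * N := Nat.one_le_iff_ne_zero.2 (by positivity)
    have hlt : (Finset.Ico (0 : ℤ) pm).card * (s' * N) < G.card := by
      rw [hIco, hG]
      nlinarith
    obtain ⟨r, -, hrcard⟩ :=
      Finset.exists_lt_card_fiber_of_mul_lt_card_of_maps_to hmaps hlt
    obtain ⟨G', hG'sub, hG'card⟩ :=
      Finset.exists_subset_card_eq (le_of_lt hrcard)
    have hG'mem : ∀ g ∈ G', g % pm = r ∧ g ∈ G := fun g hg => by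
      have h1 := hG'sub hg
      rw [Finset.mem_filter] at h1
      exact ⟨h1.2, h1.1⟩
    set ψ : ℤ → ℤ := fun g => g / pm with hψdef
    have hdecomp : ∀ g ∈ G', g = r + pm * ψ g := by
      intro g hg
      have h1 := Int.emod_add_mul_ediv g pm
      rw [(hG'mem g hg).1] at h1
      exact h1.symm
    have hψinj : ∀ g ∈ G', ∀ g2 ∈ G', ψ g = ψ g2 → g = g2 := by
      intro g hg g2 hg2 h
      rw [hdecomp g hg, hdecomp g2 hg2, h]
    have hcards : Fintype.card {g // g ∈ G'} = Fintype.card ({z // z ∈ K} × Fin s') := by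
      simp [Fintype.card_coe, hG'card, mul_comm, hNdef]
    set e := Fintype.equivOfCardEq hcards with hedef
    set B : {z // z ∈ K} → Finset ℤ := fun z =>
      Finset.image (fun j : Fin s' => ψ (e.symm (z, j)).1) Finset.univ with hBdef
    have hBcard : ∀ z, (B z).card = s' := by
      intro z
      rw [hBdef]
      rw [Finset.card_image_of_injOn, Finset.card_univ, Fintype.card_fin]
      intro j1 _ j2 _ hj
      have h1 : e.symm (z, j1) = e.symm (z, j2) :=
        Subtype.ext (hψinj _ (e.symm (z, j1)).2 _ (e.symm (z, j2)).2 hj)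
      have h2 : ((z, j1) : {z // z ∈ K} × Fin s') = (z, j2) := e.symm.injective h1
      exact (Prod.mk.injEq .. ▸ h2).2
    have hmemB : ∀ (g : ℤ) (hg : g ∈ G'), ψ g ∈ B (e ⟨g, hg⟩).1 := by
      intro g hg
      rw [hBdef]
      refine Finset.mem_image.2 ⟨(e ⟨g, hg⟩).2, Finset.mem_univ _, ?_⟩
      rw [show ((e ⟨g, hg⟩).1, (e ⟨g, hg⟩).2) = e ⟨g, hg⟩ from rfl,
        Equiv.symm_apply_apply]
    have hbad : ∀ z : {z // z ∈ K}, ∃ v : ℤ → A,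
        (∀ h ∈ B z, v h = a ∨ v h = b) ∧
        ((z : ℤ → A) ≠ x → ∀ i : ℤ, ∃ h ∈ B z, (z : ℤ → A) (i + h) ≠ v h) := by
      intro z
      by_cases hz : (z : ℤ → A) ≠ x
      · have h1 := hs' z.1 ((hmemK _).1 z.2) hz a b hab (B z) (hBcard z)
        push_neg at h1
        obtain ⟨v, hv, hv2⟩ := h1
        exact ⟨v, hv, fun _ => hv2⟩
      · exact ⟨fun _ => a, fun _ _ => Or.inl rfl, fun hz' => absurd hz' hz⟩
    choose v hv1 hv2 using hbad
    set u : ℤ → A := fun g => if hg : g ∈ G' then v (e ⟨g, hg⟩).1 (ψ g) else a with hu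
    have hval : ∀ g ∈ G, u g = a ∨ u g = b := by
      intro g _
      by_cases hg : g ∈ G'
      · rw [hu]
        simp only [dif_pos hg]
        exact hv1 _ _ (hmemB g hg)
      · rw [hu]
        simp [dif_neg hg]
    obtain ⟨i, hi⟩ := Hreal u hval
    set c : ℤ := (i + r) % pm with hc
    set q : ℤ := (i + r) / pm with hq
    have hc0 : 0 ≤ c := Int.emod_nonneg _ (ne_of_gt hpm)
    have hc1 : c < pm := Int.emod_lt_of_pos _ hpm
    have hiq : i + r = pm * q + c := by
      rw [hc, hq]
      exact (Int.mul_ediv_add_emod (i + r) pm).symm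
    obtain ⟨hzcker, hzcne⟩ := hzc c hc0 hc1
    set z0 : ℤ → A := fun n => x (c + pm * n) with hz0
    have hz0K : z0 ∈ K := (hmemK z0).2 hzcker
    obtain ⟨h, hhB, hne⟩ := hv2 ⟨z0, hz0K⟩ hzcne q
    apply hne
    rw [hBdef] at hhB
    obtain ⟨j, -, hψg⟩ := Finset.mem_image.1 hhB
    set g' : {g // g ∈ G'} := e.symm (⟨z0, hz0K⟩, j) with hg'def
    have hge : (e g').1 = ⟨z0, hz0K⟩ := by
      rw [hg'def, Equiv.apply_symm_apply]
    have hgG' : (g' : ℤ) ∈ G' := g'.2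
    have hgG : (g' : ℤ) ∈ G := (hG'mem _ hgG').2
    have hdec := hdecomp _ hgG'
    have step1 : i + (g' : ℤ) = c + pm * (q + ψ (g' : ℤ)) := by
      linear_combination hiq + hdec
    have step2 : z0 (q + h) = u (g' : ℤ) := by
      rw [← hψg, hz0]
      show x (c + pm * (q + ψ (g' : ℤ))) = u (g' : ℤ)
      rw [← step1]
      exact hi _ hgG
    have step3 : u (g' : ℤ) = v ⟨z0, hz0K⟩ h := by
      rw [hu]
      simp only [dif_pos hgG']
      have heta : (⟨(g' : ℤ), hgG'⟩ : {g // g ∈ G'}) = g' := rfl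
      rw [heta, hge, hψg]
    exact step2.trans step3
  constructor
  · intro hnull
    have hchoice : ∀ z : {z // z ∈ K}, ∃ t, ((z : ℤ → A) ≠ x → IsTNull (z : ℤ → A) t) := by
      intro z
      by_cases hz : (z : ℤ → A) ≠ x
      · obtain ⟨t, ht⟩ := hnull z.1 ((hmemK _).1 z.2) hz
        exact ⟨t, fun _ => ht⟩
      · exact ⟨0, fun h => absurd h hz⟩
    choose ts hts using hchoice
    refine ⟨(k ^ m + 1) * (Finset.univ.sup ts) * N, key _ ?_⟩
    intro z hzker hzx
    exact isTNull_mono (hts ⟨z, (hmemK z).2 hzker⟩ hzx)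
      (Finset.le_sup (Finset.mem_univ _))
  · exact key
end
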